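/- arXiv:1006.1095 — 5 statements merged into one kernel-verified Lean document; each statement's English description precedes it below -/
import Mathlib

section
/- Let (X, δ) and (Y, δ_Y) be diversities. If there is an embedding π of (X, δ) into (Y, δ_Y) and (Y, δ_Y) is injective, then there is an embedding φ of (T_X, δ_T) into (Y, δ_Y) with π = φ ∘ κ. -/
open scoped Classical

noncomputable section

/-- A diversity: axioms (D1) and (D2). -/
def IsDiversity {X : Type*} (δ : Finset X → ℝ) : Prop :=
  (∀ A, 0 ≤ δ A) ∧ (∀ A, δ A = 0 ↔ A.card ≤ 1) ∧
    ∀ A B C : Finset X, B ≠ ∅ → δ (A ∪ C) ≤ δ (A ∪ B) + δ (B ∪ C)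

/-- Membership in `P_X`: `f ∅ = 0` and `Σ_{A ∈ 𝓐} f A ≥ δ (⋃ 𝓐)` for every finite
collection `𝓐` of finite subsets of `X`. -/
def MemP {X : Type*} (δ : Finset X → ℝ) (f : Finset X → ℝ) : Prop :=
  f ∅ = 0 ∧ ∀ 𝓐 : Finset (Finset X), δ (𝓐.sup id) ≤ ∑ A ∈ 𝓐, f A

/-- Membership in the tight span `T_X`: the pointwise-minimal elements of `P_X`. -/
def MemT {X : Type*} (δ : Finset X → ℝ) (f : Finset X → ℝ) : Prop :=
  MemP δ f ∧ ∀ g : Finset X → ℝ, MemP δ g → (∀ A, g A ≤ f A) → g = f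

/-- The function `δ_T` on finite subsets of the tight span: `δ_T ∅ = 0` and for nonempty `F`,
`δ_T F = sup { δ(⋃𝓐) - Σ_{A ∈ 𝓐} inf_{f ∈ F} f A : 𝓐 a finite collection of finite subsets }`. -/
noncomputable def deltaT {X : Type*} (δ : Finset X → ℝ) (F : Finset (Finset X → ℝ)) : ℝ :=
  if F = ∅ then 0
  else sSup {r : ℝ | ∃ 𝓐 : Finset (Finset X),
    r = δ (𝓐.sup id) - ∑ A ∈ 𝓐, sInf ((fun f => f A) '' (F : Set (Finset X → ℝ)))}

/-- The Kuratowski-type map `κ` sends `x` to the function `h_x : A ↦ δ (A ∪ {x})`. -/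
def hfun {X : Type*} (δ : Finset X → ℝ) (x : X) : Finset X → ℝ :=
  fun A => δ (A ∪ {x})

universe u

/-- A non-expansive map between diversities. -/
def IsNonexpansive {Y Z : Type*} (δY : Finset Y → ℝ) (δZ : Finset Z → ℝ) (φ : Y → Z) : Prop :=
  ∀ A : Finset Y, δZ (A.image φ) ≤ δY A

/-- An embedding of diversities: injective and preserving the diversity of finite sets. -/
def IsDivEmbedding {Y Z : Type*} (δY : Finset Y → ℝ) (δZ : Finset Z → ℝ) (φ : Y → Z) : Prop :=
  Function.Injective φ ∧ ∀ A : Finset Y, δZ (A.image φ) = δY A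

/-- An injective diversity: every non-expansive map into it extends along any embedding. -/
def InjectiveDiversity {X : Type u} (δ : Finset X → ℝ) : Prop :=
  ∀ (Y₁ Y₂ : Type u) (δ₁ : Finset Y₁ → ℝ) (δ₂ : Finset Y₂ → ℝ),
    IsDiversity δ₁ → IsDiversity δ₂ →
    ∀ (π : Y₁ → Y₂) (φ : Y₁ → X), IsDivEmbedding δ₁ δ₂ π → IsNonexpansive δ₁ δ φ →
      ∃ ψ : Y₂ → X, IsNonexpansive δ₂ δ ψ ∧ φ = ψ ∘ π

section Aux

variable {X : Type*} {δ : Finset X → ℝ}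

lemma div_empty (hδ : IsDiversity δ) : δ ∅ = 0 := (hδ.2.1 ∅).mpr (by simp)

lemma div_singleton (hδ : IsDiversity δ) (x : X) : δ {x} = 0 := (hδ.2.1 _).mpr (by simp)

lemma div_mono_insert (hδ : IsDiversity δ) (A : Finset X) (b : X) :
    δ A ≤ δ (insert b A) := by
  have h := hδ.2.2 A {b} ∅ (by simp)
  simp only [Finset.union_empty] at h
  have : A ∪ {b} = insert b A := by rw [Finset.union_comm, ← Finset.insert_eq]
  rw [this, div_singleton hδ] at h
  linarith

lemma div_union_right (hδ : IsDiversity δ) (A S : Finset X) : δ A ≤ δ (A ∪ S) := by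
  classical
  induction S using Finset.induction_on with
  | empty => simp
  | @insert a s ha ih =>
      calc δ A ≤ δ (A ∪ s) := ih
        _ ≤ δ (insert a (A ∪ s)) := div_mono_insert hδ _ _
        _ = δ (A ∪ insert a s) := by rw [Finset.union_insert]

lemma div_mono (hδ : IsDiversity δ) {A B : Finset X} (h : A ⊆ B) : δ A ≤ δ B := by
  have := div_union_right hδ A B
  rwa [Finset.union_eq_right.mpr h] at this

lemma div_chain (hδ : IsDiversity δ) {ι : Type*} (s : Finset ι) (A : ι → Finset X)
    (b : ι → X) (C : Finset X) (hC : C ≠ ∅) (hb : ∀ i ∈ s, b i ∈ C) :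
    δ (s.sup A ∪ C) ≤ (∑ i ∈ s, δ (A i ∪ {b i})) + δ C := by
  classical
  induction s using Finset.induction_on with
  | empty => simp
  | @insert i s hi ih =>
      rw [Finset.sup_insert, Finset.sum_insert hi]
      have hbi : b i ∈ C := hb i (Finset.mem_insert_self _ _)
      have h2 : ({b i} : Finset X) ∪ (s.sup A ∪ C) = s.sup A ∪ C := by
        apply Finset.union_eq_right.mpr
        intro z hz
        simp only [Finset.mem_singleton] at hz
        exact Finset.mem_union_right _ (hz ▸ hbi)
      have h1 : δ (A i ∪ (s.sup A ∪ C)) ≤ δ (A i ∪ {b i}) + δ ({b i} ∪ (s.sup A ∪ C)) :=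
        hδ.2.2 _ _ _ (by simp)
      rw [h2] at h1
      have h3 : A i ⊔ s.sup A ∪ C = A i ∪ (s.sup A ∪ C) := by
        rw [Finset.sup_eq_union, Finset.union_assoc]
      rw [h3]
      have := ih (fun j hj => hb j (Finset.mem_insert_of_mem hj))
      linarith

lemma MemP.le_self {f : Finset X → ℝ} (hf : MemP δ f) (A : Finset X) : δ A ≤ f A := by
  have := hf.2 {A}
  simpa using this

lemma MemP.nonneg (hδ : IsDiversity δ) {f : Finset X → ℝ} (hf : MemP δ f) (A : Finset X) :
    0 ≤ f A := le_trans (hδ.1 A) (hf.le_self A)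

lemma sum_insert_le_of_nonneg {α : Type*} [DecidableEq α] {f : α → ℝ} (h : ∀ a, 0 ≤ f a)
    (a : α) (s : Finset α) : ∑ x ∈ insert a s, f x ≤ f a + ∑ x ∈ s, f x := by
  by_cases ha : a ∈ s
  · rw [Finset.insert_eq_self.mpr ha]
    have := h a
    linarith
  · rw [Finset.sum_insert ha]

lemma sum_union_le_of_nonneg {α : Type*} [DecidableEq α] {f : α → ℝ} (h : ∀ a, 0 ≤ f a)
    (s t : Finset α) : ∑ x ∈ s ∪ t, f x ≤ ∑ x ∈ s, f x + ∑ x ∈ t, f x := by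
  have h1 := Finset.sum_union_inter (s₁ := s) (s₂ := t) (f := f)
  have h2 : 0 ≤ ∑ x ∈ s ∩ t, f x := Finset.sum_nonneg fun a _ => h a
  linarith

lemma MemP.union_bound (hδ : IsDiversity δ) {f : Finset X → ℝ} (hf : MemP δ f)
    (A : Finset X) (𝓑 : Finset (Finset X)) :
    δ (A ∪ 𝓑.sup id) ≤ f A + ∑ B ∈ 𝓑, f B := by
  classical
  have h := hf.2 (insert A 𝓑)
  rw [Finset.sup_insert] at h
  have hsum := sum_insert_le_of_nonneg (hf.nonneg hδ) A 𝓑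
  have : (id A ⊔ 𝓑.sup id : Finset X) = A ∪ 𝓑.sup id := by
    rw [Finset.sup_eq_union]; rfl
  rw [this] at h
  linarith

end Aux

section Aux2

variable {X : Type*} {δ : Finset X → ℝ}

/-- abbreviation for the pointwise inf over a finite family -/
noncomputable def mlow {X : Type*} (F : Finset (Finset X → ℝ)) (A : Finset X) : ℝ :=
  sInf ((fun f => f A) '' (F : Set (Finset X → ℝ)))

lemma mlow_set_eq (F : Finset (Finset X → ℝ)) (A : Finset X) :
    ((fun f => f A) '' (F : Set (Finset X → ℝ))) = ↑(F.image (fun f => f A)) := by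
  rw [Finset.coe_image]

lemma mlow_exists (F : Finset (Finset X → ℝ)) (hF : F.Nonempty) (A : Finset X) :
    ∃ f ∈ F, mlow F A = f A := by
  have hne : ((fun f => f A) '' (F : Set (Finset X → ℝ))).Nonempty := by
    obtain ⟨f, hf⟩ := hF
    exact ⟨f A, ⟨f, by simpa using hf, rfl⟩⟩
  have hfin : ((fun f => f A) '' (F : Set (Finset X → ℝ))).Finite :=
    Set.Finite.image _ (F.finite_toSet)
  have := hne.csInf_mem hfin
  obtain ⟨f, hf, hval⟩ := this
  exact ⟨f, by simpa using hf, hval.symm⟩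

lemma mlow_le (F : Finset (Finset X → ℝ)) {f : Finset X → ℝ} (hf : f ∈ F) (A : Finset X) :
    mlow F A ≤ f A := by
  have hfin : ((fun g => g A) '' (F : Set (Finset X → ℝ))).Finite :=
    Set.Finite.image _ (F.finite_toSet)
  exact csInf_le hfin.bddBelow ⟨f, by simpa using hf, rfl⟩

lemma mlow_nonneg (hδ : IsDiversity δ) {F : Finset (Finset X → ℝ)}
    (hmem : ∀ f ∈ F, MemP δ f) (A : Finset X) : 0 ≤ mlow F A := by
  apply Real.sInf_nonneg
  rintro x ⟨f, hf, rfl⟩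
  exact (hmem f (by simpa using hf)).nonneg hδ A

lemma mlow_empty_set (F : Finset (Finset X → ℝ)) (hF : F.Nonempty)
    (hmem : ∀ f ∈ F, MemP δ f) : mlow F ∅ = 0 := by
  obtain ⟨f, hf, hval⟩ := mlow_exists F hF ∅
  rw [hval, (hmem f hf).1]

lemma mlow_anti {F G : Finset (Finset X → ℝ)} (h : F ⊆ G) (hF : F.Nonempty) (A : Finset X) :
    mlow G A ≤ mlow F A := by
  obtain ⟨f, hf, hval⟩ := mlow_exists F hF A
  rw [hval]
  exact mlow_le G (h hf) A

/-- The set appearing in the sup defining `deltaT`. -/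
def dSet {X : Type*} (δ : Finset X → ℝ) (F : Finset (Finset X → ℝ)) : Set ℝ :=
  {r : ℝ | ∃ 𝓐 : Finset (Finset X), r = δ (𝓐.sup id) - ∑ A ∈ 𝓐, mlow F A}

lemma deltaT_eq (F : Finset (Finset X → ℝ)) (hF : F ≠ ∅) :
    deltaT δ F = sSup (dSet δ F) := by
  rw [deltaT, if_neg hF]
  rfl

lemma zero_mem_dSet (hδ : IsDiversity δ) (F : Finset (Finset X → ℝ)) : (0:ℝ) ∈ dSet δ F := by
  exact ⟨∅, by simp [div_empty hδ]⟩

lemma dSet_bddAbove (hδ : IsDiversity δ) (F : Finset (Finset X → ℝ)) (hF : F.Nonempty)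
    (hmem : ∀ f ∈ F, MemP δ f) : BddAbove (dSet δ F) := by
  classical
  by_cases hX : Nonempty X
  · obtain ⟨x₀⟩ := hX
    refine ⟨∑ f ∈ F, f {x₀}, ?_⟩
    rintro r ⟨𝓐, rfl⟩
    -- choose minimizers
    have hch : ∀ A : Finset X, ∃ f ∈ F, mlow F A = f A := fun A => mlow_exists F hF A
    set σ : Finset X → (Finset X → ℝ) := fun A => (hch A).choose with hσ
    have hσF : ∀ A, σ A ∈ F := fun A => (hch A).choose_spec.1
    have hσval : ∀ A, mlow F A = σ A A := fun A => (hch A).choose_spec.2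
    set V : (Finset X → ℝ) → Finset X := fun f => (𝓐.filter (fun A => σ A = f)).sup id with hV
    have hsupeq : F.sup V = 𝓐.sup id := by
      apply le_antisymm
      · apply Finset.sup_le
        intro f _
        exact Finset.sup_le fun A hA => Finset.le_sup (Finset.mem_filter.mp hA).1
      · apply Finset.sup_le
        intro A hA
        calc (id A : Finset X) ≤ V (σ A) :=
              Finset.le_sup (Finset.mem_filter.mpr ⟨hA, rfl⟩)
          _ ≤ F.sup V := Finset.le_sup (hσF A)
    have hchain := div_chain hδ F V (fun _ => x₀) {x₀} (by simp) (fun _ _ => by simp)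
    rw [hsupeq] at hchain
    have hmain : δ (𝓐.sup id) ≤ δ (𝓐.sup id ∪ {x₀}) := div_union_right hδ _ _
    have hterm : ∀ f ∈ F, δ (V f ∪ {x₀}) ≤ f {x₀} + ∑ A ∈ 𝓐.filter (fun A => σ A = f), mlow F A := by
      intro f hf
      have := (hmem f hf).union_bound hδ {x₀} (𝓐.filter (fun A => σ A = f))
      rw [Finset.union_comm] at this
      refine le_trans this ?_
      have : ∑ B ∈ 𝓐.filter (fun A => σ A = f), f B
          = ∑ B ∈ 𝓐.filter (fun A => σ A = f), mlow F B := by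
        apply Finset.sum_congr rfl
        intro B hB
        rw [hσval B, (Finset.mem_filter.mp hB).2]
      linarith [this.le]
    have hsum : ∑ f ∈ F, δ (V f ∪ {x₀})
        ≤ ∑ f ∈ F, (f {x₀} + ∑ A ∈ 𝓐.filter (fun A => σ A = f), mlow F A) :=
      Finset.sum_le_sum hterm
    rw [Finset.sum_add_distrib] at hsum
    rw [Finset.sum_fiberwise_of_maps_to (fun A _ => hσF A) (mlow F)] at hsum
    have hsing : δ ({x₀} : Finset X) = 0 := div_singleton hδ x₀
    linarith
  · refine ⟨0, ?_⟩
    rintro r ⟨𝓐, rfl⟩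
    have hempty : (𝓐.sup id : Finset X) = ∅ := by
      have : IsEmpty X := not_nonempty_iff.mp hX
      exact Finset.eq_empty_of_isEmpty _
    rw [hempty, div_empty hδ]
    have : 0 ≤ ∑ A ∈ 𝓐, mlow F A :=
      Finset.sum_nonneg fun A _ => mlow_nonneg hδ hmem A
    linarith

lemma deltaT_nonneg (hδ : IsDiversity δ) (F : Finset (Finset X → ℝ))
    (hmem : ∀ f ∈ F, MemP δ f) : 0 ≤ deltaT δ F := by
  by_cases hF : F = ∅
  · rw [deltaT, if_pos hF]
  · rw [deltaT_eq F hF]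
    exact le_csSup (dSet_bddAbove hδ F (Finset.nonempty_iff_ne_empty.mpr hF) hmem)
      (zero_mem_dSet hδ F)

lemma deltaT_ge (hδ : IsDiversity δ) (F : Finset (Finset X → ℝ)) (hF : F ≠ ∅)
    (hmem : ∀ f ∈ F, MemP δ f) (𝓐 : Finset (Finset X)) :
    δ (𝓐.sup id) - ∑ A ∈ 𝓐, mlow F A ≤ deltaT δ F := by
  rw [deltaT_eq F hF]
  exact le_csSup (dSet_bddAbove hδ F (Finset.nonempty_iff_ne_empty.mpr hF) hmem) ⟨𝓐, rfl⟩

lemma deltaT_le (F : Finset (Finset X → ℝ)) (hF : F ≠ ∅) {c : ℝ} (hc : 0 ≤ c)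
    (h : ∀ 𝓐 : Finset (Finset X), δ (𝓐.sup id) - ∑ A ∈ 𝓐, mlow F A ≤ c) :
    deltaT δ F ≤ c := by
  rw [deltaT_eq F hF]
  apply Real.sSup_le _ hc
  rintro r ⟨𝓐, rfl⟩
  exact h 𝓐

lemma deltaT_singleton (hδ : IsDiversity δ) {f : Finset X → ℝ} (hf : MemP δ f) :
    deltaT δ {f} = 0 := by
  apply le_antisymm
  · apply deltaT_le _ (by simp) le_rfl
    intro 𝓐
    have hm : ∀ A ∈ 𝓐, mlow {f} A = f A := by
      intro A _
      rw [mlow]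
      norm_num
    rw [Finset.sum_congr rfl hm]
    linarith [hf.2 𝓐]
  · exact deltaT_nonneg hδ _ (by simpa using hf)

end Aux2

section Aux3

variable {X : Type*} {δ : Finset X → ℝ}

lemma MemT.exists_coll (hδ : IsDiversity δ) {f : Finset X → ℝ} (hf : MemT δ f)
    (A : Finset X) {ε : ℝ} (hε : 0 < ε) :
    ∃ 𝓑 : Finset (Finset X), f A - ε ≤ δ (A ∪ 𝓑.sup id) - ∑ B ∈ 𝓑, f B := by
  classical
  by_contra hcon
  push_neg at hcon
  have hcon' : ∀ 𝓑 : Finset (Finset X), δ (A ∪ 𝓑.sup id) ≤ ∑ B ∈ 𝓑, f B + f A - ε := by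
    intro 𝓑
    have := hcon 𝓑
    linarith
  have hAne : A ≠ ∅ := by
    intro hA
    have := hcon' ∅
    simp [hA, div_empty hδ, hf.1.1] at this
    linarith
  set g : Finset X → ℝ := Function.update f A (f A - ε) with hg
  have hgA : g A = f A - ε := Function.update_self A _ f
  have hgne : ∀ B, B ≠ A → g B = f B := fun B hB => Function.update_of_ne hB _ f
  have hgP : MemP δ g := by
    constructor
    · rw [hgne ∅ (Ne.symm hAne), hf.1.1]
    · intro 𝓒
      by_cases hA𝓒 : A ∈ 𝓒
      · have hsum : ∑ B ∈ 𝓒, g B = g A + ∑ B ∈ 𝓒.erase A, g B :=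
          (Finset.add_sum_erase 𝓒 g hA𝓒).symm
        have hsum2 : ∑ B ∈ 𝓒.erase A, g B = ∑ B ∈ 𝓒.erase A, f B := by
          apply Finset.sum_congr rfl
          intro B hB
          exact hgne B (Finset.ne_of_mem_erase hB)
        have hsup : (𝓒.sup id : Finset X) = A ∪ (𝓒.erase A).sup id := by
          conv_lhs => rw [← Finset.insert_erase hA𝓒]
          rw [Finset.sup_insert, Finset.sup_eq_union]
          rfl
        rw [hsum, hsum2, hgA, hsup]
        have := hcon' (𝓒.erase A)
        linarith
      · have hsum : ∑ B ∈ 𝓒, g B = ∑ B ∈ 𝓒, f B :=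
          Finset.sum_congr rfl fun B hB => hgne B (by rintro rfl; exact hA𝓒 hB)
        rw [hsum]
        exact hf.1.2 𝓒
  have hgle : ∀ B, g B ≤ f B := by
    intro B
    by_cases hB : B = A
    · subst hB; rw [hgA]; linarith
    · rw [hgne B hB]
  have := hf.2 g hgP hgle
  have := congrFun this A
  rw [hgA] at this
  linarith

lemma hfun_memP (hδ : IsDiversity δ) (x : X) : MemP δ (hfun δ x) := by
  constructor
  · show δ (∅ ∪ {x}) = 0
    rw [Finset.empty_union]
    exact div_singleton hδ x
  · intro 𝓐
    have hchain := div_chain hδ 𝓐 id (fun _ => x) {x} (by simp) (fun _ _ => by simp)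
    have h1 : δ (𝓐.sup id) ≤ δ (𝓐.sup id ∪ {x}) := div_union_right hδ _ _
    have h2 : δ ({x} : Finset X) = 0 := div_singleton hδ x
    have : ∑ i ∈ 𝓐, δ (id i ∪ {x}) = ∑ A ∈ 𝓐, hfun δ x A := rfl
    rw [this, h2] at hchain
    linarith

lemma hfun_memT (hδ : IsDiversity δ) (x : X) : MemT δ (hfun δ x) := by
  refine ⟨hfun_memP hδ x, ?_⟩
  intro g hg hle
  have hgx : g {x} = 0 := by
    have h1 : g {x} ≤ hfun δ x {x} := hle {x}
    have h2 : hfun δ x {x} = 0 := by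
      show δ ({x} ∪ {x}) = 0
      rw [Finset.union_self]
      exact div_singleton hδ x
    have h3 : 0 ≤ g {x} := hg.nonneg hδ {x}
    linarith [h1, h2.le]
  funext A
  by_cases hA : A = {x}
  · subst hA
    rw [hgx]
    show (0:ℝ) = δ ({x} ∪ {x})
    rw [Finset.union_self, div_singleton hδ]
  · have hmem : ({x} : Finset X) ∉ ({A} : Finset (Finset X)) := by
      simp [Ne.symm hA]
    have h := hg.2 (insert {x} {A})
    rw [Finset.sum_insert hmem, Finset.sum_singleton, hgx, Finset.sup_insert] at h
    have hsup : ((id ({x} : Finset X)) ⊔ (Finset.sup {A} id) : Finset X) = A ∪ {x} := by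
      rw [Finset.sup_singleton, Finset.sup_eq_union]
      show ({x} : Finset X) ∪ A = A ∪ {x}
      rw [Finset.union_comm]
    rw [hsup] at h
    have : g A ≥ hfun δ x A := by
      show g A ≥ δ (A ∪ {x}); linarith
    exact le_antisymm (hle A) this

lemma hfun_injective (hδ : IsDiversity δ) : Function.Injective (hfun δ) := by
  intro x y hxy
  have h1 : hfun δ x {y} = hfun δ y {y} := congrFun hxy {y}
  have h2 : hfun δ y {y} = 0 := by
    show δ ({y} ∪ {y}) = 0
    rw [Finset.union_self]; exact div_singleton hδ y
  have h3 : δ ({y} ∪ {x}) = 0 := by rw [← h2]; exact h1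
  have hcard := (hδ.2.1 _).mp h3
  have hx : x ∈ ({y} : Finset X) ∪ {x} := by simp
  have hy : y ∈ ({y} : Finset X) ∪ {x} := by simp
  exact (Finset.card_le_one.mp hcard x hx y hy)

lemma deltaT_eq_zero_imp (hδ : IsDiversity δ) {F : Finset (Finset X → ℝ)}
    (hmem : ∀ f ∈ F, MemT δ f) (h0 : deltaT δ F = 0) :
    ∀ f ∈ F, ∀ g ∈ F, f = g := by
  intro f hf g hg
  have hFne : F ≠ ∅ := by rintro rfl; exact absurd hf (by simp)
  have hFne' : F.Nonempty := Finset.nonempty_iff_ne_empty.mpr hFne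
  have hmemP : ∀ f ∈ F, MemP δ f := fun f hf => (hmem f hf).1
  set g₀ : Finset X → ℝ := fun A => mlow F A with hg₀
  have hg₀P : MemP δ g₀ := by
    constructor
    · exact mlow_empty_set F hFne' hmemP
    · intro 𝓐
      have := deltaT_ge hδ F hFne hmemP 𝓐
      rw [h0] at this
      linarith
  have heqf : ∀ h ∈ F, g₀ = h := by
    intro h hh
    exact (hmem h hh).2 g₀ hg₀P (fun A => mlow_le F hh A)
  rw [← heqf f hf, ← heqf g hg]

end Aux3

section Aux4

variable {X : Type*} {δ : Finset X → ℝ}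

lemma sup_filter_partition {α : Type*} (p : α → Prop) [DecidablePred p]
    (s : Finset α) (f : α → Finset X) :
    s.sup f = (s.filter p).sup f ∪ (s.filter (fun a => ¬ p a)).sup f := by
  classical
  conv_lhs => rw [← Finset.filter_union_filter_not_eq p s]
  rw [Finset.sup_union, Finset.sup_eq_union]

lemma sup_image_finset {Y : Type*} (π : X → Y) (𝓐 : Finset (Finset X)) :
    (𝓐.sup id).image π = 𝓐.sup (fun A => A.image π) := by
  classical
  induction 𝓐 using Finset.induction_on with
  | empty => simp
  | @insert A s hA ih =>
      rw [Finset.sup_insert, Finset.sup_insert, Finset.sup_eq_union, Finset.sup_eq_union,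
        ← ih]
      show (A ∪ s.sup id).image π = A.image π ∪ (s.sup id).image π
      rw [Finset.image_union]

/-- Key bound: `δ_T(κ(A) ∪ {f}) ≤ f A` for `f ∈ P_X`. -/
lemma deltaT_insert_hfun_le (hδ : IsDiversity δ) {f : Finset X → ℝ} (hf : MemP δ f)
    (A : Finset X) :
    deltaT δ (insert f (A.image (hfun δ))) ≤ f A := by
  classical
  set F₀ : Finset (Finset X → ℝ) := insert f (A.image (hfun δ)) with hF₀
  have hF₀ne : F₀ ≠ ∅ := by simp [hF₀]
  have hfA : 0 ≤ f A := hf.nonneg hδ A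
  apply deltaT_le F₀ hF₀ne hfA
  intro 𝓑
  -- the predicate: the inf at B is achieved by some hfun a, a ∈ A
  set p : Finset X → Prop := fun B => ∃ a ∈ A, mlow F₀ B = δ (B ∪ {a}) with hp
  have hmlow2 : ∀ B ∈ 𝓑.filter (fun B => ¬ p B), mlow F₀ B = f B := by
    intro B hB
    have hBp := (Finset.mem_filter.mp hB).2
    obtain ⟨w, hw, hval⟩ := mlow_exists F₀ (by simp [hF₀]) B
    rcases Finset.mem_insert.mp hw with rfl | hw'
    · exact hval
    · obtain ⟨a, ha, rfl⟩ := Finset.mem_image.mp hw'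
      exact absurd ⟨a, ha, hval⟩ hBp
  by_cases hA : A = ∅
  · -- then p never holds
    have hpnone : ∀ B, ¬ p B := by
      rintro B ⟨a, ha, -⟩
      simp [hA] at ha
    have hall : ∀ B ∈ 𝓑, mlow F₀ B = f B := by
      intro B hB
      apply hmlow2
      exact Finset.mem_filter.mpr ⟨hB, hpnone B⟩
    rw [Finset.sum_congr rfl hall]
    have := hf.2 𝓑
    linarith
  · have hAne : A.Nonempty := Finset.nonempty_iff_ne_empty.mpr hA
    set 𝓑₁ := 𝓑.filter p with h𝓑₁
    set 𝓑₂ := 𝓑.filter (fun B => ¬ p B) with h𝓑₂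
    set a : Finset X → X := fun B => if h : p B then h.choose else hAne.choose with ha
    have haA : ∀ B ∈ 𝓑₁, a B ∈ A := by
      intro B hB
      have hpB := (Finset.mem_filter.mp hB).2
      simp only [ha, dif_pos hpB]
      exact hpB.choose_spec.1
    have haval : ∀ B ∈ 𝓑₁, mlow F₀ B = δ (B ∪ {a B}) := by
      intro B hB
      have hpB := (Finset.mem_filter.mp hB).2
      simp only [ha, dif_pos hpB]
      exact hpB.choose_spec.2
    set C : Finset X := A ∪ (𝓑₂.sup id) with hC
    have hCne : C ≠ ∅ := by
      intro h
      rw [hC] at h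
      have := Finset.union_eq_empty.mp h
      exact hA this.1
    have hchain := div_chain hδ 𝓑₁ id (fun B => a B) C hCne
      (fun B hB => Finset.mem_union_left _ (haA B hB))
    have hCbound : δ C ≤ f A + ∑ B ∈ 𝓑₂, f B := hf.union_bound hδ A 𝓑₂
    have hsup : (𝓑.sup id : Finset X) ⊆ 𝓑₁.sup id ∪ C := by
      rw [sup_filter_partition p 𝓑 id, hC]
      intro z hz
      rcases Finset.mem_union.mp hz with h | h
      · exact Finset.mem_union_left _ h
      · exact Finset.mem_union_right _ (Finset.mem_union_right _ h)
    have hmono : δ (𝓑.sup id) ≤ δ (𝓑₁.sup id ∪ C) := div_mono hδ hsup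
    have hsum1 : ∑ B ∈ 𝓑₁, δ (id B ∪ {a B}) = ∑ B ∈ 𝓑₁, mlow F₀ B := by
      apply Finset.sum_congr rfl
      intro B hB
      rw [haval B hB]
      rfl
    have hsum2 : ∑ B ∈ 𝓑₂, f B = ∑ B ∈ 𝓑₂, mlow F₀ B :=
      (Finset.sum_congr rfl hmlow2).symm
    have hpart : ∑ B ∈ 𝓑₁, mlow F₀ B + ∑ B ∈ 𝓑₂, mlow F₀ B = ∑ B ∈ 𝓑, mlow F₀ B :=
      Finset.sum_filter_add_sum_filter_not 𝓑 p (mlow F₀)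
    rw [hsum1] at hchain
    linarith

/-- The embedding property of κ: `δ_T(κ(A)) = δ(A)`. -/
lemma deltaT_image_hfun (hδ : IsDiversity δ) (A : Finset X) :
    deltaT δ (A.image (hfun δ)) = δ A := by
  classical
  by_cases hA : A = ∅
  · subst hA
    rw [Finset.image_empty, deltaT, if_pos rfl, div_empty hδ]
  · have hAne : A.Nonempty := Finset.nonempty_iff_ne_empty.mpr hA
    set F₀ := A.image (hfun δ) with hF₀
    have hF₀ne : F₀ ≠ ∅ := by
      simp [hF₀, Finset.image_eq_empty]
      exact hA
    have hF₀nonempty : F₀.Nonempty := Finset.nonempty_iff_ne_empty.mpr hF₀ne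
    have hmemP : ∀ f ∈ F₀, MemP δ f := by
      intro f hf
      obtain ⟨x, -, rfl⟩ := Finset.mem_image.mp hf
      exact hfun_memP hδ x
    apply le_antisymm
    · apply deltaT_le F₀ hF₀ne (hδ.1 A)
      intro 𝓑
      -- for each B, pick a minimizer hfun a
      have hch : ∀ B : Finset X, ∃ a ∈ A, mlow F₀ B = δ (B ∪ {a}) := by
        intro B
        obtain ⟨w, hw, hval⟩ := mlow_exists F₀ hF₀nonempty B
        obtain ⟨x, hx, rfl⟩ := Finset.mem_image.mp hw
        exact ⟨x, hx, hval⟩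
      set a : Finset X → X := fun B => (hch B).choose with ha
      have haA : ∀ B, a B ∈ A := fun B => (hch B).choose_spec.1
      have haval : ∀ B, mlow F₀ B = δ (B ∪ {a B}) := fun B => (hch B).choose_spec.2
      have hchain := div_chain hδ 𝓑 id (fun B => a B) A hA (fun B _ => haA B)
      have hmono : δ (𝓑.sup id) ≤ δ (𝓑.sup id ∪ A) := div_union_right hδ _ _
      have hsum : ∑ B ∈ 𝓑, δ (id B ∪ {a B}) = ∑ B ∈ 𝓑, mlow F₀ B :=
        Finset.sum_congr rfl fun B _ => ((haval B).symm : δ (id B ∪ {a B}) = mlow F₀ B)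
      rw [hsum] at hchain
      linarith
    · -- δ A is in the dSet: take 𝓑 = the set of singletons of A
      rw [deltaT_eq F₀ hF₀ne]
      apply le_csSup (dSet_bddAbove hδ F₀ hF₀nonempty hmemP)
      set 𝓑 : Finset (Finset X) := A.image (fun a => ({a} : Finset X)) with h𝓑
      refine ⟨𝓑, ?_⟩
      have hsup : (𝓑.sup id : Finset X) = A := by
        ext z
        rw [Finset.mem_sup]
        constructor
        · rintro ⟨B, hB, hz⟩
          obtain ⟨b, hb, rfl⟩ := Finset.mem_image.mp hB
          simp only [id] at hz
          rw [Finset.mem_singleton] at hz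
          exact hz ▸ hb
        · intro hz
          exact ⟨{z}, Finset.mem_image_of_mem _ hz, by simp⟩
      have hzero : ∀ B ∈ 𝓑, mlow F₀ B = 0 := by
        intro B hB
        obtain ⟨b, hb, rfl⟩ := Finset.mem_image.mp hB
        apply le_antisymm
        · have hle := mlow_le F₀ (Finset.mem_image_of_mem _ hb) ({b} : Finset X)
          have : hfun δ b {b} = 0 := by
            show δ ({b} ∪ {b}) = 0
            rw [Finset.union_self]; exact div_singleton hδ b
          rw [this] at hle
          exact hle
        · exact mlow_nonneg hδ hmemP _
      rw [hsup, Finset.sum_eq_zero hzero]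
      ring

end Aux4

section Aux5

variable {X : Type*} {δ : Finset X → ℝ}

lemma deltaT_triangle (hδ : IsDiversity δ) (F G H : Finset (Finset X → ℝ))
    (hF : ∀ f ∈ F, MemT δ f) (hG : ∀ f ∈ G, MemT δ f) (hH : ∀ f ∈ H, MemT δ f)
    (hGne : G.Nonempty) :
    deltaT δ (F ∪ H) ≤ deltaT δ (F ∪ G) + deltaT δ (G ∪ H) := by
  classical
  obtain ⟨g, hg⟩ := hGne
  have hFG : ∀ f ∈ F ∪ G, MemP δ f := by
    intro f hf
    rcases Finset.mem_union.mp hf with h | h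
    · exact (hF f h).1
    · exact (hG f h).1
  have hGH : ∀ f ∈ G ∪ H, MemP δ f := by
    intro f hf
    rcases Finset.mem_union.mp hf with h | h
    · exact (hG f h).1
    · exact (hH f h).1
  have hFH : ∀ f ∈ F ∪ H, MemP δ f := by
    intro f hf
    rcases Finset.mem_union.mp hf with h | h
    · exact (hF f h).1
    · exact (hH f h).1
  have hFGne : F ∪ G ≠ ∅ := by
    intro h
    exact absurd (Finset.union_eq_empty.mp h).2 (by rintro rfl; exact absurd hg (by simp))
  have hGHne : G ∪ H ≠ ∅ := by
    intro h
    exact absurd (Finset.union_eq_empty.mp h).1 (by rintro rfl; exact absurd hg (by simp))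
  have hRHS : 0 ≤ deltaT δ (F ∪ G) + deltaT δ (G ∪ H) := by
    have := deltaT_nonneg hδ (F ∪ G) hFG
    have := deltaT_nonneg hδ (G ∪ H) hGH
    linarith
  by_cases hFHe : F ∪ H = ∅
  · rw [deltaT, if_pos hFHe]; exact hRHS
  apply deltaT_le _ hFHe hRHS
  intro 𝓐
  have hFHnonempty : (F ∪ H).Nonempty := Finset.nonempty_iff_ne_empty.mpr hFHe
  -- classify each A by whether the min over F ∪ H is attained in F
  set p : Finset X → Prop := fun A => ∃ w ∈ F, mlow (F ∪ H) A = w A with hp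
  set 𝓐F := 𝓐.filter p with h𝓐F
  set 𝓐H := 𝓐.filter (fun A => ¬ p A) with h𝓐H
  have hHmin : ∀ A ∈ 𝓐H, ∃ w ∈ H, mlow (F ∪ H) A = w A := by
    intro A hA
    have hnp := (Finset.mem_filter.mp hA).2
    obtain ⟨w, hw, hval⟩ := mlow_exists (F ∪ H) hFHnonempty A
    rcases Finset.mem_union.mp hw with h | h
    · exact absurd ⟨w, h, hval⟩ hnp
    · exact ⟨w, h, hval⟩
  have hFmin : ∀ A ∈ 𝓐F, ∃ w ∈ F, mlow (F ∪ H) A = w A := by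
    intro A hA
    exact (Finset.mem_filter.mp hA).2
  set V : Finset X := 𝓐H.sup id with hV
  apply le_of_forall_pos_le_add
  intro ε hε
  obtain ⟨𝓓, h𝓓⟩ := (hG g hg).exists_coll hδ V hε
  -- T1 : element for F ∪ G
  have hT1 : δ ((insert V 𝓐F).sup id) - ∑ B ∈ insert V 𝓐F, mlow (F ∪ G) B
      ≤ deltaT δ (F ∪ G) := deltaT_ge hδ _ hFGne hFG _
  have hT2 : δ ((𝓐H ∪ 𝓓).sup id) - ∑ B ∈ 𝓐H ∪ 𝓓, mlow (G ∪ H) B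
      ≤ deltaT δ (G ∪ H) := deltaT_ge hδ _ hGHne hGH _
  -- sup computations
  have hsup1 : ((insert V 𝓐F).sup id : Finset X) = V ∪ 𝓐F.sup id := by
    rw [Finset.sup_insert, Finset.sup_eq_union]; rfl
  have hsup2 : ((𝓐H ∪ 𝓓).sup id : Finset X) = V ∪ 𝓓.sup id := by
    rw [Finset.sup_union, Finset.sup_eq_union, hV]
  have hsupA : (𝓐.sup id : Finset X) = 𝓐F.sup id ∪ V := by
    rw [hV, h𝓐F, h𝓐H]
    exact sup_filter_partition p 𝓐 id
  -- sum bounds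
  have hs1 : ∑ B ∈ insert V 𝓐F, mlow (F ∪ G) B
      ≤ g V + ∑ B ∈ 𝓐F, mlow (F ∪ H) B := by
    have h1 : ∑ B ∈ insert V 𝓐F, mlow (F ∪ G) B
        ≤ mlow (F ∪ G) V + ∑ B ∈ 𝓐F, mlow (F ∪ G) B :=
      sum_insert_le_of_nonneg (fun B => mlow_nonneg hδ hFG B) V 𝓐F
    have h2 : mlow (F ∪ G) V ≤ g V := mlow_le _ (Finset.mem_union_right _ hg) V
    have h3 : ∑ B ∈ 𝓐F, mlow (F ∪ G) B ≤ ∑ B ∈ 𝓐F, mlow (F ∪ H) B := by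
      apply Finset.sum_le_sum
      intro A hA
      obtain ⟨w, hw, hval⟩ := hFmin A hA
      rw [hval]
      exact mlow_le _ (Finset.mem_union_left _ hw) A
    linarith
  have hs2 : ∑ B ∈ 𝓐H ∪ 𝓓, mlow (G ∪ H) B
      ≤ ∑ B ∈ 𝓐H, mlow (F ∪ H) B + ∑ D ∈ 𝓓, g D := by
    have h1 : ∑ B ∈ 𝓐H ∪ 𝓓, mlow (G ∪ H) B
        ≤ ∑ B ∈ 𝓐H, mlow (G ∪ H) B + ∑ B ∈ 𝓓, mlow (G ∪ H) B :=
      sum_union_le_of_nonneg (fun B => mlow_nonneg hδ hGH B) 𝓐H 𝓓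
    have h2 : ∑ B ∈ 𝓐H, mlow (G ∪ H) B ≤ ∑ B ∈ 𝓐H, mlow (F ∪ H) B := by
      apply Finset.sum_le_sum
      intro A hA
      obtain ⟨w, hw, hval⟩ := hHmin A hA
      rw [hval]
      exact mlow_le _ (Finset.mem_union_right _ hw) A
    have h3 : ∑ B ∈ 𝓓, mlow (G ∪ H) B ≤ ∑ D ∈ 𝓓, g D :=
      Finset.sum_le_sum fun D _ => mlow_le _ (Finset.mem_union_left _ hg) D
    linarith
  have hpartsum : ∑ B ∈ 𝓐F, mlow (F ∪ H) B + ∑ B ∈ 𝓐H, mlow (F ∪ H) B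
      = ∑ B ∈ 𝓐, mlow (F ∪ H) B := by
    rw [h𝓐F, h𝓐H]
    exact Finset.sum_filter_add_sum_filter_not 𝓐 p (mlow (F ∪ H))
  -- combine everything with linarith
  rw [hsupA, Finset.union_comm]
  rw [hsup1] at hT1
  rw [hsup2] at hT2
  linarith [hT1, hT2, hs1, hs2, h𝓓, hpartsum]

end Aux5

section Aux6

variable {X : Type*} {δ : Finset X → ℝ}

lemma isDiversity_subtype (hδ : IsDiversity δ) :
    IsDiversity (fun F : Finset {f : Finset X → ℝ // MemT δ f} =>
      deltaT δ (F.image Subtype.val)) := by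
  letI : DecidableEq {f : Finset X → ℝ // MemT δ f} := fun a b => Classical.propDecidable (a = b)
  have hmem : ∀ (F : Finset {f : Finset X → ℝ // MemT δ f}),
      ∀ f ∈ F.image Subtype.val, MemT δ f := by
    intro F f hf
    obtain ⟨t, -, rfl⟩ := Finset.mem_image.mp hf
    exact t.2
  refine ⟨?_, ?_, ?_⟩
  · intro F; exact deltaT_nonneg hδ _ (fun f hf => (hmem F f hf).1)
  · intro F
    constructor
    · intro h0
      apply Finset.card_le_one.mpr
      intro a ha b hb
      have := deltaT_eq_zero_imp hδ (hmem F) h0 a.1 (Finset.mem_image_of_mem _ ha)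
        b.1 (Finset.mem_image_of_mem _ hb)
      exact Subtype.ext this
    · intro hcard
      show deltaT δ (F.image Subtype.val) = 0
      by_cases hF : F = ∅
      · rw [hF, Finset.image_empty, deltaT, if_pos rfl]
      · obtain ⟨f₀, hf₀⟩ := Finset.nonempty_iff_ne_empty.mpr hF
        have hsing : F = {f₀} := by
          apply Finset.eq_singleton_iff_unique_mem.mpr
          exact ⟨hf₀, fun b hb => Finset.card_le_one.mp hcard b hb f₀ hf₀⟩
        rw [hsing, Finset.image_singleton]
        exact deltaT_singleton hδ f₀.2.1
  · intro A B C hB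
    beta_reduce
    rw [Finset.image_union, Finset.image_union, Finset.image_union]
    apply deltaT_triangle hδ _ _ _ (fun f hf => hmem A f hf) (fun f hf => hmem B f hf)
      (fun f hf => hmem C f hf)
    exact (Finset.nonempty_iff_ne_empty.mpr hB).image _

end Aux6


/-- if `π` embeds `(X, δ)` into an injective diversity `(Y, δY)`, then there is
an embedding `φ` of `(T_X, δ_T)` into `(Y, δY)` with `π = φ ∘ κ`. -/
theorem embedding_of_tightSpan_into_injective {X Y : Type u}
    (δ : Finset X → ℝ) (δY : Finset Y → ℝ)
    (hδ : IsDiversity δ) (hδY : IsDiversity δY)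
    (hinj : InjectiveDiversity δY)
    (π : X → Y) (hπ : IsDivEmbedding δ δY π) :
    ∃ φ : (Finset X → ℝ) → Y,
      (∀ f g : Finset X → ℝ, MemT δ f → MemT δ g → φ f = φ g → f = g) ∧
      (∀ F : Finset (Finset X → ℝ), (∀ f ∈ F, MemT δ f) →
        δY (F.image φ) = deltaT δ F) ∧
      (∀ x : X, φ (hfun δ x) = π x) := by
  -- Y is nonempty, else `hinj` is contradictory
  have hYne : Nonempty Y := by
    by_contra hY
    have hdiv1 : IsDiversity (fun _ : Finset PEmpty.{u+1} => (0:ℝ)) := by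
      refine ⟨fun _ => le_rfl, fun A => ⟨fun _ => ?_, fun _ => rfl⟩, fun _ _ _ _ => by norm_num⟩
      rw [Finset.eq_empty_of_isEmpty A]; simp
    have hdiv2 : IsDiversity (fun _ : Finset PUnit.{u+1} => (0:ℝ)) := by
      refine ⟨fun _ => le_rfl, fun A => ⟨fun _ => ?_, fun _ => rfl⟩, fun _ _ _ _ => by norm_num⟩
      exact Finset.card_le_one.mpr fun a _ b _ => Subsingleton.elim a b
    have hemb : IsDivEmbedding (fun _ : Finset PEmpty.{u+1} => (0:ℝ))
        (fun _ : Finset PUnit.{u+1} => (0:ℝ)) (fun x => x.elim) :=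
      ⟨fun a => a.elim, fun _ => rfl⟩
    have hne : IsNonexpansive (fun _ : Finset PEmpty.{u+1} => (0:ℝ)) δY (fun x => x.elim) := by
      intro A
      rw [Finset.eq_empty_of_isEmpty A, Finset.image_empty, div_empty hδY]
    obtain ⟨ψ, -, -⟩ := hinj PEmpty PUnit _ _ hdiv1 hdiv2 (fun x => x.elim)
      (fun x => x.elim) hemb hne
    exact hY ⟨ψ PUnit.unit⟩
  obtain ⟨y₀⟩ := hYne
  set T' := {f : Finset X → ℝ // MemT δ f} with hT'
  set δ₂ : Finset T' → ℝ := fun F => deltaT δ (F.image Subtype.val) with hδ₂def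
  have hδ₂ : IsDiversity δ₂ := isDiversity_subtype hδ
  letI : DecidableEq T' := fun a b => Classical.propDecidable (a = b)
  set κ' : X → T' := fun x => ⟨hfun δ x, hfun_memT hδ x⟩ with hκ'
  have hκemb : IsDivEmbedding δ δ₂ κ' := by
    constructor
    · intro a b h
      exact hfun_injective hδ (congrArg Subtype.val h)
    · intro A
      rw [hδ₂def]
      beta_reduce
      rw [Finset.image_image]
      exact deltaT_image_hfun hδ A
  have hπnonexp : IsNonexpansive δ δY π := fun A => (hπ.2 A).le
  obtain ⟨ψ, hψne, hψκ⟩ := hinj X T' δ δ₂ hδ hδ₂ κ' π hκemb hπnonexp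
  set φ : (Finset X → ℝ) → Y := fun f => if h : MemT δ f then ψ ⟨f, h⟩ else y₀ with hφ
  have hφval : ∀ (f : Finset X → ℝ) (h : MemT δ f), φ f = ψ ⟨f, h⟩ := by
    intro f h
    rw [hφ]
    exact dif_pos h
  -- the key equality
  have key : ∀ F : Finset (Finset X → ℝ), (∀ f ∈ F, MemT δ f) →
      δY (F.image φ) = deltaT δ F := by
    intro F hF
    by_cases hFe : F = ∅
    · rw [hFe, Finset.image_empty, div_empty hδY, deltaT, if_pos rfl]
    have hFne : F.Nonempty := Finset.nonempty_iff_ne_empty.mpr hFe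
    have hmemP : ∀ f ∈ F, MemP δ f := fun f hf => (hF f hf).1
    set F' : Finset T' := F.attach.image (fun x => (⟨x.1, hF x.1 x.2⟩ : T')) with hF'
    have himval : F'.image Subtype.val = F := by
      ext f
      simp only [hF', Finset.image_image, Finset.mem_image, Finset.mem_attach,
        true_and, Subtype.exists, Function.comp]
      constructor
      · rintro ⟨a, ha, rfl⟩; exact ha
      · intro hf; exact ⟨f, hf, rfl⟩
    have himφ : F.image φ = F'.image ψ := by
      apply Finset.Subset.antisymm
      · intro y hy
        obtain ⟨f, hf, rfl⟩ := Finset.mem_image.mp hy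
        rw [hφval f (hF f hf)]
        apply Finset.mem_image_of_mem
        rw [hF']
        exact Finset.mem_image_of_mem _ (Finset.mem_attach F ⟨f, hf⟩)
      · intro y hy
        obtain ⟨t, ht, rfl⟩ := Finset.mem_image.mp hy
        rw [hF'] at ht
        obtain ⟨x, -, rfl⟩ := Finset.mem_image.mp ht
        rw [← hφval x.1 (hF x.1 x.2)]
        exact Finset.mem_image_of_mem _ x.2
    apply le_antisymm
    · rw [himφ]
      calc δY (F'.image ψ) ≤ δ₂ F' := hψne F'
        _ = deltaT δ F := by
              show deltaT δ (F'.image Subtype.val) = deltaT δ F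
              rw [himval]
    · apply deltaT_le F hFe (hδY.1 _)
      intro 𝓐
      -- choose minimizers
      have hch : ∀ A : Finset X, ∃ f ∈ F, mlow F A = f A := fun A => mlow_exists F hFne A
      set σ : Finset X → (Finset X → ℝ) := fun A => (hch A).choose with hσ
      have hσF : ∀ A, σ A ∈ F := fun A => (hch A).choose_spec.1
      have hσval : ∀ A, mlow F A = σ A A := fun A => (hch A).choose_spec.2
      have hφne : F.image φ ≠ ∅ := by
        simp only [ne_eq, Finset.image_eq_empty]
        exact hFe
      have hchain := div_chain hδY 𝓐 (fun A => A.image π) (fun A => φ (σ A)) (F.image φ)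
        hφne (fun A _ => Finset.mem_image_of_mem φ (hσF A))
      have hleft : δ (𝓐.sup id) ≤ δY (𝓐.sup (fun A => A.image π) ∪ F.image φ) := by
        rw [← sup_image_finset π 𝓐]
        rw [← hπ.2 (𝓐.sup id)]
        exact div_mono hδY Finset.subset_union_left
      have hterm : ∀ A ∈ 𝓐, δY ((fun A => A.image π) A ∪ {φ (σ A)}) ≤ mlow F A := by
        intro A _
        have hmσ : MemT δ (σ A) := hF _ (hσF A)
        set t : T' := ⟨σ A, hmσ⟩ with hts
        have himg : (insert t (A.image κ')).image ψ = A.image π ∪ {φ (σ A)} := by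
          rw [Finset.image_insert, Finset.image_image]
          have h1 : ψ t = φ (σ A) := (hφval _ hmσ).symm
          have h2 : A.image (ψ ∘ κ') = A.image π := by rw [← hψκ]
          rw [h1, h2, Finset.insert_eq, Finset.union_comm]
        calc δY (A.image π ∪ {φ (σ A)}) = δY ((insert t (A.image κ')).image ψ) := by
              rw [himg]
          _ ≤ δ₂ (insert t (A.image κ')) := hψne _
          _ = deltaT δ (insert (σ A) (A.image (hfun δ))) := by
              show deltaT δ ((insert t (A.image κ')).image Subtype.val)
                = deltaT δ (insert (σ A) (A.image (hfun δ)))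
              rw [Finset.image_insert, Finset.image_image]
              rfl
          _ ≤ (σ A) A := deltaT_insert_hfun_le hδ hmσ.1 A
          _ = mlow F A := (hσval A).symm
      have hsum : ∑ A ∈ 𝓐, δY ((fun A => A.image π) A ∪ {φ (σ A)}) ≤ ∑ A ∈ 𝓐, mlow F A :=
        Finset.sum_le_sum hterm
      linarith [hchain, hleft, hsum]
  refine ⟨φ, ?_, key, ?_⟩
  · intro f g hf hg hfg
    have hmem2 : ∀ x ∈ ({f, g} : Finset (Finset X → ℝ)), MemT δ x := by
      intro x hx
      rcases Finset.mem_insert.mp hx with rfl | hx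
      · exact hf
      · rw [Finset.mem_singleton.mp hx]; exact hg
    have h2 := key {f, g} hmem2
    have himg : ({f, g} : Finset (Finset X → ℝ)).image φ = {φ g} := by
      rw [Finset.image_insert, Finset.image_singleton, hfg]
      exact Finset.insert_eq_self.mpr (Finset.mem_singleton_self _)
    rw [himg] at h2
    have h0 : δY {φ g} = 0 := (hδY.2.1 _).mpr (by simp)
    rw [h0] at h2
    exact deltaT_eq_zero_imp hδ hmem2 h2.symm f (Finset.mem_insert_self _ _) g
      (Finset.mem_insert_of_mem (Finset.mem_singleton_self _))
  · intro x
    rw [hφval _ (hfun_memT hδ x)]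
    exact (congrFun hψκ x).symm

end
end

section
/- Let (X, δ) be a diversity. Then (X, δ) is hyperconvex if and only if there is an isomorphism (a surjective embedding) between (X, δ) and its tight span (T_X, δ_T). -/
open scoped Classical

noncomputable section

/-- A hyperconvex diversity. -/
def DivHyperconvex {X : Type*} (δ : Finset X → ℝ) : Prop :=
  ∀ r : Finset X → ℝ,
    (∀ 𝓐 : Finset (Finset X), δ (𝓐.sup id) ≤ ∑ A ∈ 𝓐, r A) →
    ∃ z : X, ∀ Y : Finset X, δ ({z} ∪ Y) ≤ r Y

namespace DivAux

/-! ### Sum helpers -/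

lemma sum_insert_le_of_nonneg {α : Type*} [DecidableEq α] {f : α → ℝ} (hf : ∀ a, 0 ≤ f a)
    (a : α) (s : Finset α) : ∑ x ∈ insert a s, f x ≤ f a + ∑ x ∈ s, f x := by
  by_cases h : a ∈ s
  · rw [Finset.insert_eq_self.2 h]
    nlinarith [hf a]
  · rw [Finset.sum_insert h]

lemma sum_image_le_of_nonneg {α β : Type*} [DecidableEq β] {f : β → ℝ} (hf : ∀ b, 0 ≤ f b)
    (s : Finset α) (g : α → β) : ∑ b ∈ s.image g, f b ≤ ∑ a ∈ s, f (g a) := by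
  induction s using Finset.induction_on with
  | empty => simp
  | @insert a s ha ih =>
    rw [Finset.image_insert, Finset.sum_insert ha]
    exact le_trans (sum_insert_le_of_nonneg hf _ _) (by linarith)

lemma fiber_sup {α β γ : Type*} [DecidableEq β] [SemilatticeSup γ] [OrderBot γ]
    (s : Finset α) (key : α → β) (v : α → γ) :
    (s.image key).sup (fun k => (s.filter fun a => key a = k).sup v) = s.sup v := by
  apply le_antisymm
  · exact Finset.sup_le fun k hk => Finset.sup_le fun a ha =>
      Finset.le_sup (Finset.mem_filter.1 ha).1
  · refine Finset.sup_le fun a ha => ?_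
    have h1 : v a ≤ (s.filter fun x => key x = key a).sup v :=
      Finset.le_sup (Finset.mem_filter.2 ⟨ha, rfl⟩)
    exact le_trans h1 (Finset.le_sup (f := fun k => (s.filter fun a => key a = k).sup v)
      (Finset.mem_image_of_mem key ha))

lemma image_finset_sup {α β : Type*} [DecidableEq α] [DecidableEq β]
    (𝓕 : Finset (Finset α)) (g : α → β) :
    (𝓕.sup id).image g = 𝓕.sup (fun F => F.image g) := by
  ext b
  simp only [Finset.mem_image, Finset.mem_sup, id]
  tauto

/-! ### Diversity basics -/

variable {X : Type*} {δ : Finset X → ℝ}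

lemma div_empty (hδ : IsDiversity δ) : δ ∅ = 0 := (hδ.2.1 ∅).2 (by simp)

lemma div_single (hδ : IsDiversity δ) (x : X) : δ {x} = 0 := (hδ.2.1 {x}).2 (by simp)

lemma div_le_insert (hδ : IsDiversity δ) (A : Finset X) (b : X) : δ A ≤ δ (insert b A) := by
  have h := hδ.2.2 A {b} ∅ (by simp)
  have h1 : δ {b} = 0 := div_single hδ b
  have h2 : A ∪ {b} = insert b A := by rw [Finset.union_comm]; rfl
  simp only [Finset.union_empty, h2] at h
  linarith

lemma div_union_right (hδ : IsDiversity δ) (A s : Finset X) : δ A ≤ δ (A ∪ s) := by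
  induction s using Finset.induction_on with
  | empty => simp
  | @insert x s hx ih =>
    rw [Finset.union_insert]
    exact le_trans ih (div_le_insert hδ _ _)

lemma div_mono (hδ : IsDiversity δ) {A B : Finset X} (h : A ⊆ B) : δ A ≤ δ B := by
  have := div_union_right hδ A B
  rwa [Finset.union_eq_right.2 h] at this

lemma div_star (hδ : IsDiversity δ) {ι : Type*} (I : Finset ι) (C : ι → Finset X) (a : ι → X)
    (base : Finset X) (ha : ∀ i ∈ I, a i ∈ base) :
    δ (base ∪ I.sup C) ≤ δ base + ∑ i ∈ I, δ (C i ∪ {a i}) := by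
  induction I using Finset.induction_on with
  | empty => simp
  | @insert i I hi ih =>
    have hai : a i ∈ base := ha i (Finset.mem_insert_self i I)
    have ihI := ih (fun j hj => ha j (Finset.mem_insert_of_mem hj))
    rw [Finset.sup_insert, Finset.sum_insert hi]
    have htr := hδ.2.2 (base ∪ I.sup C) {a i} (C i) (by simp)
    have he1 : base ∪ (C i ⊔ I.sup C) = (base ∪ I.sup C) ∪ C i := by
      ext y; simp only [Finset.sup_eq_union, Finset.mem_union]; tauto
    have he2 : (base ∪ I.sup C) ∪ {a i} = base ∪ I.sup C := by
      apply Finset.union_eq_left.2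
      intro y hy
      simp only [Finset.mem_singleton] at hy
      subst hy
      exact Finset.mem_union_left _ hai
    have he3 : ({a i} : Finset X) ∪ C i = C i ∪ {a i} := Finset.union_comm _ _
    rw [he1]
    rw [he2, he3] at htr
    linarith

/-! ### Basic facts about `P` (generic in the base function) -/

section Base

variable {Z : Type*} {b : Finset Z → ℝ}

lemma memP_le {f : Finset Z → ℝ} (hf : MemP b f) (A : Finset Z) : b A ≤ f A := by
  have := hf.2 {A}
  simpa using this

lemma memP_nonneg (hnn : ∀ A, 0 ≤ b A) {f : Finset Z → ℝ} (hf : MemP b f) (A : Finset Z) :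
    0 ≤ f A := le_trans (hnn A) (memP_le hf A)

lemma memP_cover (hnn : ∀ A, 0 ≤ b A) {f : Finset Z → ℝ} (hf : MemP b f)
    {ι : Type*} (I : Finset ι) (C : ι → Finset Z) :
    b (I.sup C) ≤ ∑ i ∈ I, f (C i) := by
  have h1 := hf.2 (I.image C)
  rw [Finset.sup_image] at h1
  exact le_trans h1 (sum_image_le_of_nonneg (memP_nonneg hnn hf) I C)

lemma memT_tight (h0 : b ∅ = 0) {f : Finset Z → ℝ} (hf : MemT b f) (A : Finset Z)
    {ε : ℝ} (hε : 0 < ε) :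
    ∃ 𝓐 : Finset (Finset Z), f A + ∑ B ∈ 𝓐, f B ≤ b (A ∪ 𝓐.sup id) + ε := by
  by_contra hcon
  push_neg at hcon
  -- every constraint through A has slack ε
  have hA : A ≠ ∅ := by
    intro h
    subst h
    have := hcon ∅
    simp [hf.1.1, h0] at this
    linarith
  set g : Finset Z → ℝ := Function.update f A (f A - ε) with hg
  have hgP : MemP b g := by
    constructor
    · rw [hg, Function.update_of_ne (Ne.symm hA), hf.1.1]
    · intro 𝓐
      by_cases hmem : A ∈ 𝓐
      · have hsum : ∑ B ∈ 𝓐, g B = (f A - ε) + ∑ B ∈ 𝓐 \ {A}, f B := by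
          rw [hg, Finset.sum_update_of_mem hmem]
        have hsup : 𝓐.sup id = A ∪ (𝓐.erase A).sup id := by
          conv_lhs => rw [← Finset.insert_erase hmem]
          rw [Finset.sup_insert]
          rfl
        have hc := hcon (𝓐.erase A)
        have hers : 𝓐 \ {A} = 𝓐.erase A := by rw [Finset.erase_eq]
        rw [hsum, hers, hsup]
        linarith
      · have hsum : ∑ B ∈ 𝓐, g B = ∑ B ∈ 𝓐, f B := by
          apply Finset.sum_congr rfl
          intro B hB
          rw [hg, Function.update_of_ne (by rintro rfl; exact hmem hB)]
        rw [hsum]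
        exact hf.1.2 𝓐
  have hgle : ∀ B, g B ≤ f B := by
    intro B
    by_cases hB : B = A
    · subst hB; rw [hg, Function.update_self]; linarith
    · rw [hg, Function.update_of_ne hB]
  have := hf.2 g hgP hgle
  have : g A = f A := by rw [this]
  rw [hg, Function.update_self] at this
  linarith

lemma memT_of_tight (hnn : ∀ A, 0 ≤ b A) {f : Finset Z → ℝ} (hf : MemP b f)
    (ht : ∀ A : Finset Z, ∀ ε > 0, ∃ 𝓐 : Finset (Finset Z),
      f A + ∑ B ∈ 𝓐, f B ≤ b (A ∪ 𝓐.sup id) + ε) : MemT b f := by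
  refine ⟨hf, fun p hp hple => ?_⟩
  funext A
  refine le_antisymm (hple A) ?_
  refine le_of_forall_pos_le_add fun ε hε => ?_
  obtain ⟨𝓐, h𝓐⟩ := ht A ε hε
  have hcov : b (A ∪ 𝓐.sup id) ≤ p A + ∑ B ∈ 𝓐, p B := by
    have h1 := memP_cover hnn hp (insert A 𝓐) id
    rw [Finset.sup_insert] at h1
    exact le_trans h1 (sum_insert_le_of_nonneg (memP_nonneg hnn hp) A 𝓐)
  have hsum : ∑ B ∈ 𝓐, p B ≤ ∑ B ∈ 𝓐, f B := Finset.sum_le_sum fun B _ => hple B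
  linarith

lemma memT_subadd (h0 : b ∅ = 0) (hnn : ∀ A, 0 ≤ b A) {f : Finset Z → ℝ} (hf : MemT b f)
    (A B : Finset Z) : f (A ∪ B) ≤ f A + f B := by
  refine le_of_forall_pos_le_add fun ε hε => ?_
  obtain ⟨𝓐, h𝓐⟩ := memT_tight h0 hf (A ∪ B) hε
  have hcov : b (A ∪ B ∪ 𝓐.sup id) ≤ f A + (f B + ∑ C ∈ 𝓐, f C) := by
    have h1 := memP_cover hnn hf.1 (insert A (insert B 𝓐)) id
    rw [Finset.sup_insert, Finset.sup_insert] at h1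
    refine le_trans (le_trans (le_of_eq (by rw [Finset.union_assoc]; rfl)) h1) ?_
    refine le_trans (sum_insert_le_of_nonneg (memP_nonneg hnn hf.1) _ _) ?_
    have := sum_insert_le_of_nonneg (memP_nonneg hnn hf.1) B 𝓐
    linarith
  linarith

lemma memT_subadd_sup (h0 : b ∅ = 0) (hnn : ∀ A, 0 ≤ b A) {f : Finset Z → ℝ} (hf : MemT b f)
    (𝓘 : Finset (Finset Z)) : f (𝓘.sup id) ≤ ∑ B ∈ 𝓘, f B := by
  induction 𝓘 using Finset.induction_on with
  | empty => simp [hf.1.1]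
  | @insert A 𝓘 hA ih =>
    rw [Finset.sup_insert, Finset.sum_insert hA, id, Finset.sup_eq_union]
    exact le_trans (memT_subadd h0 hnn hf _ _) (by linarith)

end Base

section ZornPart
open DivAux
variable {Z : Type*} {b : Finset Z → ℝ}

lemma chain_finset_lb {c : Set (Finset Z → ℝ)}
    (hc : IsChain (· ≤ ·) c) {y : Finset Z → ℝ} (hy : y ∈ c)
    {ι : Type*} (t : Finset ι) (u : ι → (Finset Z → ℝ)) (hu : ∀ i ∈ t, u i ∈ c) :
    ∃ g ∈ c, ∀ i ∈ t, ∀ B, g B ≤ u i B := by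
  classical
  induction t using Finset.induction_on with
  | empty => exact ⟨y, hy, by simp⟩
  | @insert i t hi ih =>
    obtain ⟨g, hg, hgle⟩ := ih (fun j hj => hu j (Finset.mem_insert_of_mem hj))
    have hui : u i ∈ c := hu i (Finset.mem_insert_self i t)
    rcases hc.total hg hui with h | h
    · exact ⟨g, hg, fun j hj B => by
        rcases Finset.mem_insert.1 hj with rfl | hj
        · exact h B
        · exact hgle j hj B⟩
    · refine ⟨u i, hui, fun j hj B => ?_⟩
      rcases Finset.mem_insert.1 hj with rfl | hj
      · exact le_rfl
      · exact le_trans (h B) (hgle j hj B)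

lemma exists_memT_le (h0 : b ∅ = 0) (hnn : ∀ A, 0 ≤ b A)
    {f : Finset Z → ℝ} (hf : MemP b f) :
    ∃ g : Finset Z → ℝ, MemT b g ∧ ∀ A, g A ≤ f A := by
  classical
  set S : Set ((Finset Z → ℝ)ᵒᵈ) :=
    {g | MemP b (OrderDual.ofDual g) ∧ ∀ A, OrderDual.ofDual g A ≤ f A} with hS
  have hzorn : ∀ c ⊆ S, IsChain (· ≤ ·) c → ∀ y ∈ c,
      ∃ ub ∈ S, ∀ z ∈ c, z ≤ ub := by
    intro c hcS hchain y hy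
    -- c is a chain in the dual order, i.e. under ≥ pointwise in the base order
    set c' : Set (Finset Z → ℝ) := OrderDual.ofDual '' c with hc'
    have hc'chain : IsChain (· ≤ ·) c' := by
      rintro _ ⟨p, hp, rfl⟩ _ ⟨q, hq, rfl⟩ hne
      have := hchain hp hq (fun h => hne (by rw [h]))
      rcases this with h | h
      · exact Or.inr h
      · exact Or.inl h
    have hy' : OrderDual.ofDual y ∈ c' := ⟨y, hy, rfl⟩
    have hmemP : ∀ g ∈ c', MemP b g := by
      rintro _ ⟨p, hp, rfl⟩; exact (hcS hp).1
    have hlef : ∀ g ∈ c', ∀ A, g A ≤ f A := by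
      rintro _ ⟨p, hp, rfl⟩; exact (hcS hp).2
    have hbdd : ∀ A : Finset Z, BddBelow ((fun g => g A) '' c') := by
      intro A
      exact ⟨b A, by rintro _ ⟨g, hg, rfl⟩; exact memP_le (hmemP g hg) A⟩
    have hne : ∀ A : Finset Z, ((fun g => g A) '' c').Nonempty :=
      fun A => ⟨_, ⟨_, hy', rfl⟩⟩
    set g0 : Finset Z → ℝ := fun A => sInf ((fun g => g A) '' c') with hg0
    have hg0le : ∀ g ∈ c', ∀ A, g0 A ≤ g A := by
      intro g hg A
      exact csInf_le (hbdd A) ⟨g, hg, rfl⟩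
    have hg0P : MemP b g0 := by
      constructor
      · have : (fun g => g ∅) '' c' = {0} := by
          apply Set.eq_singleton_iff_unique_mem.2
          exact ⟨⟨_, hy', (hmemP _ hy').1⟩, by rintro _ ⟨g, hg, rfl⟩; exact (hmemP g hg).1⟩
        rw [hg0]; simp only [this, csInf_singleton]
      · intro 𝓐
        refine le_of_forall_pos_le_add fun ε hε => ?_
        have hcard : (0:ℝ) < (𝓐.card + 1 : ℝ) := by positivity
        set ε' : ℝ := ε / (𝓐.card + 1) with hε'
        have hε'pos : 0 < ε' := by positivity
        have hsel : ∀ A : Finset Z, ∃ g ∈ c', g A < g0 A + ε' := by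
          intro A
          have h1 : g0 A < g0 A + ε' := by linarith
          obtain ⟨v, hv, hvlt⟩ := exists_lt_of_csInf_lt (hne A) h1
          obtain ⟨g, hg, rfl⟩ := hv
          exact ⟨g, hg, hvlt⟩
        choose sel hselc hsellt using hsel
        obtain ⟨g, hg, hgle⟩ := chain_finset_lb hc'chain hy' 𝓐 sel (fun A hA => hselc A)
        have h1 : b (𝓐.sup id) ≤ ∑ A ∈ 𝓐, g A := (hmemP g hg).2 𝓐
        have h2 : ∑ A ∈ 𝓐, g A ≤ ∑ A ∈ 𝓐, (g0 A + ε') := by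
          refine Finset.sum_le_sum fun A hA => ?_
          exact le_trans (hgle A hA A) (le_of_lt (hsellt A))
        rw [Finset.sum_add_distrib, Finset.sum_const] at h2
        simp only [nsmul_eq_mul] at h2
        have hε'eq : ε' * ((𝓐.card : ℝ) + 1) = ε := by
          rw [hε']; field_simp
        have h3 : (𝓐.card : ℝ) * ε' ≤ ε := by nlinarith [hε'pos.le]
        linarith
    have hg0f : ∀ A, g0 A ≤ f A :=
      fun A => le_trans (hg0le _ hy' A) (hlef _ hy' A)
    refine ⟨OrderDual.toDual g0, ⟨hg0P, hg0f⟩, ?_⟩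
    intro z hz
    exact fun A => hg0le (OrderDual.ofDual z) ⟨z, hz, rfl⟩ A
  obtain ⟨m, _, hmS, hmax⟩ := zorn_le_nonempty₀ S hzorn (OrderDual.toDual f) ⟨hf, fun A => le_rfl⟩
  refine ⟨OrderDual.ofDual m, ⟨hmS.1, ?_⟩, hmS.2⟩
  intro p hpP hple
  have hpS : OrderDual.toDual p ∈ S := ⟨hpP, fun A => le_trans (hple A) (hmS.2 A)⟩
  have h1 : m ≤ OrderDual.toDual p := fun A => hple A
  have h2 := hmax hpS h1
  funext A
  exact le_antisymm (hple A) (h2 A)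
end ZornPart

section DT
open DivAux
variable {X : Type*} {δ : Finset X → ℝ}

def DTset (δ : Finset X → ℝ) (F : Finset (Finset X → ℝ)) : Set ℝ :=
  {r : ℝ | ∃ 𝓐 : Finset (Finset X),
    r = δ (𝓐.sup id) - ∑ A ∈ 𝓐, sInf ((fun f => f A) '' (F : Set (Finset X → ℝ)))}

lemma deltaT_of_ne {F : Finset (Finset X → ℝ)} (hF : F.Nonempty) :
    deltaT δ F = sSup (DTset δ F) := by
  rw [deltaT, if_neg (Finset.nonempty_iff_ne_empty.1 hF)]
  rfl

lemma zero_mem_DTset (hδ : IsDiversity δ) (F : Finset (Finset X → ℝ)) :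
    (0:ℝ) ∈ DTset δ F :=
  ⟨∅, by simp [div_empty hδ]⟩

-- a canonical minimizing selection
lemma exists_min_sel {F : Finset (Finset X → ℝ)} (hF : F.Nonempty) :
    ∃ m : Finset X → (Finset X → ℝ), ∀ B : Finset X, m B ∈ F ∧
      m B B = sInf ((fun f => f B) '' (F : Set (Finset X → ℝ))) := by
  have h : ∀ B : Finset X, ∃ g, g ∈ F ∧
      g B = sInf ((fun f => f B) '' (F : Set (Finset X → ℝ))) := by
    intro B
    have hfin : ((fun f => f B) '' (F : Set (Finset X → ℝ))).Finite :=
      (F.finite_toSet).image _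
    have hne : ((fun f => f B) '' (F : Set (Finset X → ℝ))).Nonempty :=
      (Set.image_nonempty).2 (by exact_mod_cast hF)
    obtain ⟨g, hg, hgeq⟩ := hne.csInf_mem hfin
    exact ⟨g, hg, hgeq⟩
  choose m hm1 hm2 using h
  exact ⟨m, fun B => ⟨hm1 B, hm2 B⟩⟩

lemma sInf_le_val {F : Finset (Finset X → ℝ)} {g : Finset X → ℝ} (hg : g ∈ F) (B : Finset X) :
    sInf ((fun f => f B) '' (F : Set (Finset X → ℝ))) ≤ g B := by
  have hfin : ((fun f => f B) '' (F : Set (Finset X → ℝ))).Finite :=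
    (F.finite_toSet).image _
  exact csInf_le hfin.bddBelow ⟨g, hg, rfl⟩

lemma DTset_bddAbove [Nonempty X] (hδ : IsDiversity δ) {F : Finset (Finset X → ℝ)}
    (hF : F.Nonempty) (hP : ∀ f ∈ F, MemP δ f) : BddAbove (DTset δ F) := by
  classical
  obtain ⟨x₀⟩ := ‹Nonempty X›
  refine ⟨∑ f ∈ F, f {x₀}, ?_⟩
  rintro r ⟨𝓐, rfl⟩
  obtain ⟨m, hm⟩ := exists_min_sel hF
  have hsum : ∑ A ∈ 𝓐, sInf ((fun f => f A) '' (F : Set (Finset X → ℝ)))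
      = ∑ A ∈ 𝓐, (m A) A := by
    exact Finset.sum_congr rfl fun A _ => ((hm A).2).symm
  rw [hsum]
  -- group 𝓐 by the minimizing element
  set M : Finset (Finset X → ℝ) := 𝓐.image m with hM
  have hMF : ∀ f ∈ M, f ∈ F := by
    intro f hf
    obtain ⟨B, _, rfl⟩ := Finset.mem_image.1 hf
    exact (hm B).1
  have hstar : δ ({x₀} ∪ M.sup (fun f => (𝓐.filter fun B => m B = f).sup id))
      ≤ δ {x₀} + ∑ f ∈ M, δ ((𝓐.filter fun B => m B = f).sup id ∪ {x₀}) :=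
    div_star hδ M _ (fun _ => x₀) {x₀} (fun _ _ => Finset.mem_singleton_self x₀)
  rw [fiber_sup 𝓐 m id] at hstar
  have hone : ∀ f ∈ M, δ ((𝓐.filter fun B => m B = f).sup id ∪ {x₀})
      ≤ f {x₀} + ∑ B ∈ 𝓐.filter (fun B => m B = f), f B := by
    intro f hf
    have hcov := memP_cover hδ.1 (hP f (hMF f hf)) (insert {x₀} (𝓐.filter fun B => m B = f)) id
    rw [Finset.sup_insert] at hcov
    have := sum_insert_le_of_nonneg (memP_nonneg hδ.1 (hP f (hMF f hf))) ({x₀} : Finset X)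
      (𝓐.filter fun B => m B = f)
    have heq : (id ({x₀} : Finset X) ⊔ (𝓐.filter fun B => m B = f).sup id)
        = (𝓐.filter fun B => m B = f).sup id ∪ {x₀} := by
      rw [Finset.sup_eq_union, Finset.union_comm]; rfl
    rw [heq] at hcov
    simp only [id_eq] at hcov
    linarith
  have hfib : ∑ f ∈ M, ∑ B ∈ 𝓐.filter (fun B => m B = f), (fun B => (m B) B) B
      = ∑ B ∈ 𝓐, (m B) B :=
    Finset.sum_fiberwise_of_maps_to (fun B hB => Finset.mem_image_of_mem m hB) _
  have hfib2 : ∑ f ∈ M, ∑ B ∈ 𝓐.filter (fun B => m B = f), f B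
      = ∑ B ∈ 𝓐, (m B) B := by
    rw [← hfib]
    refine Finset.sum_congr rfl fun f hf => Finset.sum_congr rfl fun B hB => ?_
    simp only [(Finset.mem_filter.1 hB).2]
  have hmono : δ (𝓐.sup id) ≤ δ ({x₀} ∪ 𝓐.sup id) :=
    div_mono hδ (Finset.subset_union_right)
  have hMsub : ∑ f ∈ M, f {x₀} ≤ ∑ f ∈ F, f {x₀} := by
    refine Finset.sum_le_sum_of_subset_of_nonneg ?_ ?_
    · intro f hf; exact hMF f hf
    · intro f hf _; exact memP_nonneg hδ.1 (hP f hf) _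
  have hsingle : δ ({x₀} : Finset X) = 0 := div_single hδ x₀
  have hsum2 : ∑ f ∈ M, (f {x₀} + ∑ B ∈ 𝓐.filter (fun B => m B = f), f B)
      = ∑ f ∈ M, f {x₀} + ∑ B ∈ 𝓐, (m B) B := by
    rw [Finset.sum_add_distrib, hfib2]
  have h5 : δ ({x₀} ∪ 𝓐.sup id) ≤ δ {x₀} + ∑ f ∈ M,
      (f {x₀} + ∑ B ∈ 𝓐.filter (fun B => m B = f), f B) :=
    le_trans hstar (by linarith [Finset.sum_le_sum hone])
  rw [hsum2, hsingle] at h5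
  linarith

lemma le_deltaT [Nonempty X] (hδ : IsDiversity δ) {F : Finset (Finset X → ℝ)}
    (hF : F.Nonempty) (hP : ∀ f ∈ F, MemP δ f) (𝓐 : Finset (Finset X))
    (m : Finset X → (Finset X → ℝ)) (hm : ∀ B ∈ 𝓐, m B ∈ F) :
    δ (𝓐.sup id) - ∑ B ∈ 𝓐, (m B) B ≤ deltaT δ F := by
  rw [deltaT_of_ne hF]
  have hmem : (δ (𝓐.sup id) - ∑ A ∈ 𝓐, sInf ((fun f => f A) '' (F : Set (Finset X → ℝ))))
      ∈ DTset δ F := ⟨𝓐, rfl⟩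
  have h1 : ∑ A ∈ 𝓐, sInf ((fun f => f A) '' (F : Set (Finset X → ℝ)))
      ≤ ∑ B ∈ 𝓐, (m B) B :=
    Finset.sum_le_sum fun B hB => sInf_le_val (hm B hB) B
  have h2 := le_csSup (DTset_bddAbove hδ hF hP) hmem
  linarith

lemma deltaT_le (hδ : IsDiversity δ) {F : Finset (Finset X → ℝ)} (hF : F.Nonempty) {c : ℝ}
    (h : ∀ (𝓐 : Finset (Finset X)) (m : Finset X → (Finset X → ℝ)),
      (∀ B ∈ 𝓐, m B ∈ F) → δ (𝓐.sup id) ≤ c + ∑ B ∈ 𝓐, (m B) B) :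
    deltaT δ F ≤ c := by
  rw [deltaT_of_ne hF]
  obtain ⟨m, hm⟩ := exists_min_sel hF
  have hc0 : 0 ≤ c := by
    have := h ∅ m (by simp)
    simpa [div_empty hδ] using this
  refine Real.sSup_le ?_ hc0
  rintro r ⟨𝓐, rfl⟩
  have hsum : ∑ A ∈ 𝓐, sInf ((fun f => f A) '' (F : Set (Finset X → ℝ)))
      = ∑ A ∈ 𝓐, (m A) A :=
    Finset.sum_congr rfl fun A _ => ((hm A).2).symm
  rw [hsum]
  have := h 𝓐 m (fun B _ => (hm B).1)
  linarith

lemma deltaT_nonneg [Nonempty X] (hδ : IsDiversity δ) {F : Finset (Finset X → ℝ)}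
    (hP : ∀ f ∈ F, MemP δ f) : 0 ≤ deltaT δ F := by
  rcases Finset.eq_empty_or_nonempty F with rfl | hF
  · rw [deltaT, if_pos rfl]
  · rw [deltaT_of_ne hF]
    exact le_csSup (DTset_bddAbove hδ hF hP) (zero_mem_DTset hδ F)

lemma deltaT_mono [Nonempty X] (hδ : IsDiversity δ) {F F' : Finset (Finset X → ℝ)}
    (hsub : F ⊆ F') (hP' : ∀ f ∈ F', MemP δ f) : deltaT δ F ≤ deltaT δ F' := by
  rcases Finset.eq_empty_or_nonempty F with rfl | hF
  · rw [deltaT, if_pos rfl]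
    exact deltaT_nonneg hδ hP'
  · have hF' : F'.Nonempty := hF.mono hsub
    refine deltaT_le hδ hF fun 𝓐 m hm => ?_
    have := le_deltaT hδ hF' hP' 𝓐 m (fun B hB => hsub (hm B hB))
    linarith
end DT

section Kappa
open DivAux
variable {X : Type*} {δ : Finset X → ℝ}

def kappa (δ : Finset X → ℝ) (x : X) : Finset X → ℝ := fun A => δ (insert x A)

lemma union_singleton_eq_insert (A : Finset X) (x : X) : A ∪ {x} = insert x A := by
  rw [Finset.union_comm]; rfl

lemma kappa_memP (hδ : IsDiversity δ) (x : X) : MemP δ (kappa δ x) := by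
  constructor
  · show δ (insert x ∅) = 0
    have : (insert x ∅ : Finset X) = {x} := rfl
    rw [this, div_single hδ]
  · intro 𝓐
    have hstar := div_star hδ 𝓐 id (fun _ => x) {x} (fun _ _ => Finset.mem_singleton_self x)
    have hmono : δ (𝓐.sup id) ≤ δ ({x} ∪ 𝓐.sup id) := div_mono hδ Finset.subset_union_right
    have hsingle : δ ({x} : Finset X) = 0 := div_single hδ x
    have hsum : ∑ A ∈ 𝓐, δ (id A ∪ {x}) = ∑ A ∈ 𝓐, kappa δ x A := by
      refine Finset.sum_congr rfl fun A _ => ?_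
      rw [id_eq, union_singleton_eq_insert]
      rfl
    rw [hsum, hsingle] at hstar
    linarith

lemma kappa_memT (hδ : IsDiversity δ) (x : X) : MemT δ (kappa δ x) := by
  refine ⟨kappa_memP hδ x, fun p hp hple => ?_⟩
  have hpx : p {x} = 0 := by
    have h1 := hple {x}
    have h2 : kappa δ x {x} = 0 := by
      show δ (insert x {x}) = 0
      rw [Finset.insert_eq_self.2 (Finset.mem_singleton_self x), div_single hδ]
    have h3 := memP_nonneg hδ.1 hp {x}
    linarith
  funext A
  refine le_antisymm (hple A) ?_
  show δ (insert x A) ≤ p A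
  have hcov := memP_cover hδ.1 hp (insert A ({({x} : Finset X)} : Finset (Finset X))) id
  rw [Finset.sup_insert] at hcov
  have hsup : (id A ⊔ ({({x} : Finset X)} : Finset (Finset X)).sup id) = insert x A := by
    rw [Finset.sup_singleton]
    rw [id_eq, id_eq, Finset.sup_eq_union, union_singleton_eq_insert]
  rw [hsup] at hcov
  have hsumle : ∑ i ∈ insert A ({({x} : Finset X)} : Finset (Finset X)), p (id i)
      ≤ p A + p {x} := by
    have := sum_insert_le_of_nonneg (f := fun B => p (id B))
      (fun B => memP_nonneg hδ.1 hp B) A ({({x} : Finset X)} : Finset (Finset X))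
    rw [Finset.sum_singleton] at this
    simpa using this
  linarith

lemma kappa_inj (hδ : IsDiversity δ) : Function.Injective (kappa δ) := by
  intro x y h
  by_contra hxy
  have h1 : kappa δ x {y} = kappa δ y {y} := by rw [h]
  have h2 : kappa δ y {y} = 0 := by
    show δ (insert y {y}) = 0
    rw [Finset.insert_eq_self.2 (Finset.mem_singleton_self y), div_single hδ]
  have h3 : δ (insert x {y}) = 0 := by
    calc δ (insert x {y}) = kappa δ x {y} := rfl
      _ = kappa δ y {y} := by rw [h]
      _ = 0 := h2
  have h4 := (hδ.2.1 _).1 h3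
  have h5 : (insert x {y} : Finset X).card = 2 := by
    rw [Finset.card_insert_of_notMem (by simp [hxy])]
    simp
  omega

lemma sup_image_singleton (A : Finset X) :
    (A.image fun a => ({a} : Finset X)).sup id = A := by
  ext x
  simp only [Finset.mem_sup, Finset.mem_image, id]
  constructor
  · rintro ⟨B, ⟨a, ha, rfl⟩, hx⟩
    simp only [Finset.mem_singleton] at hx
    subst hx; exact ha
  · intro hx
    exact ⟨{x}, ⟨x, hx, rfl⟩, Finset.mem_singleton_self x⟩

lemma sup_split (𝓐 : Finset (Finset X)) (p : Finset X → Prop) :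
    𝓐.sup id = (𝓐.filter p).sup id ∪ (𝓐.filter fun B => ¬ p B).sup id := by
  classical
  conv_lhs => rw [← Finset.filter_union_filter_not_eq p 𝓐]
  rw [Finset.sup_union, Finset.sup_eq_union]

lemma deltaT_kappa [Nonempty X] (hδ : IsDiversity δ) (A : Finset X) :
    deltaT δ (A.image (kappa δ)) = δ A := by
  classical
  rcases Finset.eq_empty_or_nonempty A with rfl | hA
  · simp [deltaT, div_empty hδ]
  · have hP : ∀ f ∈ A.image (kappa δ), MemP δ f := by
      intro f hf
      obtain ⟨a, _, rfl⟩ := Finset.mem_image.1 hf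
      exact kappa_memP hδ a
    have hFne : (A.image (kappa δ)).Nonempty := hA.image _
    apply le_antisymm
    · refine deltaT_le hδ hFne fun 𝓐 m hm => ?_
      set asel : Finset X → X := fun B =>
        if h : ∃ a ∈ A, kappa δ a = m B then h.choose else Classical.arbitrary X with hasel
      have haselspec : ∀ B ∈ 𝓐, asel B ∈ A ∧ kappa δ (asel B) = m B := by
        intro B hB
        obtain ⟨a, ha, he⟩ := Finset.mem_image.1 (hm B hB)
        have hex : ∃ a ∈ A, kappa δ a = m B := ⟨a, ha, he⟩
        rw [hasel]
        simp only [dif_pos hex]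
        exact ⟨hex.choose_spec.1, hex.choose_spec.2⟩
      have hstar := div_star hδ 𝓐 id asel A (fun B hB => (haselspec B hB).1)
      have hmono : δ (𝓐.sup id) ≤ δ (A ∪ 𝓐.sup id) := div_mono hδ Finset.subset_union_right
      have hsum : ∑ B ∈ 𝓐, δ (id B ∪ {asel B}) = ∑ B ∈ 𝓐, (m B) B := by
        refine Finset.sum_congr rfl fun B hB => ?_
        rw [id_eq, union_singleton_eq_insert, ← (haselspec B hB).2]
        rfl
      rw [hsum] at hstar
      linarith
    · set pick : Finset X → X := fun B =>
        if h : ∃ a ∈ A, B = {a} then h.choose else Classical.arbitrary X with hpick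
      have hpickspec : ∀ B ∈ A.image (fun a => ({a} : Finset X)), pick B ∈ A ∧ B = {pick B} := by
        intro B hB
        obtain ⟨a, ha, he⟩ := Finset.mem_image.1 hB
        have hex : ∃ a ∈ A, B = {a} := ⟨a, ha, he.symm⟩
        rw [hpick]
        simp only [dif_pos hex]
        exact ⟨hex.choose_spec.1, hex.choose_spec.2⟩
      have h1 := le_deltaT hδ hFne hP (A.image fun a => ({a} : Finset X))
        (fun B => kappa δ (pick B)) ?_
      · rw [sup_image_singleton] at h1
        have hzero : ∑ B ∈ A.image (fun a => ({a} : Finset X)), kappa δ (pick B) B = 0 := by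
          refine Finset.sum_eq_zero fun B hB => ?_
          have hs := (hpickspec B hB).2
          show δ (insert (pick B) B) = 0
          generalize hq : pick B = q at hs ⊢
          rw [hs, Finset.insert_eq_self.2 (Finset.mem_singleton_self _), div_single hδ]
        rw [hzero] at h1
        linarith
      · intro B hB
        exact Finset.mem_image_of_mem _ (hpickspec B hB).1

lemma deltaT_K1 [Nonempty X] (hδ : IsDiversity δ) {f : Finset X → ℝ} (hf : MemT δ f)
    (A : Finset X) : deltaT δ (insert f (A.image (kappa δ))) = f A := by
  classical
  have hP : ∀ g ∈ insert f (A.image (kappa δ)), MemP δ g := by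
    intro g hg
    rcases Finset.mem_insert.1 hg with rfl | hg
    · exact hf.1
    · obtain ⟨a, _, rfl⟩ := Finset.mem_image.1 hg
      exact kappa_memP hδ a
  have hFne : (insert f (A.image (kappa δ))).Nonempty := ⟨f, Finset.mem_insert_self _ _⟩
  apply le_antisymm
  · refine deltaT_le hδ hFne fun 𝓐 m hm => ?_
    set 𝓐₁ := 𝓐.filter (fun B => m B = f) with h𝓐₁
    set 𝓐₂ := 𝓐.filter (fun B => ¬ (m B = f)) with h𝓐₂
    have hm₂ : ∀ B ∈ 𝓐₂, m B ∈ A.image (kappa δ) := by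
      intro B hB
      have h1 := Finset.mem_filter.1 hB
      rcases Finset.mem_insert.1 (hm B h1.1) with he | hmem
      · exact absurd he h1.2
      · exact hmem
    set asel : Finset X → X := fun B =>
      if h : ∃ a ∈ A, kappa δ a = m B then h.choose else Classical.arbitrary X with hasel
    have haselspec : ∀ B ∈ 𝓐₂, asel B ∈ A ∧ kappa δ (asel B) = m B := by
      intro B hB
      obtain ⟨a, ha, he⟩ := Finset.mem_image.1 (hm₂ B hB)
      have hex : ∃ a ∈ A, kappa δ a = m B := ⟨a, ha, he⟩
      rw [hasel]
      simp only [dif_pos hex]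
      exact ⟨hex.choose_spec.1, hex.choose_spec.2⟩
    have hsplit : 𝓐.sup id = 𝓐₁.sup id ∪ 𝓐₂.sup id := sup_split 𝓐 _
    have hmono : δ (𝓐.sup id) ≤ δ ((A ∪ 𝓐₁.sup id) ∪ 𝓐₂.sup id) := by
      refine div_mono hδ ?_
      rw [hsplit]
      intro x hx
      rcases Finset.mem_union.1 hx with h | h
      · exact Finset.mem_union_left _ (Finset.mem_union_right _ h)
      · exact Finset.mem_union_right _ h
    have hstar := div_star hδ 𝓐₂ id asel (A ∪ 𝓐₁.sup id)
      (fun B hB => Finset.mem_union_left _ (haselspec B hB).1)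
    have hcov : δ (A ∪ 𝓐₁.sup id) ≤ f A + ∑ B ∈ 𝓐₁, f B := by
      have h1 := memP_cover hδ.1 hf.1 (insert A 𝓐₁) id
      rw [Finset.sup_insert] at h1
      have h2 := sum_insert_le_of_nonneg (f := fun B => f (id B))
        (fun B => memP_nonneg hδ.1 hf.1 B) A 𝓐₁
      simp only [id_eq] at h1 h2
      have h3 : (A ⊔ 𝓐₁.sup id) = A ∪ 𝓐₁.sup id := rfl
      rw [h3] at h1
      linarith
    have hs₁ : ∑ B ∈ 𝓐₁, f B = ∑ B ∈ 𝓐₁, (m B) B := by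
      refine Finset.sum_congr rfl fun B hB => ?_
      rw [(Finset.mem_filter.1 hB).2]
    have hs₂ : ∑ B ∈ 𝓐₂, δ (id B ∪ {asel B}) = ∑ B ∈ 𝓐₂, (m B) B := by
      refine Finset.sum_congr rfl fun B hB => ?_
      rw [id_eq, union_singleton_eq_insert, ← (haselspec B hB).2]
      rfl
    have hstot : ∑ B ∈ 𝓐₁, (m B) B + ∑ B ∈ 𝓐₂, (m B) B = ∑ B ∈ 𝓐, (m B) B :=
      Finset.sum_filter_add_sum_filter_not 𝓐 _ _
    rw [hs₂] at hstar
    linarith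
  · refine le_of_forall_pos_le_add fun ε hε => ?_
    obtain ⟨𝓖, h𝓖⟩ := memT_tight (div_empty hδ) hf A hε
    set pick : Finset X → X := fun B =>
      if h : ∃ a ∈ A, B = {a} then h.choose else Classical.arbitrary X with hpick
    have hpickspec : ∀ B ∈ A.image (fun a => ({a} : Finset X)), pick B ∈ A ∧ B = {pick B} := by
      intro B hB
      obtain ⟨a, ha, he⟩ := Finset.mem_image.1 hB
      have hex : ∃ a ∈ A, B = {a} := ⟨a, ha, he.symm⟩
      rw [hpick]
      simp only [dif_pos hex]
      exact ⟨hex.choose_spec.1, hex.choose_spec.2⟩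
    set 𝓒 := 𝓖 ∪ A.image (fun a => ({a} : Finset X)) with h𝓒
    set m : Finset X → (Finset X → ℝ) := fun B => if B ∈ 𝓖 then f else kappa δ (pick B) with hmdef
    have h1 := le_deltaT hδ hFne hP 𝓒 m ?_
    · have hsup : 𝓒.sup id = A ∪ 𝓖.sup id := by
        rw [h𝓒, Finset.sup_union, sup_image_singleton, Finset.sup_eq_union, Finset.union_comm]
      have hsum : ∑ B ∈ 𝓒, (m B) B ≤ ∑ B ∈ 𝓖, f B := by
        have hre : 𝓒 = 𝓖 ∪ (A.image (fun a => ({a} : Finset X)) \ 𝓖) := by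
          rw [h𝓒, Finset.union_sdiff_self_eq_union]
        rw [hre, Finset.sum_union Finset.disjoint_sdiff]
        have hz : ∑ B ∈ A.image (fun a => ({a} : Finset X)) \ 𝓖, (m B) B = 0 := by
          refine Finset.sum_eq_zero fun B hB => ?_
          have hB' := Finset.mem_sdiff.1 hB
          rw [hmdef]
          simp only [if_neg hB'.2]
          have hs := (hpickspec B hB'.1).2
          show δ (insert (pick B) B) = 0
          generalize hq : pick B = q at hs ⊢
          rw [hs, Finset.insert_eq_self.2 (Finset.mem_singleton_self _), div_single hδ]
        have hg : ∑ B ∈ 𝓖, (m B) B = ∑ B ∈ 𝓖, f B := by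
          refine Finset.sum_congr rfl fun B hB => ?_
          rw [hmdef]; simp only [if_pos hB]
        rw [hz, hg]
        linarith
      rw [hsup] at h1
      have : δ (A ∪ 𝓖.sup id) - ∑ B ∈ 𝓖, f B ≤ deltaT δ (insert f (A.image (kappa δ))) := by
        have h2 : δ (A ∪ 𝓖.sup id) - ∑ B ∈ 𝓒, (m B) B ≤ deltaT δ (insert f (A.image (kappa δ))) := h1
        linarith
      linarith
    · intro B hB
      rw [hmdef]
      by_cases hBG : B ∈ 𝓖
      · simp only [if_pos hBG]
        exact Finset.mem_insert_self _ _
      · simp only [if_neg hBG]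
        have hB' : B ∈ A.image (fun a => ({a} : Finset X)) := by
          rcases Finset.mem_union.1 hB with h | h
          · exact absurd h hBG
          · exact h
        exact Finset.mem_insert_of_mem (Finset.mem_image_of_mem _ (hpickspec B hB').1)
end Kappa

section Triangle
open DivAux
variable {X : Type*} {δ : Finset X → ℝ}

lemma deltaT_triangle [Nonempty X] (hδ : IsDiversity δ) {g : Finset X → ℝ} (hg : MemT δ g)
    {FA FC : Finset (Finset X → ℝ)} (hA : ∀ f ∈ FA, MemP δ f) (hC : ∀ f ∈ FC, MemP δ f) :
    deltaT δ (FA ∪ FC) ≤ deltaT δ (insert g FA) + deltaT δ (insert g FC) := by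
  classical
  have hPA : ∀ f ∈ insert g FA, MemP δ f := by
    intro f hf
    rcases Finset.mem_insert.1 hf with rfl | hf
    · exact hg.1
    · exact hA f hf
  have hPC : ∀ f ∈ insert g FC, MemP δ f := by
    intro f hf
    rcases Finset.mem_insert.1 hf with rfl | hf
    · exact hg.1
    · exact hC f hf
  rcases Finset.eq_empty_or_nonempty (FA ∪ FC) with he | hne
  · rw [he, deltaT, if_pos rfl]
    have := deltaT_nonneg hδ hPA
    have := deltaT_nonneg hδ hPC
    linarith
  · refine deltaT_le hδ hne fun 𝓐 m hm => ?_
    have hmP : ∀ B ∈ 𝓐, MemP δ (m B) := by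
      intro B hB
      rcases Finset.mem_union.1 (hm B hB) with h | h
      · exact hA _ h
      · exact hC _ h
    have hmnn : ∀ B ∈ 𝓐, 0 ≤ (m B) B := fun B hB => memP_nonneg hδ.1 (hmP B hB) B
    refine le_of_forall_pos_le_add fun ε hε => ?_
    set 𝓐₁ := 𝓐.filter (fun B => m B ∈ FA) with h𝓐₁
    set 𝓐₂ := 𝓐 \ 𝓐₁ with h𝓐₂
    have hsub1 : 𝓐₁ ⊆ 𝓐 := Finset.filter_subset _ _
    have hsub2 : 𝓐₂ ⊆ 𝓐 := Finset.sdiff_subset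
    have hm₂ : ∀ B ∈ 𝓐₂, m B ∈ FC := by
      intro B hB
      have h1 := Finset.mem_sdiff.1 hB
      rcases Finset.mem_union.1 (hm B h1.1) with h | h
      · exact absurd (Finset.mem_filter.2 ⟨h1.1, h⟩) h1.2
      · exact h
    set A₁ := 𝓐₁.sup id with hA₁
    obtain ⟨𝓖, h𝓖⟩ := memT_tight (div_empty hδ) hg A₁ hε
    -- side 1
    have hside1 : g A₁ - ∑ B ∈ 𝓐₁, (m B) B - ε ≤ deltaT δ (insert g FA) := by
      set m₁ : Finset X → (Finset X → ℝ) := fun B => if B ∈ 𝓖 then g else m B with hm₁def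
      have h1 := le_deltaT hδ (⟨g, Finset.mem_insert_self _ _⟩ : (insert g FA).Nonempty) hPA
        (𝓐₁ ∪ 𝓖) m₁ ?_
      · have hsup : (𝓐₁ ∪ 𝓖).sup id = A₁ ∪ 𝓖.sup id := by
          rw [Finset.sup_union, hA₁, Finset.sup_eq_union]
        have hsum : ∑ B ∈ 𝓐₁ ∪ 𝓖, (m₁ B) B ≤ ∑ B ∈ 𝓖, g B + ∑ B ∈ 𝓐₁, (m B) B := by
          have hre : 𝓐₁ ∪ 𝓖 = 𝓖 ∪ (𝓐₁ \ 𝓖) := by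
            rw [Finset.union_sdiff_self_eq_union, Finset.union_comm]
          rw [hre, Finset.sum_union Finset.disjoint_sdiff]
          have e1 : ∑ B ∈ 𝓖, (m₁ B) B = ∑ B ∈ 𝓖, g B := by
            refine Finset.sum_congr rfl fun B hB => ?_
            rw [hm₁def]; simp only [if_pos hB]
          have e2 : ∑ B ∈ 𝓐₁ \ 𝓖, (m₁ B) B ≤ ∑ B ∈ 𝓐₁, (m B) B := by
            have e3 : ∑ B ∈ 𝓐₁ \ 𝓖, (m₁ B) B = ∑ B ∈ 𝓐₁ \ 𝓖, (m B) B := by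
              refine Finset.sum_congr rfl fun B hB => ?_
              rw [hm₁def]; simp only [if_neg (Finset.mem_sdiff.1 hB).2]
            rw [e3]
            refine Finset.sum_le_sum_of_subset_of_nonneg (Finset.sdiff_subset) ?_
            intro B hB _
            exact hmnn B (hsub1 hB)
          linarith
        rw [hsup] at h1
        linarith
      · intro B hB
        rw [hm₁def]
        by_cases hBG : B ∈ 𝓖
        · simp only [if_pos hBG]; exact Finset.mem_insert_self _ _
        · simp only [if_neg hBG]
          have hB' : B ∈ 𝓐₁ := by
            rcases Finset.mem_union.1 hB with h | h
            · exact h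
            · exact absurd h hBG
          exact Finset.mem_insert_of_mem (Finset.mem_filter.1 hB').2
    -- side 2
    have hside2 : δ (𝓐.sup id) - g A₁ - ∑ B ∈ 𝓐₂, (m B) B ≤ deltaT δ (insert g FC) := by
      set m₂ : Finset X → (Finset X → ℝ) := fun B => if B = A₁ then g else m B with hm₂def
      have h1 := le_deltaT hδ (⟨g, Finset.mem_insert_self _ _⟩ : (insert g FC).Nonempty) hPC
        (insert A₁ 𝓐₂) m₂ ?_
      · have hsup : (insert A₁ 𝓐₂).sup id = 𝓐.sup id := by
          rw [Finset.sup_insert]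
          conv_rhs => rw [← Finset.union_sdiff_of_subset hsub1]
          rw [Finset.sup_union, ← h𝓐₂, id_eq, hA₁]
        have hsum : ∑ B ∈ insert A₁ 𝓐₂, (m₂ B) B ≤ g A₁ + ∑ B ∈ 𝓐₂, (m B) B := by
          by_cases hmem : A₁ ∈ 𝓐₂
          · rw [Finset.insert_eq_self.2 hmem]
            rw [← Finset.add_sum_erase _ _ hmem]
            have e1 : (m₂ A₁) A₁ = g A₁ := by rw [hm₂def]; simp
            have e2 : ∑ B ∈ 𝓐₂.erase A₁, (m₂ B) B ≤ ∑ B ∈ 𝓐₂, (m B) B := by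
              have e3 : ∑ B ∈ 𝓐₂.erase A₁, (m₂ B) B = ∑ B ∈ 𝓐₂.erase A₁, (m B) B := by
                refine Finset.sum_congr rfl fun B hB => ?_
                have hne2 : ¬ (B = A₁) := Finset.ne_of_mem_erase hB
                rw [hm₂def]; simp only [if_neg hne2]
              rw [e3]
              refine Finset.sum_le_sum_of_subset_of_nonneg (Finset.erase_subset _ _) ?_
              intro B hB _
              exact hmnn B (hsub2 hB)
            linarith
          · rw [Finset.sum_insert hmem]
            have e1 : (m₂ A₁) A₁ = g A₁ := by rw [hm₂def]; simp
            have e2 : ∑ B ∈ 𝓐₂, (m₂ B) B = ∑ B ∈ 𝓐₂, (m B) B := by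
              refine Finset.sum_congr rfl fun B hB => ?_
              have hne2 : ¬ (B = A₁) := fun h => hmem (h ▸ hB)
              rw [hm₂def]; simp only [if_neg hne2]
            rw [e1, e2]
        rw [hsup] at h1
        linarith
      · intro B hB
        rw [hm₂def]
        by_cases hBA : B = A₁
        · simp only [if_pos hBA]; exact Finset.mem_insert_self _ _
        · simp only [if_neg hBA]
          have hB' : B ∈ 𝓐₂ := by
            rcases Finset.mem_insert.1 hB with h | h
            · exact absurd h hBA
            · exact h
          exact Finset.mem_insert_of_mem (hm₂ B hB')
    have hstot : ∑ B ∈ 𝓐₂, (m B) B + ∑ B ∈ 𝓐₁, (m B) B = ∑ B ∈ 𝓐, (m B) B := by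
      rw [h𝓐₂]
      exact Finset.sum_sdiff hsub1
    linarith

lemma deltaT_peel [Nonempty X] (hδ : IsDiversity δ) (S : Finset (Finset X → ℝ))
    (hS : ∀ f ∈ S, MemT δ f) (Asel : (Finset X → ℝ) → Finset X)
    (W : Finset (Finset X → ℝ)) (hW : ∀ f ∈ W, MemP δ f) :
    deltaT δ ((S.sup fun f => (Asel f).image (kappa δ)) ∪ W)
      ≤ (∑ f ∈ S, f (Asel f)) + deltaT δ (S ∪ W) := by
  classical
  induction S using Finset.induction_on generalizing W with
  | empty => simp
  | @insert f S hf ih =>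
    have hfT : MemT δ f := hS f (Finset.mem_insert_self _ _)
    have hST : ∀ p ∈ S, MemT δ p := fun p hp => hS p (Finset.mem_insert_of_mem hp)
    rw [Finset.sup_insert, Finset.sum_insert hf]
    have hPim : ∀ p ∈ (Asel f).image (kappa δ), MemP δ p := by
      intro p hp
      obtain ⟨a, _, rfl⟩ := Finset.mem_image.1 hp
      exact kappa_memP hδ a
    have hPrest : ∀ p ∈ (S.sup fun f => (Asel f).image (kappa δ)) ∪ W, MemP δ p := by
      intro p hp
      rcases Finset.mem_union.1 hp with h | h
      · obtain ⟨q, hq, hpq⟩ := Finset.mem_sup.1 h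
        obtain ⟨a, _, rfl⟩ := Finset.mem_image.1 hpq
        exact kappa_memP hδ a
      · exact hW p h
    have heq0 : ((Asel f).image (kappa δ) ⊔ S.sup fun f => (Asel f).image (kappa δ)) ∪ W
        = (Asel f).image (kappa δ) ∪ ((S.sup fun f => (Asel f).image (kappa δ)) ∪ W) := by
      rw [Finset.sup_eq_union, Finset.union_assoc]
    rw [heq0]
    have htri := deltaT_triangle hδ hfT hPim hPrest
    have hK1 : deltaT δ (insert f ((Asel f).image (kappa δ))) = f (Asel f) :=
      deltaT_K1 hδ hfT (Asel f)
    have heq1 : insert f ((S.sup fun f => (Asel f).image (kappa δ)) ∪ W)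
        = (S.sup fun f => (Asel f).image (kappa δ)) ∪ (insert f W) := by
      rw [Finset.union_insert]
    have hih := ih hST (insert f W) ?_
    · have heq2 : S ∪ insert f W = insert f S ∪ W := by
        rw [Finset.union_insert, Finset.insert_union]
      rw [heq2] at hih
      rw [heq1] at htri
      rw [hK1] at htri
      linarith
    · intro p hp
      rcases Finset.mem_insert.1 hp with rfl | hp
      · exact hfT.1
      · exact hW p hp
end Triangle

section KeyTight
open DivAux
variable {X : Type*} {δ : Finset X → ℝ}

lemma image_sup' {α β γ : Type*} [DecidableEq β] [DecidableEq γ]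
    (S : Finset α) (v : α → Finset β) (g : β → γ) :
    (S.sup v).image g = S.sup (fun a => (v a).image g) := by
  ext c
  simp only [Finset.mem_image, Finset.mem_sup]
  tauto

set_option maxHeartbeats 2000000 in
lemma key_tight [Nonempty X] (hδ : IsDiversity δ)
    (G : Finset {f : Finset X → ℝ // MemT δ f} → ℝ)
    (hGT : MemT (fun F : Finset {f : Finset X → ℝ // MemT δ f} =>
      deltaT δ (F.image (fun z => z.val))) G)
    (hfun : Finset X → ℝ)
    (hhfun : ∀ A : Finset X,
      hfun A = G (A.image (fun x => (⟨kappa δ x, kappa_memT hδ x⟩ :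
        {f : Finset X → ℝ // MemT δ f}))))
    (A₀ : Finset X) {ε : ℝ} (hε : 0 < ε) :
    ∃ 𝓐 : Finset (Finset X),
      hfun A₀ + ∑ B ∈ 𝓐, hfun B ≤ δ (A₀ ∪ 𝓐.sup id) + ε := by
  classical
  letI : DecidableEq {f : Finset X → ℝ // MemT δ f} := fun a b => Classical.propDecidable _
  haveI hsing : Subsingleton (DecidableEq {f : Finset X → ℝ // MemT δ f}) := by
    constructor
    intro a b
    funext x y
    exact Subsingleton.elim _ _
  set b₂ : Finset {f : Finset X → ℝ // MemT δ f} → ℝ :=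
    fun F => deltaT δ (F.image (fun z => z.val)) with hb₂
  set κ₂ : X → {f : Finset X → ℝ // MemT δ f} :=
    fun x => ⟨kappa δ x, kappa_memT hδ x⟩ with hκ₂
  have hvalP : ∀ (F : Finset {f : Finset X → ℝ // MemT δ f}),
      ∀ f ∈ F.image (fun z => z.val), MemP δ f := by
    intro F f hf
    obtain ⟨z, _, rfl⟩ := Finset.mem_image.1 hf
    exact z.2.1
  have hb₂0 : b₂ ∅ = 0 := by rw [hb₂]; simp [deltaT]
  have hb₂nn : ∀ F, 0 ≤ b₂ F := fun F => deltaT_nonneg hδ (hvalP F)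
  have hGnn : ∀ F, 0 ≤ G F := fun F => le_trans (hb₂nn F) (memP_le hGT.1 F)
  have hhfun' : ∀ A : Finset X, hfun A = G (A.image κ₂) := by
    intro A
    rw [hhfun A]
    exact congrArg G (congrArg (fun i => @Finset.image _ _ i _ A) (Subsingleton.elim _ _))
  rcases Finset.eq_empty_or_nonempty A₀ with rfl | hA₀
  · refine ⟨∅, ?_⟩
    simp only [hhfun']
    have h1 : G ((∅ : Finset X).image κ₂) = 0 := by
      rw [Finset.image_empty]; exact hGT.1.1
    rw [h1]
    simp only [Finset.sum_empty, Finset.sup_empty]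
    have h2 : ((∅ : Finset X) ∪ (⊥ : Finset X)) = ∅ := by simp
    rw [h2, div_empty hδ]
    linarith
  -- main case
  set ε5 : ℝ := ε / 5 with hε5
  have hε5pos : 0 < ε5 := by rw [hε5]; exact div_pos hε (by norm_num)
  -- (1) tightness of G at A₀.image κ₂
  obtain ⟨𝓕, h𝓕⟩ := memT_tight hb₂0 hGT (A₀.image κ₂) hε5pos
  -- (2) unfold b₂ value and extract a near-optimal collection
  set Vraw : Finset (Finset X → ℝ) := (𝓕.sup id).image (fun z => z.val) with hVraw
  set T2 : Finset (Finset X → ℝ) := A₀.image (kappa δ) ∪ Vraw with hT2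
  have hT2val : (A₀.image κ₂ ∪ 𝓕.sup id).image (fun z => z.val) = T2 := by
    rw [Finset.image_union, hT2, hVraw, Finset.image_image]
    rfl
  have hT2ne : T2.Nonempty := by
    obtain ⟨a, ha⟩ := hA₀
    exact ⟨kappa δ a, Finset.mem_union_left _ (Finset.mem_image_of_mem _ ha)⟩
  have hT2P : ∀ f ∈ T2, MemP δ f := by
    intro f hf
    rcases Finset.mem_union.1 hf with h | h
    · obtain ⟨a, _, rfl⟩ := Finset.mem_image.1 h
      exact kappa_memP hδ a
    · obtain ⟨z, _, rfl⟩ := Finset.mem_image.1 h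
      exact z.2.1
  have hVrawT : ∀ f ∈ Vraw, MemT δ f := by
    intro f hf
    obtain ⟨z, _, rfl⟩ := Finset.mem_image.1 hf
    exact z.2
  obtain ⟨m, hm⟩ := exists_min_sel hT2ne
  have hmnn : ∀ B, 0 ≤ (m B) B := fun B => memP_nonneg hδ.1 (hT2P _ (hm B).1) B
  have hsSup : deltaT δ T2 - ε5 < deltaT δ T2 := by linarith
  rw [deltaT_of_ne hT2ne] at hsSup
  obtain ⟨rv, hrvmem, hrvlt⟩ := exists_lt_of_lt_csSup ⟨0, zero_mem_DTset hδ T2⟩ hsSup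
  obtain ⟨𝓑, rfl⟩ := hrvmem
  rw [← deltaT_of_ne hT2ne] at hrvlt
  have hBval : deltaT δ T2 - ε5 < δ (𝓑.sup id) - ∑ B ∈ 𝓑, (m B) B := by
    have hs : ∑ B ∈ 𝓑, sInf ((fun f => f B) '' (T2 : Set (Finset X → ℝ)))
        = ∑ B ∈ 𝓑, (m B) B :=
      Finset.sum_congr rfl fun B _ => ((hm B).2).symm
    rw [hs] at hrvlt
    exact hrvlt
  have hstep1 : G (A₀.image κ₂) + ∑ F ∈ 𝓕, G F
      ≤ δ (𝓑.sup id) - ∑ B ∈ 𝓑, (m B) B + 2 * ε5 := by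
    have h1 : b₂ (A₀.image κ₂ ∪ 𝓕.sup id) = deltaT δ T2 := congrArg (deltaT δ) hT2val
    calc G (A₀.image κ₂) + ∑ F ∈ 𝓕, G F
        ≤ b₂ (A₀.image κ₂ ∪ 𝓕.sup id) + ε5 := h𝓕
      _ = deltaT δ T2 + ε5 := by rw [h1]
      _ ≤ δ (𝓑.sup id) - ∑ B ∈ 𝓑, (m B) B + 2 * ε5 := by linarith [hBval]
  -- (3) split 𝓑 and pull off the kappa-anchored blocks
  set 𝓑v := 𝓑.filter (fun B => m B ∈ Vraw) with h𝓑v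
  set 𝓑a := 𝓑 \ 𝓑v with h𝓑a
  have hsubv : 𝓑v ⊆ 𝓑 := Finset.filter_subset _ _
  have hma : ∀ B ∈ 𝓑a, m B ∈ A₀.image (kappa δ) := by
    intro B hB
    have h1 := Finset.mem_sdiff.1 hB
    rcases Finset.mem_union.1 ((hm B).1) with h | h
    · exact h
    · exact absurd (Finset.mem_filter.2 ⟨h1.1, h⟩) h1.2
  set asel : Finset X → X := fun B =>
    if h : ∃ a ∈ A₀, kappa δ a = m B then h.choose else Classical.arbitrary X with hasel
  have haselspec : ∀ B ∈ 𝓑a, asel B ∈ A₀ ∧ kappa δ (asel B) = m B := by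
    intro B hB
    obtain ⟨a, ha, he⟩ := Finset.mem_image.1 (hma B hB)
    have hex : ∃ a ∈ A₀, kappa δ a = m B := ⟨a, ha, he⟩
    rw [hasel]
    simp only [dif_pos hex]
    exact ⟨hex.choose_spec.1, hex.choose_spec.2⟩
  have hstar := div_star hδ 𝓑a id asel (A₀ ∪ 𝓑v.sup id)
    (fun B hB => Finset.mem_union_left _ (haselspec B hB).1)
  have hstara : ∑ B ∈ 𝓑a, δ (id B ∪ {asel B}) = ∑ B ∈ 𝓑a, (m B) B := by
    refine Finset.sum_congr rfl fun B hB => ?_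
    rw [id_eq, union_singleton_eq_insert, ← (haselspec B hB).2]
    rfl
  have hmono : δ (𝓑.sup id) ≤ δ ((A₀ ∪ 𝓑v.sup id) ∪ 𝓑a.sup id) := by
    refine div_mono hδ ?_
    intro x hx
    obtain ⟨B, hB, hxB⟩ := Finset.mem_sup.1 hx
    by_cases hBv : B ∈ 𝓑v
    · exact Finset.mem_union_left _ (Finset.mem_union_right _
        (Finset.mem_sup.2 ⟨B, hBv, hxB⟩))
    · exact Finset.mem_union_right _
        (Finset.mem_sup.2 ⟨B, Finset.mem_sdiff.2 ⟨hB, hBv⟩, hxB⟩)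
  have hsplitsum : ∑ B ∈ 𝓑a, (m B) B + ∑ B ∈ 𝓑v, (m B) B = ∑ B ∈ 𝓑, (m B) B := by
    rw [h𝓑a]
    exact Finset.sum_sdiff hsubv
  have hspade : G (A₀.image κ₂) + ∑ F ∈ 𝓕, G F + ∑ B ∈ 𝓑v, (m B) B
      ≤ δ (A₀ ∪ 𝓑v.sup id) + 2 * ε5 := by
    rw [hstara] at hstar
    linarith
  -- (4) fiber the Vraw-charged part
  set M := 𝓑v.image m with hM
  set Afn : (Finset X → ℝ) → Finset X :=
    fun f => (𝓑v.filter (fun B => m B = f)).sup id with hAfn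
  have hMT : ∀ f ∈ M, MemT δ f := by
    intro f hf
    obtain ⟨B, hB, rfl⟩ := Finset.mem_image.1 hf
    exact hVrawT _ (Finset.mem_filter.1 hB).2
  have hMsum : ∑ f ∈ M, f (Afn f) ≤ ∑ B ∈ 𝓑v, (m B) B := by
    have h1 : ∑ f ∈ M, ∑ B ∈ 𝓑v.filter (fun B => m B = f), (m B) B = ∑ B ∈ 𝓑v, (m B) B :=
      Finset.sum_fiberwise_of_maps_to (fun B hB => Finset.mem_image_of_mem m hB) _
    rw [← h1]
    refine Finset.sum_le_sum fun f hf => ?_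
    have h2 : ∑ B ∈ 𝓑v.filter (fun B => m B = f), (m B) B
        = ∑ B ∈ 𝓑v.filter (fun B => m B = f), f B := by
      refine Finset.sum_congr rfl fun B hB => ?_
      rw [(Finset.mem_filter.1 hB).2]
    rw [h2, hAfn]
    exact memT_subadd_sup (div_empty hδ) hδ.1 (hMT f hf) _
  have hMsup : M.sup Afn = 𝓑v.sup id := fiber_sup 𝓑v m id
  -- (5) assignment of fibers to members of 𝓕
  set Fsel : (Finset X → ℝ) → Finset {f : Finset X → ℝ // MemT δ f} :=
    fun f => if h : ∃ F ∈ 𝓕, ∃ z ∈ F, z.val = f then h.choose else ∅ with hFsel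
  have hFselspec : ∀ f ∈ M, Fsel f ∈ 𝓕 ∧ ∃ z ∈ Fsel f, z.val = f := by
    intro f hf
    have hfV : f ∈ Vraw := by
      obtain ⟨B, hB, rfl⟩ := Finset.mem_image.1 hf
      exact (Finset.mem_filter.1 hB).2
    obtain ⟨z, hz, rfl⟩ := Finset.mem_image.1 hfV
    obtain ⟨F, hF, hzF⟩ := Finset.mem_sup.1 hz
    have hex : ∃ F ∈ 𝓕, ∃ z' ∈ F, z'.val = z.val := ⟨F, hF, z, hzF, rfl⟩
    rw [hFsel]
    simp only [dif_pos hex]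
    exact ⟨hex.choose_spec.1, hex.choose_spec.2⟩
  set εF : ℝ := ε5 / (𝓕.card + 1) with hεF
  have hcpos : (0:ℝ) < (𝓕.card : ℝ) + 1 := by
    have h0 := Nat.cast_nonneg (α := ℝ) 𝓕.card
    linarith
  have hεFpos : 0 < εF := by rw [hεF]; exact div_pos hε5pos hcpos
  -- (6) CLAIM L
  have hclaimL : ∀ F ∈ 𝓕,
      G (((M.filter (fun f => Fsel f = F)).sup Afn).image κ₂)
        ≤ G F + (∑ f ∈ M.filter (fun f => Fsel f = F), f (Afn f)) + εF := by
    intro F hF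
    set MF := M.filter (fun f => Fsel f = F) with hMF
    set UF := MF.sup Afn with hUF
    obtain ⟨𝓖, h𝓖⟩ := memT_tight hb₂0 hGT (UF.image κ₂) hεFpos
    set Wraw : Finset (Finset X → ℝ) := (𝓖.sup id).image (fun z => z.val) with hWraw
    have hWrawP : ∀ f ∈ Wraw, MemP δ f := by
      intro f hf
      obtain ⟨z, _, rfl⟩ := Finset.mem_image.1 hf
      exact z.2.1
    have hMFT : ∀ f ∈ MF, MemT δ f := fun f hf => hMT f (Finset.mem_filter.1 hf).1
    -- b₂ value
    have hval1 : (UF.image κ₂ ∪ 𝓖.sup id).image (fun z => z.val)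
        = UF.image (kappa δ) ∪ Wraw := by
      rw [Finset.image_union, hWraw, Finset.image_image]
      rfl
    -- peel
    have hUFim : UF.image (kappa δ) = MF.sup (fun f => (Afn f).image (kappa δ)) := by
      rw [hUF]
      exact image_sup' MF Afn (kappa δ)
    have hpeel := deltaT_peel hδ MF hMFT Afn Wraw hWrawP
    -- monotone into F
    have hsubF : MF ∪ Wraw ⊆ F.image (fun z => z.val) ∪ Wraw := by
      refine Finset.union_subset_union ?_ (Finset.Subset.refl _)
      intro f hf
      obtain ⟨z, hzF, hzv⟩ := (hFselspec f (Finset.mem_filter.1 hf).1).2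
      have hFeq : Fsel f = F := (Finset.mem_filter.1 hf).2
      rw [hFeq] at hzF
      exact Finset.mem_image.2 ⟨z, hzF, hzv⟩
    have hPbig : ∀ f ∈ F.image (fun z => z.val) ∪ Wraw, MemP δ f := by
      intro f hf
      rcases Finset.mem_union.1 hf with h | h
      · obtain ⟨z, _, rfl⟩ := Finset.mem_image.1 h
        exact z.2.1
      · exact hWrawP f h
    have hmono2 := deltaT_mono hδ hsubF hPbig
    -- cover at level 2
    have hval2 : (F ∪ 𝓖.sup id).image (fun z => z.val)
        = F.image (fun z => z.val) ∪ Wraw := by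
      rw [Finset.image_union, hWraw]
    have hcov : b₂ (F ∪ 𝓖.sup id) ≤ G F + ∑ F' ∈ 𝓖, G F' := by
      have hsupins : (insert F 𝓖).sup id = F ∪ 𝓖.sup id := by
        ext z
        simp only [Finset.mem_sup, Finset.mem_union, Finset.mem_insert, id_eq]
        constructor
        · rintro ⟨I, (rfl | hI), hzI⟩
          · exact Or.inl hzI
          · exact Or.inr ⟨I, hI, hzI⟩
        · rintro (hz | ⟨I, hI, hzI⟩)
          · exact ⟨F, Or.inl rfl, hz⟩
          · exact ⟨I, Or.inr hI, hzI⟩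
      have h1 := hGT.1.2 (insert F 𝓖)
      rw [hsupins] at h1
      have h2 := sum_insert_le_of_nonneg (f := G) hGnn F 𝓖
      linarith
    -- chain together
    have hb₂eq : b₂ (UF.image κ₂ ∪ 𝓖.sup id) = deltaT δ (UF.image (kappa δ) ∪ Wraw) :=
      congrArg (deltaT δ) hval1
    have hb₂eq2 : b₂ (F ∪ 𝓖.sup id) = deltaT δ (F.image (fun z => z.val) ∪ Wraw) :=
      congrArg (deltaT δ) hval2
    rw [hb₂eq] at h𝓖
    rw [hUFim] at h𝓖
    rw [hb₂eq2] at hcov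
    have hG𝓖 : 0 ≤ ∑ F' ∈ 𝓖, G F' := Finset.sum_nonneg fun F' _ => hGnn F'
    linarith [hpeel, hmono2]
  -- (7) assemble
  set 𝓐 := 𝓕.image (fun F => (M.filter (fun f => Fsel f = F)).sup Afn) with h𝓐
  refine ⟨𝓐, ?_⟩
  have hsum𝓐 : ∑ B ∈ 𝓐, G (B.image κ₂)
      ≤ ∑ F ∈ 𝓕, G (((M.filter (fun f => Fsel f = F)).sup Afn).image κ₂) := by
    rw [h𝓐]
    exact sum_image_le_of_nonneg (fun B => hGnn _) 𝓕 _
  have hsumL : ∑ F ∈ 𝓕, G (((M.filter (fun f => Fsel f = F)).sup Afn).image κ₂)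
      ≤ ∑ F ∈ 𝓕, (G F + (∑ f ∈ M.filter (fun f => Fsel f = F), f (Afn f)) + εF) :=
    Finset.sum_le_sum hclaimL
  have hfib : ∑ F ∈ 𝓕, ∑ f ∈ M.filter (fun f => Fsel f = F), f (Afn f)
      = ∑ f ∈ M, f (Afn f) :=
    Finset.sum_fiberwise_of_maps_to (fun f hf => (hFselspec f hf).1) _
  have hcardbd : (𝓕.card : ℝ) * εF ≤ ε5 := by
    have hεFeq : εF * ((𝓕.card : ℝ) + 1) = ε5 := by
      rw [hεF]; exact div_mul_cancel₀ _ hcpos.ne'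
    have h1 : (𝓕.card : ℝ) ≤ (𝓕.card : ℝ) + 1 := by linarith
    calc (𝓕.card : ℝ) * εF ≤ ((𝓕.card : ℝ) + 1) * εF :=
          mul_le_mul_of_nonneg_right h1 hεFpos.le
      _ = εF * ((𝓕.card : ℝ) + 1) := mul_comm _ _
      _ = ε5 := hεFeq
  have hsumtot : ∑ F ∈ 𝓕, (G F + (∑ f ∈ M.filter (fun f => Fsel f = F), f (Afn f)) + εF)
      = ∑ F ∈ 𝓕, G F + ∑ f ∈ M, f (Afn f) + (𝓕.card : ℝ) * εF := by
    rw [Finset.sum_add_distrib, Finset.sum_add_distrib, hfib, Finset.sum_const,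
      nsmul_eq_mul]
  have hsup𝓐 : 𝓐.sup id = 𝓑v.sup id := by
    apply le_antisymm
    · refine Finset.sup_le fun D hD => ?_
      obtain ⟨F, _, rfl⟩ := Finset.mem_image.1 hD
      calc id ((M.filter (fun f => Fsel f = F)).sup Afn)
          = (M.filter (fun f => Fsel f = F)).sup Afn := rfl
        _ ≤ M.sup Afn := Finset.sup_mono (Finset.filter_subset _ _)
        _ = 𝓑v.sup id := hMsup
    · rw [← hMsup]
      refine Finset.sup_le fun f hf => ?_
      calc Afn f ≤ (M.filter (fun f' => Fsel f' = Fsel f)).sup Afn :=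
            Finset.le_sup (Finset.mem_filter.2 ⟨hf, rfl⟩)
        _ ≤ 𝓐.sup id := by
            have hmem : (M.filter (fun f' => Fsel f' = Fsel f)).sup Afn ∈ 𝓐 :=
              Finset.mem_image_of_mem _ (hFselspec f hf).1
            intro x hx
            exact Finset.mem_sup.2 ⟨_, hmem, hx⟩
  simp only [hhfun']
  rw [hsup𝓐]
  have h5 : 3 * ε5 ≤ ε := by rw [hε5]; linarith
  linarith [hspade, hsum𝓐, hsumL, hsumtot, hcardbd, hMsum]
end KeyTight

section Main
open DivAux
variable {X : Type*} {δ : Finset X → ℝ}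

lemma image_inst_irrel {α β : Type*} (i1 i2 : DecidableEq β) (g : α → β) (s : Finset α) :
    @Finset.image α β i1 g s = @Finset.image α β i2 g s := by
  have : i1 = i2 := by
    funext x y
    exact Subsingleton.elim _ _
  rw [this]

lemma finset_empty_of_isEmpty [IsEmpty X] (A : Finset X) : A = ∅ :=
  Finset.eq_empty_of_forall_notMem fun x _ => IsEmpty.false x

lemma forward_dir (hδ : IsDiversity δ) (H : DivHyperconvex δ) :
    ∃ φ : X → (Finset X → ℝ),
      (∀ x : X, MemT δ (φ x)) ∧
      Function.Injective φ ∧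
      (∀ A : Finset X, deltaT δ (A.image φ) = δ A) ∧
      (∀ g : Finset X → ℝ, MemT δ g → ∃ x : X, φ x = g) := by
  classical
  have hne : Nonempty X := by
    by_contra hne
    rw [not_nonempty_iff] at hne
    have hall : ∀ A : Finset X, δ A = 0 := fun A => by
      rw [finset_empty_of_isEmpty A]; exact div_empty hδ
    obtain ⟨z, _⟩ := H (fun _ => 0) (by
      intro 𝓐
      rw [hall]
      simp)
    exact IsEmpty.false z
  refine ⟨kappa δ, kappa_memT hδ, kappa_inj hδ, deltaT_kappa hδ, ?_⟩
  intro g hg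
  obtain ⟨z, hz⟩ := H g hg.1.2
  refine ⟨z, ?_⟩
  refine hg.2 (kappa δ z) (kappa_memP hδ z) ?_
  intro A
  exact hz A

set_option maxHeartbeats 2000000 in
lemma backward_dir (hδ : IsDiversity δ)
    (hyp : ∃ φ : X → (Finset X → ℝ),
      (∀ x : X, MemT δ (φ x)) ∧
      Function.Injective φ ∧
      (∀ A : Finset X, deltaT δ (A.image φ) = δ A) ∧
      (∀ g : Finset X → ℝ, MemT δ g → ∃ x : X, φ x = g)) :
    DivHyperconvex δ := by
  classical
  obtain ⟨φ, hφT, hφinj, hφemb, hφsurj⟩ := hyp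
  intro r hr
  -- X is nonempty
  have hne : Nonempty X := by
    by_contra hne
    rw [not_nonempty_iff] at hne
    have hall : ∀ A : Finset X, δ A = 0 := fun A => by
      rw [finset_empty_of_isEmpty A]; exact div_empty hδ
    have h0T : MemT δ (fun _ => 0) := by
      refine ⟨⟨rfl, ?_⟩, ?_⟩
      · intro 𝓐
        rw [hall]
        simp
      · intro p hp _
        funext A
        have hA : A = ∅ := finset_empty_of_isEmpty _
        rw [hA, hp.1]
    obtain ⟨x, _⟩ := hφsurj _ h0T
    exact IsEmpty.false x
  haveI := hne
  letI : DecidableEq {f : Finset X → ℝ // MemT δ f} := fun a b => Classical.propDecidable _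
  -- facts about r
  have hr0 : ∀ Y, 0 ≤ r Y := by
    intro Y
    have h1 := hr {Y}
    have h2 : ({Y} : Finset (Finset X)).sup id = Y := by simp
    rw [h2, Finset.sum_singleton] at h1
    exact le_trans (hδ.1 Y) h1
  set ginv : (Finset X → ℝ) → X := Function.invFun φ with hginvdef
  have hginvφ : ∀ x, ginv (φ x) = x := fun x => Function.leftInverse_invFun hφinj x
  have hφval : ∀ g, MemT δ g → φ (ginv g) = g := by
    intro g hg
    obtain ⟨x, rfl⟩ := hφsurj g hg
    rw [hginvφ]
  -- level-2 base function
  set b₂ : Finset {f : Finset X → ℝ // MemT δ f} → ℝ :=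
    fun F => deltaT δ (F.image (fun z => z.val)) with hb₂
  have hvalP : ∀ (F : Finset {f : Finset X → ℝ // MemT δ f}),
      ∀ f ∈ F.image (fun z => z.val), MemP δ f := by
    intro F f hf
    obtain ⟨z, _, rfl⟩ := Finset.mem_image.1 hf
    exact z.2.1
  have hb₂0 : b₂ ∅ = 0 := by rw [hb₂]; simp [deltaT]
  have hb₂nn : ∀ F, 0 ≤ b₂ F := fun F => deltaT_nonneg hδ (hvalP F)
  -- the transported radius function
  set pb : Finset {f : Finset X → ℝ // MemT δ f} → Finset X :=
    fun F => F.image (fun z => ginv z.val) with hpb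
  set R2 : Finset {f : Finset X → ℝ // MemT δ f} → ℝ :=
    fun F => if F = ∅ then 0 else r (pb F) with hR2
  have hR2nn : ∀ F, 0 ≤ R2 F := by
    intro F
    rw [hR2]
    dsimp only
    split
    · exact le_rfl
    · exact hr0 _
  have hval_eq : ∀ (F : Finset {f : Finset X → ℝ // MemT δ f}),
      (pb F).image φ = F.image (fun z => z.val) := by
    intro F
    rw [hpb, Finset.image_image]
    apply Finset.image_congr
    intro z _
    show φ (ginv z.val) = z.val
    exact hφval z.val z.2
  have hR2P : MemP b₂ R2 := by
    constructor
    · rw [hR2]; simp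
    · intro 𝓕
      have h1 : b₂ (𝓕.sup id) = δ (pb (𝓕.sup id)) := by
        rw [hb₂]
        show deltaT δ ((𝓕.sup id).image (fun z => z.val)) = _
        rw [← hval_eq, hφemb]
      have h2 : pb (𝓕.sup id) = 𝓕.sup (fun F => pb F) := by
        rw [hpb]
        exact image_sup' 𝓕 id (fun z => ginv z.val)
      set 𝓕' := 𝓕.filter (fun F => ¬ (F = ∅)) with h𝓕'
      have hsup' : 𝓕.sup (fun F => pb F) = 𝓕'.sup (fun F => pb F) := by
        apply le_antisymm
        · refine Finset.sup_le fun F hF => ?_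
          by_cases hFe : F = ∅
          · subst hFe
            intro x hx
            rw [hpb] at hx
            simp at hx
          · exact Finset.le_sup (Finset.mem_filter.2 ⟨hF, hFe⟩)
        · exact Finset.sup_mono (Finset.filter_subset _ _)
      have hadm : δ (𝓕'.sup (fun F => pb F)) ≤ ∑ F ∈ 𝓕', r (pb F) := by
        have h3 := hr (𝓕'.image pb)
        rw [Finset.sup_image] at h3
        exact le_trans h3 (sum_image_le_of_nonneg hr0 𝓕' pb)
      have hsum : ∑ F ∈ 𝓕', r (pb F) = ∑ F ∈ 𝓕', R2 F := by
        refine Finset.sum_congr rfl fun F hF => ?_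
        rw [hR2]
        dsimp only
        rw [if_neg (Finset.mem_filter.1 hF).2]
      have hsub : ∑ F ∈ 𝓕', R2 F ≤ ∑ F ∈ 𝓕, R2 F :=
        Finset.sum_le_sum_of_subset_of_nonneg (Finset.filter_subset _ _)
          (fun F _ _ => hR2nn F)
      rw [h1, h2, hsup']
      linarith
  -- minimize below R2
  obtain ⟨G, hGT, hGle⟩ := exists_memT_le hb₂0 hb₂nn hR2P
  set κ₂ : X → {f : Finset X → ℝ // MemT δ f} :=
    fun x => ⟨kappa δ x, kappa_memT hδ x⟩ with hκ₂
  set hfun : Finset X → ℝ := fun A => G (A.image κ₂) with hhfun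
  have hGnn : ∀ F, 0 ≤ G F := fun F => le_trans (hb₂nn F) (memP_le hGT.1 F)
  have hval_κ : ∀ A : Finset X, (A.image κ₂).image (fun z => z.val) = A.image (kappa δ) := by
    intro A
    rw [Finset.image_image]
    rfl
  have hb₂κ : ∀ A : Finset X, b₂ (A.image κ₂) = δ A := by
    intro A
    rw [hb₂]
    show deltaT δ ((A.image κ₂).image (fun z => z.val)) = δ A
    rw [hval_κ, deltaT_kappa hδ]
  have hhP : MemP δ hfun := by
    constructor
    · rw [hhfun]
      show G ((∅ : Finset X).image κ₂) = 0
      rw [Finset.image_empty]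
      exact hGT.1.1
    · intro 𝓐
      have h1 := memP_cover hb₂nn hGT.1 𝓐 (fun A => A.image κ₂)
      have h2 : 𝓐.sup (fun A => A.image κ₂) = (𝓐.sup id).image κ₂ :=
        (image_sup' 𝓐 id κ₂).symm
      rw [h2, hb₂κ] at h1
      exact h1
  haveI hSS : Subsingleton (DecidableEq {f : Finset X → ℝ // MemT δ f}) :=
    ⟨fun a b => by funext x y; exact Subsingleton.elim _ _⟩
  have hhT : MemT δ hfun := by
    refine memT_of_tight hδ.1 hhP ?_
    intro A ε hε
    refine key_tight hδ G hGT hfun (fun A => ?_) A hε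
    show G (A.image κ₂) = _
    rw [hκ₂]
    exact congrArg G (image_inst_irrel _ _ _ _)
  obtain ⟨z, hz⟩ := hφsurj hfun hhT
  refine ⟨z, ?_⟩
  intro Y
  rcases Finset.eq_empty_or_nonempty Y with rfl | hY
  · have h1 : ({z} : Finset X) ∪ ∅ = {z} := Finset.union_empty _
    rw [h1]
    exact le_trans (le_of_eq (div_single hδ z)) (hr0 ∅)
  -- main case
  set φ₂ : X → {f : Finset X → ℝ // MemT δ f} := fun y => ⟨φ y, hφT y⟩ with hφ₂
  have hY2 : (Y.image φ₂).Nonempty := hY.image _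
  have hvalY : (Y.image φ₂).image (fun z => z.val) = Y.image φ := by
    rw [Finset.image_image]
    rfl
  have hstep0 : δ ({z} ∪ Y) = deltaT δ (insert hfun (Y.image φ)) := by
    have h1 : ({z} : Finset X) ∪ Y = insert z Y := rfl
    rw [h1, ← hφemb (insert z Y), Finset.image_insert, hz]
  -- (B1)
  have hB1 : deltaT δ (insert hfun (Y.image φ)) ≤ G (Y.image φ₂) := by
    have hPins : ∀ f ∈ insert hfun (Y.image φ), MemP δ f := by
      intro f hf
      rcases Finset.mem_insert.1 hf with rfl | hf
      · exact hhP
      · obtain ⟨y, _, rfl⟩ := Finset.mem_image.1 hf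
        exact (hφT y).1
    refine deltaT_le hδ ⟨hfun, Finset.mem_insert_self _ _⟩ fun 𝓑 m hm => ?_
    set 𝓑₁ := 𝓑.filter (fun B => m B = hfun) with h𝓑₁
    set 𝓑₂ := 𝓑 \ 𝓑₁ with h𝓑₂
    have hsub1 : 𝓑₁ ⊆ 𝓑 := Finset.filter_subset _ _
    have hsub2 : 𝓑₂ ⊆ 𝓑 := Finset.sdiff_subset
    have hm2 : ∀ B ∈ 𝓑₂, m B ∈ Y.image φ := by
      intro B hB
      have h1 := Finset.mem_sdiff.1 hB
      rcases Finset.mem_insert.1 (hm B h1.1) with he | hmem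
      · exact absurd (Finset.mem_filter.2 ⟨h1.1, he⟩) h1.2
      · exact hmem
    have hmnn : ∀ B ∈ 𝓑, 0 ≤ (m B) B := by
      intro B hB
      exact memP_nonneg hδ.1 (hPins _ (hm B hB)) B
    set V₁ := 𝓑₁.sup id with hV₁
    -- step 1
    have hstep1 : δ (𝓑.sup id) - ∑ B ∈ 𝓑₂, (m B) B
        ≤ deltaT δ (Y.image φ ∪ V₁.image (kappa δ)) := by
      set pick : Finset X → X := fun B =>
        if h : ∃ v ∈ V₁, B = {v} then h.choose else Classical.arbitrary X with hpick
      have hpickspec : ∀ B ∈ V₁.image (fun v => ({v} : Finset X)),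
          pick B ∈ V₁ ∧ B = {pick B} := by
        intro B hB
        obtain ⟨v, hv, he⟩ := Finset.mem_image.1 hB
        have hex : ∃ v ∈ V₁, B = {v} := ⟨v, hv, he.symm⟩
        rw [hpick]
        simp only [dif_pos hex]
        exact ⟨hex.choose_spec.1, hex.choose_spec.2⟩
      set m' : Finset X → (Finset X → ℝ) := fun B =>
        if B ∈ 𝓑₂ then m B else kappa δ (pick B) with hm'
      have hFne : (Y.image φ ∪ V₁.image (kappa δ)).Nonempty := by
        obtain ⟨y0, hy0⟩ := hY
        exact ⟨φ y0, Finset.mem_union_left _ (Finset.mem_image_of_mem φ hy0)⟩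
      have hPun : ∀ f ∈ Y.image φ ∪ V₁.image (kappa δ), MemP δ f := by
        intro f hf
        rcases Finset.mem_union.1 hf with h | h
        · obtain ⟨y, _, rfl⟩ := Finset.mem_image.1 h
          exact (hφT y).1
        · obtain ⟨v, _, rfl⟩ := Finset.mem_image.1 h
          exact kappa_memP hδ v
      have h1 := le_deltaT hδ hFne hPun
        (𝓑₂ ∪ V₁.image (fun v => ({v} : Finset X))) m' ?_
      · have hsup : (𝓑₂ ∪ V₁.image (fun v => ({v} : Finset X))).sup id
            = 𝓑₂.sup id ∪ V₁ := by
          rw [Finset.sup_union, sup_image_singleton]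
          rfl
        have hsupB : δ (𝓑.sup id) ≤ δ (𝓑₂.sup id ∪ V₁) := by
          refine div_mono hδ ?_
          intro x hx
          obtain ⟨B, hB, hxB⟩ := Finset.mem_sup.1 hx
          by_cases hB1m : B ∈ 𝓑₁
          · exact Finset.mem_union_right _ (Finset.mem_sup.2 ⟨B, hB1m, hxB⟩)
          · exact Finset.mem_union_left _
              (Finset.mem_sup.2 ⟨B, Finset.mem_sdiff.2 ⟨hB, hB1m⟩, hxB⟩)
        have hsum' : ∑ B ∈ 𝓑₂ ∪ V₁.image (fun v => ({v} : Finset X)), (m' B) B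
            ≤ ∑ B ∈ 𝓑₂, (m B) B := by
          have hre : 𝓑₂ ∪ V₁.image (fun v => ({v} : Finset X))
              = 𝓑₂ ∪ ((V₁.image fun v => ({v} : Finset X)) \ 𝓑₂) :=
            (Finset.union_sdiff_self_eq_union).symm
          rw [hre, Finset.sum_union Finset.disjoint_sdiff]
          have e1 : ∑ B ∈ 𝓑₂, (m' B) B = ∑ B ∈ 𝓑₂, (m B) B := by
            refine Finset.sum_congr rfl fun B hB => ?_
            rw [hm']
            simp only [if_pos hB]
          have e2 : ∑ B ∈ (V₁.image fun v => ({v} : Finset X)) \ 𝓑₂, (m' B) B = 0 := by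
            refine Finset.sum_eq_zero fun B hB => ?_
            have hB' := Finset.mem_sdiff.1 hB
            rw [hm']
            simp only [if_neg hB'.2]
            have hs := (hpickspec B hB'.1).2
            show δ (insert (pick B) B) = 0
            generalize hq : pick B = q at hs ⊢
            rw [hs, Finset.insert_eq_self.2 (Finset.mem_singleton_self _), div_single hδ]
          rw [e1, e2]
          linarith
        rw [hsup] at h1
        linarith
      · intro B hB
        rw [hm']
        by_cases hB2 : B ∈ 𝓑₂
        · simp only [if_pos hB2]
          exact Finset.mem_union_left _ (hm2 B hB2)
        · simp only [if_neg hB2]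
          have hB' : B ∈ V₁.image (fun v => ({v} : Finset X)) := by
            rcases Finset.mem_union.1 hB with h | h
            · exact absurd h hB2
            · exact h
          exact Finset.mem_union_right _
            (Finset.mem_image_of_mem _ (hpickspec B hB').1)
    -- step 2
    have hstep2 : deltaT δ (Y.image φ ∪ V₁.image (kappa δ))
        ≤ G (Y.image φ₂) + ∑ B ∈ 𝓑₁, (m B) B := by
      have hsupins : (insert (Y.image φ₂) (𝓑₁.image (fun B => B.image κ₂))).sup id
          = Y.image φ₂ ∪ V₁.image κ₂ := by
        ext w
        simp only [Finset.mem_sup, Finset.mem_insert, Finset.mem_union, Finset.mem_image,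
          id_eq]
        constructor
        · rintro ⟨I, (rfl | ⟨B, hB, rfl⟩), hwI⟩
          · exact Or.inl (Finset.mem_image.1 hwI)
          · obtain ⟨x, hx, rfl⟩ := Finset.mem_image.1 hwI
            exact Or.inr ⟨x, Finset.mem_sup.2 ⟨B, hB, hx⟩, rfl⟩
        · rintro (hw | ⟨x, hx, rfl⟩)
          · exact ⟨Y.image φ₂, Or.inl rfl, Finset.mem_image.2 hw⟩
          · obtain ⟨B, hB, hxB⟩ := Finset.mem_sup.1 hx
            exact ⟨B.image κ₂, Or.inr ⟨B, hB, rfl⟩, Finset.mem_image_of_mem _ hxB⟩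
      have h1 := hGT.1.2 (insert (Y.image φ₂) (𝓑₁.image (fun B => B.image κ₂)))
      rw [hsupins] at h1
      have hval2 : (Y.image φ₂ ∪ V₁.image κ₂).image (fun z => z.val)
          = Y.image φ ∪ V₁.image (kappa δ) := by
        rw [Finset.image_union, hvalY, Finset.image_image]
        rfl
      have hb₂eq : b₂ (Y.image φ₂ ∪ V₁.image κ₂)
          = deltaT δ (Y.image φ ∪ V₁.image (kappa δ)) := congrArg (deltaT δ) hval2
      have h2 := sum_insert_le_of_nonneg (f := G) hGnn (Y.image φ₂)
        (𝓑₁.image (fun B => B.image κ₂))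
      have h3 : ∑ F ∈ 𝓑₁.image (fun B => B.image κ₂), G F
          ≤ ∑ B ∈ 𝓑₁, G (B.image κ₂) :=
        sum_image_le_of_nonneg (fun F => hGnn F) 𝓑₁ _
      have h4 : ∑ B ∈ 𝓑₁, G (B.image κ₂) = ∑ B ∈ 𝓑₁, (m B) B := by
        refine Finset.sum_congr rfl fun B hB => ?_
        have hmB : m B = hfun := (Finset.mem_filter.1 hB).2
        rw [hmB, hhfun]
      rw [hb₂eq] at h1
      linarith
    have hsplitsum : ∑ B ∈ 𝓑₂, (m B) B + ∑ B ∈ 𝓑₁, (m B) B = ∑ B ∈ 𝓑, (m B) B := by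
      rw [h𝓑₂]
      exact Finset.sum_sdiff hsub1
    linarith [hstep1, hstep2]
  -- conclude
  have hfinal : G (Y.image φ₂) ≤ r Y := by
    refine le_trans (hGle (Y.image φ₂)) ?_
    rw [hR2]
    dsimp only
    rw [if_neg (Finset.nonempty_iff_ne_empty.1 hY2)]
    have hpbY : pb (Y.image φ₂) = Y := by
      rw [hpb]
      show (Y.image φ₂).image (fun w => ginv w.val) = Y
      rw [Finset.image_image]
      calc Y.image ((fun w : {f : Finset X → ℝ // MemT δ f} => ginv w.val) ∘ φ₂)
          = Y.image id := Finset.image_congr (fun y _ => hginvφ y)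
        _ = Y := Finset.image_id
    rw [hpbY]
  rw [hstep0]
  exact le_trans hB1 hfinal
end Main

end DivAux

/-- `(X, δ)` is hyperconvex iff there is an isomorphism (a surjective
embedding) from `(X, δ)` onto its tight span `(T_X, δ_T)`. -/
theorem hyperconvex_iff_isomorphic_tightSpan {X : Type*}
    (δ : Finset X → ℝ) (hδ : IsDiversity δ) :
    DivHyperconvex δ ↔
      ∃ φ : X → (Finset X → ℝ),
        (∀ x : X, MemT δ (φ x)) ∧
        Function.Injective φ ∧
        (∀ A : Finset X, deltaT δ (A.image φ) = δ A) ∧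
        (∀ g : Finset X → ℝ, MemT δ g → ∃ x : X, φ x = g) := by
  constructor
  · exact fun H => DivAux.forward_dir hδ H
  · exact fun h => DivAux.backward_dir hδ h


end
end

section
/- A metric space (X, d) is hyperconvex if and only if its diameter diversity (X, diam_d) is a hyperconvex diversity. -/
open scoped Classical

noncomputable section

/-- The diameter diversity of a metric space. -/
noncomputable def diamDiv (X : Type*) [MetricSpace X] : Finset X → ℝ :=
  fun A => Metric.diam (A : Set X)

/-- A hyperconvex metric space. -/
def MetricHyperconvex (X : Type*) [MetricSpace X] : Prop :=
  ∀ r : X → ℝ, (∀ x y : X, dist x y ≤ r x + r y) → ∃ z : X, ∀ x : X, dist z x ≤ r x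

/-- a metric space is hyperconvex iff its diameter diversity is a hyperconvex
diversity. -/
theorem metric_hyperconvex_iff_diamDiv_hyperconvex (X : Type*) [MetricSpace X] :
    MetricHyperconvex X ↔ DivHyperconvex (diamDiv X) := by
  constructor
  · intro hX r hr
    have hdiam : ∀ Y : Finset X, Metric.diam (Y : Set X) ≤ r Y := by
      intro Y
      have := hr {Y}
      simpa [diamDiv] using this
    have hr0 : ∀ Y, 0 ≤ r Y := fun Y => le_trans Metric.diam_nonneg (hdiam Y)
    have hpair : ∀ (Y Z : Finset X), ∀ x ∈ Y, ∀ y ∈ Z, dist x y ≤ r Y + r Z := by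
      intro Y Z x hx y hy
      by_cases h : Y = Z
      · subst h
        calc dist x y ≤ Metric.diam (Y : Set X) :=
              Metric.dist_le_diam_of_mem Y.finite_toSet.isBounded hx hy
          _ ≤ r Y := hdiam Y
          _ ≤ r Y + r Y := le_add_of_nonneg_right (hr0 Y)
      · have h2 := hr {Y, Z}
        rw [Finset.sup_insert, Finset.sup_singleton, Finset.sum_pair h] at h2
        calc dist x y ≤ Metric.diam ((id Y ⊔ id Z : Finset X) : Set X) := by
              apply Metric.dist_le_diam_of_mem (id Y ⊔ id Z : Finset X).finite_toSet.isBounded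
              · simp only [id, Finset.sup_eq_union, Finset.coe_union,
                  Set.mem_union, Finset.mem_coe]
                exact Or.inl hx
              · simp only [id, Finset.sup_eq_union, Finset.coe_union,
                  Set.mem_union, Finset.mem_coe]
                exact Or.inr hy
          _ ≤ r Y + r Z := h2
    set S : X → Set ℝ := fun x => (fun Y => r Y) '' {Y | x ∈ Y} with hS
    have hSne : ∀ x, (S x).Nonempty := fun x => ⟨r {x}, {x}, by simp, rfl⟩
    have hSbdd : ∀ x, BddBelow (S x) := by
      intro x
      refine ⟨0, ?_⟩
      rintro _ ⟨Y, _, rfl⟩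
      exact hr0 Y
    set r' : X → ℝ := fun x => sInf (S x) with hr'
    have key : ∀ x y, dist x y ≤ r' x + r' y := by
      intro x y
      have h1 : dist x y - r' y ≤ r' x := by
        apply le_csInf (hSne x)
        rintro _ ⟨Y, hY, rfl⟩
        have h2 : dist x y - r Y ≤ r' y := by
          apply le_csInf (hSne y)
          rintro _ ⟨Z, hZ, rfl⟩
          have := hpair Y Z x hY y hZ
          linarith
        linarith
      linarith
    obtain ⟨z, hz⟩ := hX r' key
    refine ⟨z, fun Y => ?_⟩
    show Metric.diam _ ≤ r Y
    apply Metric.diam_le_of_forall_dist_le (hr0 Y)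
    intro a ha b hb
    simp only [Finset.coe_union, Finset.coe_singleton, Set.mem_union, Set.mem_singleton_iff,
      Finset.mem_coe] at ha hb
    have hz' : ∀ c ∈ Y, dist z c ≤ r Y := by
      intro c hcY
      calc dist z c ≤ r' c := hz c
        _ ≤ r Y := csInf_le (hSbdd c) ⟨Y, hcY, rfl⟩
    rcases ha with ha | ha <;> rcases hb with hb | hb
    · subst ha; subst hb; simpa using hr0 Y
    · subst ha; exact hz' b hb
    · subst hb; rw [dist_comm]; exact hz' a ha
    · calc dist a b ≤ Metric.diam (Y : Set X) :=
            Metric.dist_le_diam_of_mem Y.finite_toSet.isBounded ha hb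
        _ ≤ r Y := hdiam Y
  · intro hD r hr
    have hr0 : ∀ x, 0 ≤ r x := by
      intro x
      have := hr x x
      simp only [dist_self] at this
      linarith
    set r' : Finset X → ℝ := fun Y => Metric.diam (Y : Set X) + ∑ y ∈ Y, r y with hr'
    have hr'0 : ∀ Y, 0 ≤ r' Y := fun Y =>
      add_nonneg Metric.diam_nonneg (Finset.sum_nonneg fun y _ => hr0 y)
    have hadm : ∀ 𝓐 : Finset (Finset X), diamDiv X (𝓐.sup id) ≤ ∑ A ∈ 𝓐, r' A := by
      intro 𝓐
      apply Metric.diam_le_of_forall_dist_le (Finset.sum_nonneg fun A _ => hr'0 A)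
      intro x hx y hy
      simp only [Finset.mem_coe, Finset.mem_sup, id] at hx hy
      obtain ⟨A, hA, hxA⟩ := hx
      obtain ⟨B, hB, hyB⟩ := hy
      by_cases h : A = B
      · subst h
        calc dist x y ≤ Metric.diam (A : Set X) :=
              Metric.dist_le_diam_of_mem A.finite_toSet.isBounded hxA hyB
          _ ≤ r' A := le_add_of_nonneg_right (Finset.sum_nonneg fun y _ => hr0 y)
          _ ≤ ∑ C ∈ 𝓐, r' C := Finset.single_le_sum (fun C _ => hr'0 C) hA
      · have h1 : r x ≤ r' A := by
          have hx1 : r x ≤ ∑ y ∈ A, r y := Finset.single_le_sum (fun y _ => hr0 y) hxA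
          have hx2 : (0:ℝ) ≤ Metric.diam (A : Set X) := Metric.diam_nonneg
          simp only [hr']
          linarith
        have h2 : r y ≤ r' B := by
          have hy1 : r y ≤ ∑ c ∈ B, r c := Finset.single_le_sum (fun c _ => hr0 c) hyB
          have hy2 : (0:ℝ) ≤ Metric.diam (B : Set X) := Metric.diam_nonneg
          simp only [hr']
          linarith
        have h3 : r' A + r' B ≤ ∑ C ∈ 𝓐, r' C := by
          have hsub : ({A, B} : Finset (Finset X)) ⊆ 𝓐 := by
            intro C hC
            simp only [Finset.mem_insert, Finset.mem_singleton] at hC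
            rcases hC with rfl | rfl <;> assumption
          have := Finset.sum_le_sum_of_subset_of_nonneg hsub (fun C _ _ => hr'0 C)
          rwa [Finset.sum_pair h] at this
        calc dist x y ≤ r x + r y := hr x y
          _ ≤ r' A + r' B := add_le_add h1 h2
          _ ≤ _ := h3
    obtain ⟨z, hz⟩ := hD r' hadm
    refine ⟨z, fun x => ?_⟩
    have hd : dist z x ≤ diamDiv X ({z} ∪ {x}) := by
      apply Metric.dist_le_diam_of_mem (({z} ∪ {x} : Finset X)).finite_toSet.isBounded <;> simp
    have heq : r' {x} = r x := by simp [hr']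
    have := hz {x}
    linarith

end
end

section
/- Let (X, d) be a metric space and let (X, δ) be its diameter diversity, δ = diam_d, with diversity tight span (T_X, δ_T). Then (T_X, δ_T) is itself a diameter diversity: for every finite F ⊆ T_X with |F| ≥ 2, δ_T(F) = max{δ_T({f₁, f₂}) : f₁, f₂ ∈ F}. -/
open scoped Classical

noncomputable section

namespace TSaux

variable {X : Type*} [MetricSpace X]

lemma dd_def (A : Finset X) : diamDiv X A = Metric.diam (A : Set X) := rfl

lemma dd_nonneg (A : Finset X) : 0 ≤ diamDiv X A := Metric.diam_nonneg

lemma dd_empty : diamDiv X (∅ : Finset X) = 0 := by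
  simp [diamDiv]

lemma memP_ge_delta {f : Finset X → ℝ} (hf : MemP (diamDiv X) f) (A : Finset X) :
    diamDiv X A ≤ f A := by
  simpa using hf.2 {A}

lemma memP_nonneg {f : Finset X → ℝ} (hf : MemP (diamDiv X) f) (A : Finset X) : 0 ≤ f A :=
  (dd_nonneg A).trans (memP_ge_delta hf A)

lemma dd_tri (A B : Finset X) (x : X) :
    diamDiv X (A ∪ B) ≤ diamDiv X (A ∪ {x}) + diamDiv X ({x} ∪ B) := by
  have hb1 : Bornology.IsBounded ((A ∪ {x} : Finset X) : Set X) :=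
    (A ∪ {x} : Finset X).finite_toSet.isBounded
  have hb2 : Bornology.IsBounded ((({x} : Finset X) ∪ B : Finset X) : Set X) :=
    (({x} : Finset X) ∪ B).finite_toSet.isBounded
  have hx1 : x ∈ ((A ∪ {x} : Finset X) : Set X) := by simp
  have hx2 : x ∈ ((({x} : Finset X) ∪ B : Finset X) : Set X) := by simp
  rw [dd_def]
  apply Metric.diam_le_of_forall_dist_le
    (add_nonneg (dd_nonneg (A ∪ {x})) (dd_nonneg (({x} : Finset X) ∪ B)))
  intro p hp q hq
  have hp' : p ∈ A ∨ p ∈ B := by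
    have := Finset.mem_coe.1 hp; rw [Finset.mem_union] at this; exact this
  have hq' : q ∈ A ∨ q ∈ B := by
    have := Finset.mem_coe.1 hq; rw [Finset.mem_union] at this; exact this
  have hpa : ∀ a, a ∈ A → a ∈ ((A ∪ {x} : Finset X) : Set X) := fun a ha => by simp [ha]
  have hpb : ∀ a, a ∈ B → a ∈ ((({x} : Finset X) ∪ B : Finset X) : Set X) := fun a ha => by
    simp [ha]
  rcases hp' with hpA | hpB <;> rcases hq' with hqA | hqB
  · have h1 := Metric.dist_le_diam_of_mem hb1 (hpa p hpA) (hpa q hqA)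
    have h2 : (0:ℝ) ≤ Metric.diam ((({x} : Finset X) ∪ B : Finset X) : Set X) :=
      Metric.diam_nonneg
    rw [dd_def, dd_def]; linarith
  · have h1 := Metric.dist_le_diam_of_mem hb1 (hpa p hpA) hx1
    have h2 := Metric.dist_le_diam_of_mem hb2 hx2 (hpb q hqB)
    have h3 := dist_triangle p x q
    rw [dd_def, dd_def]; linarith
  · have h1 := Metric.dist_le_diam_of_mem hb2 (hpb p hpB) hx2
    have h2 := Metric.dist_le_diam_of_mem hb1 hx1 (hpa q hqA)
    have h3 := dist_triangle p x q
    rw [dd_def, dd_def]; linarith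
  · have h1 := Metric.dist_le_diam_of_mem hb2 (hpb p hpB) (hpb q hqB)
    have h2 : (0:ℝ) ≤ Metric.diam ((A ∪ {x} : Finset X) : Set X) := Metric.diam_nonneg
    rw [dd_def, dd_def]; linarith

/-- Key minimality consequence: a minimal element of `P` satisfies
`δ(A ∪ E) ≤ f A + f E`. -/
lemma memT_pair_bound {f : Finset X → ℝ} (hf : MemT (diamDiv X) f) (A E : Finset X) :
    diamDiv X (A ∪ E) ≤ f A + f E := by
  classical
  set S : Set ℝ :=
    {r | ∃ 𝓔 : Finset (Finset X), r = diamDiv X (A ∪ 𝓔.sup id) - ∑ B ∈ 𝓔, f B} with hS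
  have hne : S.Nonempty := ⟨diamDiv X A, ∅, by simp⟩
  have hub : ∀ r ∈ S, r ≤ f A := by
    rintro r ⟨𝓔, rfl⟩
    have h := hf.1.2 (insert A 𝓔)
    have hsup : (insert A 𝓔).sup id = A ∪ 𝓔.sup id := by
      rw [Finset.sup_insert]; rfl
    rw [hsup] at h
    by_cases hA : A ∈ 𝓔
    · rw [Finset.insert_eq_self.2 hA] at h
      have h0 := memP_nonneg hf.1 A
      linarith
    · rw [Finset.sum_insert hA] at h
      linarith
  have hbdd : BddAbove S := ⟨f A, hub⟩
  have hsup_ge : ∀ 𝓔 : Finset (Finset X),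
      diamDiv X (A ∪ 𝓔.sup id) - ∑ B ∈ 𝓔, f B ≤ sSup S :=
    fun 𝓔 => le_csSup hbdd ⟨𝓔, rfl⟩
  have hS0 : 0 ≤ sSup S → True := fun _ => trivial
  set g : Finset X → ℝ := fun B => if B = A then sSup S else f B with hg
  have hgA : g A = sSup S := by simp [hg]
  have hgle : ∀ B, g B ≤ f B := by
    intro B
    by_cases hB : B = A
    · subst hB; simpa [hg] using csSup_le hne hub
    · simp [hg, hB]
  have hgP : MemP (diamDiv X) g := by
    constructor
    · by_cases hA : (∅ : Finset X) = A
      · have h1 : g ∅ = sSup S := by simp [hg, hA]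
        have h2 : sSup S ≤ f A := csSup_le hne hub
        have h3 : f A = 0 := by rw [← hA]; exact hf.1.1
        have h4 : (0 : ℝ) ≤ sSup S := by
          have := hsup_ge ∅
          have hAe : diamDiv X (A ∪ (∅ : Finset (Finset X)).sup id) = 0 := by
            rw [← hA]; simpa using dd_empty (X := X)
          rw [hAe] at this; simpa using this
        rw [h1]; linarith
      · show (if (∅ : Finset X) = A then sSup S else f ∅) = 0
        rw [if_neg hA]; exact hf.1.1
    · intro 𝓐
      by_cases hA : A ∈ 𝓐
      · have hsum : ∑ B ∈ 𝓐, g B = sSup S + ∑ B ∈ 𝓐.erase A, f B := by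
          rw [← Finset.add_sum_erase _ g hA, hgA]
          congr 1
          refine Finset.sum_congr rfl fun B hB => ?_
          simp [hg, Finset.ne_of_mem_erase hB]
        have hsup2 : 𝓐.sup id = A ∪ (𝓐.erase A).sup id := by
          conv_lhs => rw [← Finset.insert_erase hA]
          rw [Finset.sup_insert]; rfl
        rw [hsum, hsup2]
        linarith [hsup_ge (𝓐.erase A)]
      · have hsum : ∑ B ∈ 𝓐, g B = ∑ B ∈ 𝓐, f B := by
          refine Finset.sum_congr rfl fun B hB => ?_
          have : B ≠ A := fun h => hA (h ▸ hB)
          simp [hg, this]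
        rw [hsum]; exact hf.1.2 𝓐
  have hgf : g = f := hf.2 g hgP hgle
  have h1 : diamDiv X (A ∪ E) - f E ≤ sSup S := by
    have := hsup_ge {E}
    simpa using this
  have h2 : sSup S = f A := by rw [← hgf, hgA]
  linarith


/-- The set whose supremum defines `deltaT` for nonempty `G`. -/
def Sset {X : Type*} (δ : Finset X → ℝ) (G : Finset (Finset X → ℝ)) : Set ℝ :=
  {r : ℝ | ∃ 𝓐 : Finset (Finset X),
    r = δ (𝓐.sup id) - ∑ A ∈ 𝓐, sInf ((fun f => f A) '' (G : Set (Finset X → ℝ)))}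

lemma deltaT_eq {X : Type*} (δ : Finset X → ℝ) (G : Finset (Finset X → ℝ)) (h : G ≠ ∅) :
    deltaT δ G = sSup (Sset δ G) := by
  rw [deltaT, if_neg h]; rfl

lemma key {G : Finset (Finset X → ℝ)} (hG : G.Nonempty)
    (hGT : ∀ f ∈ G, MemT (diamDiv X) f) (x : X) (𝓐 : Finset (Finset X)) :
    ∃ f₁ ∈ G, ∃ f₂ ∈ G, ∃ A₁ A₂ : Finset X,
      f₁ A₁ = sInf ((fun f => f A₁) '' (G : Set (Finset X → ℝ))) ∧
      f₂ A₂ = sInf ((fun f => f A₂) '' (G : Set (Finset X → ℝ))) ∧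
      diamDiv X (𝓐.sup id) -
          (∑ A ∈ 𝓐, sInf ((fun f => f A) '' (G : Set (Finset X → ℝ)))) ≤
        diamDiv X (A₁ ∪ A₂) - f₁ A₁ - f₂ A₂ ∧
      diamDiv X (A₁ ∪ A₂) - f₁ A₁ - f₂ A₂ ≤ f₁ {x} + f₂ {x} := by
  classical
  have hnn : ∀ f ∈ G, ∀ A, 0 ≤ f A := fun f hf A => memP_nonneg (hGT f hf).1 A
  have hmnn : ∀ A, 0 ≤ sInf ((fun f => f A) '' (G : Set (Finset X → ℝ))) := by
    intro A
    apply Real.sInf_nonneg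
    rintro r ⟨f, hf, rfl⟩
    exact hnn f (Finset.mem_coe.1 hf) A
  have hatt : ∀ A, ∃ f ∈ G, f A = sInf ((fun f => f A) '' (G : Set (Finset X → ℝ))) := by
    intro A
    have hfin : ((fun f => f A) '' (G : Set (Finset X → ℝ))).Finite := G.finite_toSet.image _
    have hne : ((fun f => f A) '' (G : Set (Finset X → ℝ))).Nonempty :=
      (Finset.coe_nonempty.mpr hG).image _
    obtain ⟨f, hf, hfa⟩ := hne.csInf_mem hfin
    exact ⟨f, Finset.mem_coe.1 hf, hfa⟩
  have hmsub : ∀ A, ∀ f ∈ G, sInf ((fun f => f A) '' (G : Set (Finset X → ℝ))) ≤ f A := by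
    intro A f hf
    refine csInf_le ⟨0, ?_⟩ ⟨f, Finset.mem_coe.2 hf, rfl⟩
    rintro r ⟨g, hg, rfl⟩
    exact hnn g (Finset.mem_coe.1 hg) A
  have htri : ∀ f ∈ G, ∀ A E : Finset X, diamDiv X (A ∪ E) ≤ f A + f E :=
    fun f hf => memT_pair_bound (hGT f hf)
  have hfz : ∀ f ∈ G, f ∅ = 0 := fun f hf => (hGT f hf).1.1
  obtain ⟨f₀, hf₀⟩ := hG
  have hm0 : sInf ((fun f => f ∅) '' (G : Set (Finset X → ℝ))) = 0 := le_antisymm (by rw [← hfz f₀ hf₀]; exact hmsub ∅ f₀ hf₀) (hmnn ∅)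
  have hfourth : ∀ f₁, f₁ ∈ G → ∀ f₂, f₂ ∈ G → ∀ A₁ A₂ : Finset X,
      diamDiv X (A₁ ∪ A₂) - f₁ A₁ - f₂ A₂ ≤ f₁ {x} + f₂ {x} := by
    intro f₁ hf₁ f₂ hf₂ A₁ A₂
    have t1 := dd_tri A₁ A₂ x
    have t2 := htri f₁ hf₁ A₁ {x}
    have t3 := htri f₂ hf₂ A₂ {x}
    have hcomm : diamDiv X (({x} : Finset X) ∪ A₂) = diamDiv X (A₂ ∪ {x}) := by
      rw [Finset.union_comm]
    rw [hcomm] at t1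
    linarith
  rcases Finset.eq_empty_or_nonempty (𝓐.sup id) with hUe | hUne
  · refine ⟨f₀, hf₀, f₀, hf₀, ∅, ∅, ?_, ?_, ?_, hfourth f₀ hf₀ f₀ hf₀ ∅ ∅⟩
    · rw [hfz f₀ hf₀, hm0]
    · rw [hfz f₀ hf₀, hm0]
    · have h1 : diamDiv X (𝓐.sup id) = 0 := by rw [hUe]; exact dd_empty
      have h2 : 0 ≤ ∑ A ∈ 𝓐, sInf ((fun f => f A) '' (G : Set (Finset X → ℝ))) := Finset.sum_nonneg fun A _ => hmnn A
      have h3 : diamDiv X ((∅ : Finset X) ∪ ∅) = 0 := by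
        rw [Finset.union_empty]; exact dd_empty
      have h4 := hfz f₀ hf₀
      rw [h1, h3, h4]
      linarith
  · have hne2 : ((𝓐.sup id) ×ˢ (𝓐.sup id)).Nonempty := hUne.product hUne
    obtain ⟨p, hp, hpmax⟩ := Finset.exists_mem_eq_sup' hne2 (fun q => dist q.1 q.2)
    obtain ⟨hp1, hp2⟩ := Finset.mem_product.1 hp
    obtain ⟨A₁, hA₁, ha₁⟩ := Finset.mem_sup.1 hp1
    obtain ⟨A₂, hA₂, ha₂⟩ := Finset.mem_sup.1 hp2
    have ha₁' : p.1 ∈ A₁ := ha₁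
    have ha₂' : p.2 ∈ A₂ := ha₂
    have hdU : diamDiv X (𝓐.sup id) ≤ dist p.1 p.2 := by
      rw [dd_def]
      apply Metric.diam_le_of_forall_dist_le dist_nonneg
      intro a ha b hb
      have hmem : (a, b) ∈ (𝓐.sup id) ×ˢ (𝓐.sup id) :=
        Finset.mem_product.2 ⟨Finset.mem_coe.1 ha, Finset.mem_coe.1 hb⟩
      have h := Finset.le_sup' (fun q : X × X => dist q.1 q.2) hmem
      exact h.trans (le_of_eq hpmax)
    obtain ⟨f₁, hf₁, hm₁⟩ := hatt A₁
    by_cases h12 : A₁ = A₂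
    · subst h12
      refine ⟨f₁, hf₁, f₁, hf₁, A₁, ∅, hm₁, by rw [hfz f₁ hf₁, hm0], ?_,
        hfourth f₁ hf₁ f₁ hf₁ A₁ ∅⟩
      have hd12 : dist p.1 p.2 ≤ diamDiv X (A₁ ∪ (∅ : Finset X)) := by
        rw [dd_def]
        exact Metric.dist_le_diam_of_mem (A₁ ∪ (∅ : Finset X)).finite_toSet.isBounded
          (Finset.mem_coe.2 (Finset.mem_union_left _ ha₁'))
          (Finset.mem_coe.2 (Finset.mem_union_left _ ha₂'))
      have hsum : sInf ((fun f => f A₁) '' (G : Set (Finset X → ℝ))) ≤ ∑ A ∈ 𝓐, sInf ((fun f => f A) '' (G : Set (Finset X → ℝ))) := by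
        have := Finset.sum_le_sum_of_subset_of_nonneg
          (Finset.singleton_subset_iff.2 hA₁) (fun A _ _ => hmnn A)
        simpa using this
      have h4 := hfz f₁ hf₁
      rw [h4, hm₁]
      linarith
    · obtain ⟨f₂, hf₂, hm₂⟩ := hatt A₂
      refine ⟨f₁, hf₁, f₂, hf₂, A₁, A₂, hm₁, hm₂, ?_, hfourth f₁ hf₁ f₂ hf₂ A₁ A₂⟩
      have hd12 : dist p.1 p.2 ≤ diamDiv X (A₁ ∪ A₂) := by
        rw [dd_def]
        exact Metric.dist_le_diam_of_mem (A₁ ∪ A₂).finite_toSet.isBounded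
          (Finset.mem_coe.2 (Finset.mem_union_left _ ha₁'))
          (Finset.mem_coe.2 (Finset.mem_union_right _ ha₂'))
      have hsub : ({A₁, A₂} : Finset (Finset X)) ⊆ 𝓐 := by
        intro A hA
        rcases Finset.mem_insert.1 hA with rfl | hA
        · exact hA₁
        · rw [Finset.mem_singleton.1 hA]; exact hA₂
      have hsum : sInf ((fun f => f A₁) '' (G : Set (Finset X → ℝ))) + sInf ((fun f => f A₂) '' (G : Set (Finset X → ℝ))) ≤ ∑ A ∈ 𝓐, sInf ((fun f => f A) '' (G : Set (Finset X → ℝ))) := by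
        have h := Finset.sum_le_sum_of_subset_of_nonneg hsub (fun A _ _ => hmnn A)
        rwa [Finset.sum_pair h12] at h
      rw [hm₁, hm₂]
      linarith


end TSaux

/-- the tight span of a diameter diversity is itself a diameter diversity:
for finite `F ⊆ T_X` with at least two elements, `δ_T F = max { δ_T {f₁, f₂} : f₁, f₂ ∈ F }`. -/
theorem tightSpan_of_diamDiv_is_diameter {X : Type*} [MetricSpace X]
    (F : Finset (Finset X → ℝ)) (hF : ∀ f ∈ F, MemT (diamDiv X) f)
    (hcard : 2 ≤ F.card) :
    ∃ f₁ ∈ F, ∃ f₂ ∈ F,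
      deltaT (diamDiv X) F = deltaT (diamDiv X) {f₁, f₂} ∧
      ∀ g₁ ∈ F, ∀ g₂ ∈ F,
        deltaT (diamDiv X) {g₁, g₂} ≤ deltaT (diamDiv X) F := by
  classical
  have hFne : F ≠ ∅ := by
    intro h; rw [h] at hcard; simp at hcard
  have hFne' : F.Nonempty := Finset.nonempty_iff_ne_empty.2 hFne
  rcases isEmpty_or_nonempty X with hX | hX
  · exfalso
    obtain ⟨f, hf, g, hg, hfg⟩ := Finset.one_lt_card.1 (by omega : 1 < F.card)
    apply hfg
    funext B
    have hB : B = ∅ := Finset.eq_empty_of_forall_notMem fun a _ => hX.false a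
    rw [hB, (hF f hf).1.1, (hF g hg).1.1]
  obtain ⟨x⟩ := hX
  have hpairT : ∀ g₁ ∈ F, ∀ g₂ ∈ F, ∀ f ∈ ({g₁, g₂} : Finset (Finset X → ℝ)),
      MemT (diamDiv X) f := by
    intro g₁ h₁ g₂ h₂ f hf
    rcases Finset.mem_insert.1 hf with rfl | hf
    · exact hF _ h₁
    · rw [Finset.mem_singleton.1 hf]; exact hF _ h₂
  have hpairne : ∀ g₁ g₂ : Finset X → ℝ, ({g₁, g₂} : Finset (Finset X → ℝ)) ≠ ∅ :=
    fun g₁ g₂ => Finset.insert_ne_empty _ _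
  have hzero : ∀ G : Finset (Finset X → ℝ), (0 : ℝ) ∈ TSaux.Sset (diamDiv X) G := by
    intro G
    exact ⟨∅, by simp [TSaux.dd_empty]⟩
  have hbdd : ∀ G : Finset (Finset X → ℝ), G.Nonempty → (∀ f ∈ G, MemT (diamDiv X) f) →
      BddAbove (TSaux.Sset (diamDiv X) G) := by
    intro G hG hGT
    refine ⟨2 * ∑ f ∈ G, f {x}, ?_⟩
    rintro r ⟨𝓐, rfl⟩
    obtain ⟨f₁, hf₁, f₂, hf₂, A₁, A₂, -, -, h1, h2⟩ := TSaux.key hG hGT x 𝓐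
    have b1 : f₁ {x} ≤ ∑ f ∈ G, f {x} :=
      Finset.single_le_sum (fun f hf => TSaux.memP_nonneg (hGT f hf).1 {x}) hf₁
    have b2 : f₂ {x} ≤ ∑ f ∈ G, f {x} :=
      Finset.single_le_sum (fun f hf => TSaux.memP_nonneg (hGT f hf).1 {x}) hf₂
    linarith
  have hbddF := hbdd F hFne' hF
  have hmono : ∀ g₁ ∈ F, ∀ g₂ ∈ F,
      deltaT (diamDiv X) {g₁, g₂} ≤ deltaT (diamDiv X) F := by
    intro g₁ h₁ g₂ h₂
    rw [TSaux.deltaT_eq _ _ (hpairne g₁ g₂), TSaux.deltaT_eq _ _ hFne]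
    apply csSup_le ⟨0, hzero _⟩
    rintro r ⟨𝓐, rfl⟩
    have hle : ∀ A : Finset X,
        sInf ((fun f => f A) '' (F : Set (Finset X → ℝ))) ≤
          sInf ((fun f => f A) ''
            (({g₁, g₂} : Finset (Finset X → ℝ)) : Set (Finset X → ℝ))) := by
      intro A
      apply csInf_le_csInf
      · refine ⟨0, ?_⟩
        rintro r ⟨f, hf, rfl⟩
        exact TSaux.memP_nonneg (hF f (Finset.mem_coe.1 hf)).1 A
      · exact ⟨g₁ A, ⟨g₁, by simp, rfl⟩⟩
      · apply Set.image_mono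
        intro f hf
        rcases Finset.mem_insert.1 (Finset.mem_coe.1 hf) with rfl | hf'
        · exact Finset.mem_coe.2 h₁
        · rw [Finset.mem_singleton.1 hf']; exact Finset.mem_coe.2 h₂
    have hmem : diamDiv X (𝓐.sup id) -
        ∑ A ∈ 𝓐, sInf ((fun f => f A) '' (F : Set (Finset X → ℝ))) ∈
        TSaux.Sset (diamDiv X) F := ⟨𝓐, rfl⟩
    have hsup := le_csSup hbddF hmem
    have hsum : ∑ A ∈ 𝓐, sInf ((fun f => f A) '' (F : Set (Finset X → ℝ))) ≤
        ∑ A ∈ 𝓐, sInf ((fun f => f A) ''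
          (({g₁, g₂} : Finset (Finset X → ℝ)) : Set (Finset X → ℝ))) :=
      Finset.sum_le_sum fun A _ => hle A
    linarith
  have hFFne : (F ×ˢ F).Nonempty := hFne'.product hFne'
  obtain ⟨p, hp, hpmax⟩ := Finset.exists_mem_eq_sup' hFFne
    (fun q => deltaT (diamDiv X) {q.1, q.2})
  obtain ⟨hp1, hp2⟩ := Finset.mem_product.1 hp
  refine ⟨p.1, hp1, p.2, hp2, ?_, fun g₁ h₁ g₂ h₂ => hmono g₁ h₁ g₂ h₂⟩
  refine le_antisymm ?_ (hmono _ hp1 _ hp2)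
  rw [TSaux.deltaT_eq _ _ hFne]
  apply csSup_le ⟨0, hzero F⟩
  rintro r ⟨𝓐, rfl⟩
  obtain ⟨f₁, hf₁, f₂, hf₂, A₁, A₂, hm₁, hm₂, h1, -⟩ := TSaux.key hFne' hF x 𝓐
  have hTpair := hpairT f₁ hf₁ f₂ hf₂
  have hpne : ({f₁, f₂} : Finset (Finset X → ℝ)).Nonempty := ⟨f₁, by simp⟩
  have hbp := hbdd {f₁, f₂} hpne hTpair
  have hmem : diamDiv X (({A₁, A₂} : Finset (Finset X)).sup id) -
      ∑ A ∈ ({A₁, A₂} : Finset (Finset X)),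
        sInf ((fun f => f A) '' (({f₁, f₂} : Finset (Finset X → ℝ)) : Set (Finset X → ℝ))) ∈
      TSaux.Sset (diamDiv X) {f₁, f₂} := ⟨{A₁, A₂}, rfl⟩
  have hsupid : (({A₁, A₂} : Finset (Finset X)).sup id) = A₁ ∪ A₂ := by
    simp [Finset.sup_insert]
  have hminle : ∀ A : Finset X, ∀ f ∈ ({f₁, f₂} : Finset (Finset X → ℝ)),
      sInf ((fun g => g A) '' (({f₁, f₂} : Finset (Finset X → ℝ)) : Set (Finset X → ℝ))) ≤
        f A := by
    intro A f hf
    refine csInf_le ⟨0, ?_⟩ ⟨f, Finset.mem_coe.2 hf, rfl⟩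
    rintro r ⟨g, hg, rfl⟩
    exact TSaux.memP_nonneg (hTpair g (Finset.mem_coe.1 hg)).1 A
  have hs : ∑ A ∈ ({A₁, A₂} : Finset (Finset X)),
      sInf ((fun f => f A) '' (({f₁, f₂} : Finset (Finset X → ℝ)) : Set (Finset X → ℝ))) ≤
      f₁ A₁ + f₂ A₂ := by
    by_cases h12 : A₁ = A₂
    · subst h12
      have hpair1 : ({A₁, A₁} : Finset (Finset X)) = {A₁} := by simp
      rw [hpair1, Finset.sum_singleton]
      have h1' := hminle A₁ f₁ (by simp)
      have h2' := TSaux.memP_nonneg (hF f₂ hf₂).1 A₁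
      linarith
    · rw [Finset.sum_pair h12]
      exact add_le_add (hminle A₁ f₁ (by simp)) (hminle A₂ f₂ (by simp))
  have hsup := le_csSup hbp hmem
  rw [hsupid] at hsup
  have hfin : deltaT (diamDiv X) {f₁, f₂} ≤ deltaT (diamDiv X) {p.1, p.2} := by
    have hmem2 : (f₁, f₂) ∈ F ×ˢ F := Finset.mem_product.2 ⟨hf₁, hf₂⟩
    have h := Finset.le_sup'
      (fun q : (Finset X → ℝ) × (Finset X → ℝ) => deltaT (diamDiv X) {q.1, q.2}) hmem2
    exact h.trans (le_of_eq hpmax)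
  have hdp : deltaT (diamDiv X) {f₁, f₂} = sSup (TSaux.Sset (diamDiv X) {f₁, f₂}) :=
    TSaux.deltaT_eq _ _ (hpairne f₁ f₂)
  linarith


end
end

section
/- Let (X, d) be a metric space with metric tight span (T^d_X, d_T), let (X, δ) be the diameter diversity δ = diam_d, and let (T^δ_X, δ_T) be the diversity tight span of (X, δ). Then the metric space obtained by restricting δ_T to pairs of elements of T^δ_X (i.e. the induced metric d_{δ_T}(f, g) = δ_T({f, g})) is isometric to (T^d_X, d_T). -/
open scoped Classical

noncomputable section

/-- Membership in `P_X` for the metric tight span: `f x + f y ≥ d(x,y)` for all `x, y`. -/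
def MetricMemP {X : Type*} [MetricSpace X] (f : X → ℝ) : Prop :=
  ∀ x y : X, dist x y ≤ f x + f y

/-- Membership in the metric tight span `T^d_X`: pointwise-minimal such functions. -/
def MetricMemT {X : Type*} [MetricSpace X] (f : X → ℝ) : Prop :=
  MetricMemP f ∧ ∀ g : X → ℝ, MetricMemP g → (∀ x, g x ≤ f x) → g = f

/-- The metric on the metric tight span: `d_T(f,g) = sup_x |f x - g x|`. -/
noncomputable def dT {X : Type*} (f g : X → ℝ) : ℝ :=
  sSup (Set.range fun x : X => |f x - g x|)

namespace TSAux

variable {X : Type*} [MetricSpace X]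

/-- `Φ f A = max (diam A) (max_{a∈A} f a)` for nonempty `A`, `0` for `∅`. -/
noncomputable def Phi (f : X → ℝ) : Finset X → ℝ :=
  fun A => if h : A.Nonempty then max (Metric.diam (A : Set X)) (A.sup' h f) else 0

lemma mmp_nonneg {f : X → ℝ} (hf : MetricMemP f) (x : X) : 0 ≤ f x := by
  have := hf x x; simp at this; linarith

lemma Phi_empty (f : X → ℝ) : Phi f ∅ = 0 := by simp [Phi]

lemma diam_le_Phi (f : X → ℝ) (A : Finset X) : Metric.diam (A : Set X) ≤ Phi f A := by
  unfold Phi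
  split
  · exact le_max_left _ _
  · next h =>
      rw [Finset.not_nonempty_iff_eq_empty] at h
      simp [h]

lemma Phi_nonneg (f : X → ℝ) (A : Finset X) : 0 ≤ Phi f A :=
  le_trans Metric.diam_nonneg (diam_le_Phi f A)

lemma le_Phi (f : X → ℝ) {A : Finset X} {x : X} (hx : x ∈ A) : f x ≤ Phi f A := by
  unfold Phi
  rw [dif_pos ⟨x, hx⟩]
  exact le_trans (Finset.le_sup' f hx) (le_max_right _ _)

lemma Phi_singleton {f : X → ℝ} {x : X} (h0 : 0 ≤ f x) : Phi f {x} = f x := by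
  unfold Phi
  rw [dif_pos ⟨x, Finset.mem_singleton_self x⟩]
  simp [h0]

lemma finset_bounded (A : Finset X) : Bornology.IsBounded (A : Set X) :=
  (A.finite_toSet).isBounded

lemma dist_le_diam {A : Finset X} {x y : X} (hx : x ∈ A) (hy : y ∈ A) :
    dist x y ≤ Metric.diam (A : Set X) :=
  Metric.dist_le_diam_of_mem (finset_bounded A) hx hy

lemma diam_union_le_Phi {f : X → ℝ} (hf : MetricMemP f) (A B : Finset X) :
    Metric.diam ((A ∪ B : Finset X) : Set X) ≤ Phi f A + Phi f B := by
  apply Metric.diam_le_of_forall_dist_le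
    (add_nonneg (Phi_nonneg f A) (Phi_nonneg f B))
  intro x hx y hy
  simp only [Finset.coe_union, Set.mem_union, Finset.mem_coe] at hx hy
  rcases hx with hx | hx <;> rcases hy with hy | hy
  · exact le_trans (dist_le_diam hx hy) (le_trans (diam_le_Phi f A)
      (le_add_of_nonneg_right (Phi_nonneg f B)))
  · exact le_trans (hf x y) (add_le_add (le_Phi f hx) (le_Phi f hy))
  · rw [dist_comm]
    exact le_trans (hf y x) (add_le_add (le_Phi f hy) (le_Phi f hx))
  · exact le_trans (dist_le_diam hx hy) (le_trans (diam_le_Phi f B)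
      (le_add_of_nonneg_left (Phi_nonneg f A)))


lemma memP_diam_le {h : Finset X → ℝ} (hh : MemP (diamDiv X) h) (A : Finset X) :
    Metric.diam (A : Set X) ≤ h A := by
  have := hh.2 {A}
  simpa [diamDiv] using this

lemma memP_nonneg {h : Finset X → ℝ} (hh : MemP (diamDiv X) h) (A : Finset X) : 0 ≤ h A :=
  le_trans Metric.diam_nonneg (memP_diam_le hh A)

lemma memP_pair {h : Finset X → ℝ} (hh : MemP (diamDiv X) h) (A B : Finset X) :
    Metric.diam ((A ∪ B : Finset X) : Set X) ≤ h A + h B := by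
  by_cases hAB : A = B
  · subst hAB
    rw [Finset.union_self]
    exact le_trans (memP_diam_le hh A) (le_add_of_nonneg_right (memP_nonneg hh A))
  · have := hh.2 {A, B}
    rw [Finset.sum_pair hAB] at this
    simpa [diamDiv, hAB] using this

/-- Sufficient condition for `MemP (diamDiv X)`. -/
lemma memP_of {h : Finset X → ℝ} (h0 : h ∅ = 0)
    (hd : ∀ A : Finset X, Metric.diam (A : Set X) ≤ h A)
    (hp : ∀ A B : Finset X, A ≠ B → Metric.diam ((A ∪ B : Finset X) : Set X) ≤ h A + h B) :
    MemP (diamDiv X) h := by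
  have hnn : ∀ A : Finset X, 0 ≤ h A := fun A =>
    le_trans Metric.diam_nonneg (hd A)
  refine ⟨h0, fun 𝓐 => ?_⟩
  have hsum : (0:ℝ) ≤ ∑ A ∈ 𝓐, h A := Finset.sum_nonneg fun A _ => hnn A
  show Metric.diam ((𝓐.sup id : Finset X) : Set X) ≤ _
  apply Metric.diam_le_of_forall_dist_le hsum
  intro x hx y hy
  rw [Finset.mem_coe, Finset.mem_sup] at hx hy
  obtain ⟨A₀, hA₀, hxA⟩ := hx
  obtain ⟨B₀, hB₀, hyB⟩ := hy
  simp only [id] at hxA hyB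
  by_cases hAB : A₀ = B₀
  · subst hAB
    calc dist x y ≤ Metric.diam (A₀ : Set X) :=
          Metric.dist_le_diam_of_mem (A₀.finite_toSet).isBounded hxA hyB
      _ ≤ h A₀ := hd A₀
      _ ≤ ∑ A ∈ 𝓐, h A := Finset.single_le_sum (fun A _ => hnn A) hA₀
  · calc dist x y ≤ Metric.diam ((A₀ ∪ B₀ : Finset X) : Set X) :=
          Metric.dist_le_diam_of_mem ((A₀ ∪ B₀).finite_toSet).isBounded
            (by simp [hxA]) (by simp [hyB])
      _ ≤ h A₀ + h B₀ := hp A₀ B₀ hAB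
      _ = ∑ A ∈ ({A₀, B₀} : Finset (Finset X)), h A := (Finset.sum_pair hAB).symm
      _ ≤ ∑ A ∈ 𝓐, h A := Finset.sum_le_sum_of_subset_of_nonneg
            (by intro A hA; simp only [Finset.mem_insert, Finset.mem_singleton] at hA
                rcases hA with rfl | rfl <;> assumption)
            (fun A _ _ => hnn A)


/-- key metric-side minimality tool -/
lemma metric_update {f : X → ℝ} (hf : MetricMemT f) (x : X) (c : ℝ) (h0 : 0 ≤ c)
    (hc : ∀ y, y ≠ x → dist x y ≤ c + f y) : f x ≤ c := by
  set f' : X → ℝ := fun z => if z = x then min c (f x) else f z with hf'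
  have hnn := mmp_nonneg hf.1
  have hP : MetricMemP f' := by
    intro u v
    by_cases hu : u = x <;> by_cases hv : v = x
    · simp only [hf', if_pos hu, if_pos hv]
      rw [hu, hv, dist_self]
      have : 0 ≤ min c (f x) := le_min h0 (hnn x)
      linarith
    · simp only [hf', if_pos hu, if_neg hv]
      rw [hu]
      rcases le_total c (f x) with h | h
      · rw [min_eq_left h]; exact hc v hv
      · rw [min_eq_right h]; exact hf.1 x v
    · simp only [hf', if_neg hu, if_pos hv]
      rw [hv, dist_comm, add_comm]
      rcases le_total c (f x) with h | h
      · rw [min_eq_left h]; exact hc u hu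
      · rw [min_eq_right h]; exact hf.1 x u
    · simp only [hf', if_neg hu, if_neg hv]; exact hf.1 u v
  have hle : ∀ z, f' z ≤ f z := by
    intro z
    by_cases hz : z = x
    · subst hz; simp only [hf', if_pos rfl]; exact min_le_right _ _
    · simp [hf', hz]
  have heq := hf.2 f' hP hle
  have hx : f' x = f x := by rw [heq]
  simp only [hf', if_pos rfl] at hx
  rcases le_total c (f x) with h | h
  · rw [min_eq_left h] at hx; exact le_of_eq hx.symm
  · exact h


/-- key diversity-side minimality tool -/
lemma div_update {h : Finset X → ℝ} (hh : MemT (diamDiv X) h) (A₀ : Finset X) (c : ℝ)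
    (h0 : Metric.diam (A₀ : Set X) ≤ c)
    (hc : ∀ B, B ≠ A₀ → Metric.diam ((A₀ ∪ B : Finset X) : Set X) ≤ c + h B) :
    h A₀ ≤ c := by
  by_cases hA₀ : A₀ = ∅
  · subst hA₀
    rw [hh.1.1]
    simpa using h0
  set h' : Finset X → ℝ := fun A => if A = A₀ then min c (h A₀) else h A with hh'
  have hP : MemP (diamDiv X) h' := by
    apply memP_of
    · simp only [hh', if_neg (fun hx : (∅ : Finset X) = A₀ => hA₀ hx.symm)]
      exact hh.1.1
    · intro A
      by_cases hA : A = A₀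
      · subst hA
        simp only [hh', if_pos rfl]
        exact le_min h0 (memP_diam_le hh.1 A)
      · simp only [hh', if_neg hA]
        exact memP_diam_le hh.1 A
    · intro A B hAB
      by_cases hA : A = A₀ <;> by_cases hB : B = A₀
    
      · exact absurd (hA.trans hB.symm) hAB
      · simp only [hh', if_pos hA, if_neg hB]
        rw [hA]
        rcases le_total c (h A₀) with hm | hm
        · rw [min_eq_left hm]
          exact hc B hB
        · rw [min_eq_right hm]
          exact memP_pair hh.1 A₀ B
      · simp only [hh', if_neg hA, if_pos hB]
        rw [hB, Finset.union_comm, add_comm]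
        rcases le_total c (h A₀) with hm | hm
        · rw [min_eq_left hm]
          exact hc A hA
        · rw [min_eq_right hm]
          exact memP_pair hh.1 A₀ A
      · simp only [hh', if_neg hA, if_neg hB]
        exact memP_pair hh.1 A B
  have hle : ∀ A, h' A ≤ h A := by
    intro A
    by_cases hA : A = A₀
    · subst hA; simp only [hh', if_pos rfl]; exact min_le_right _ _
    · simp [hh', hA]
  have heq := hh.2 h' hP hle
  have hx : h' A₀ = h A₀ := by rw [heq]
  simp only [hh', if_pos rfl] at hx
  rcases le_total c (h A₀) with hm | hm
  · rw [min_eq_left hm] at hx; exact le_of_eq hx.symm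
  · exact hm

/-- monotonicity of minimal elements on singletons -/
lemma memT_mono {h : Finset X → ℝ} (hh : MemT (diamDiv X) h) {y : X} {B : Finset X}
    (hy : y ∈ B) : h {y} ≤ h B := by
  apply div_update hh {y} (h B)
  · simp only [Finset.coe_singleton, Metric.diam_singleton]
    exact memP_nonneg hh.1 B
  · intro C _
    calc Metric.diam (({y} ∪ C : Finset X) : Set X)
        ≤ Metric.diam ((B ∪ C : Finset X) : Set X) := by
          apply Metric.diam_mono _ (finset_bounded _)
          intro z hz
          simp only [Finset.coe_union, Set.mem_union, Finset.mem_coe,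
            Finset.coe_singleton, Set.mem_singleton_iff] at hz ⊢
          rcases hz with rfl | hz
          · exact Or.inl hy
          · exact Or.inr hz
      _ ≤ h B + h C := memP_pair hh.1 B C

/-- 1-Lipschitz property of metric tight span elements -/
lemma memT_lip {f : X → ℝ} (hf : MetricMemT f) (x z : X) : f x ≤ f z + dist x z := by
  apply metric_update hf x (f z + dist x z)
    (add_nonneg (mmp_nonneg hf.1 z) dist_nonneg)
  intro y _
  calc dist x y ≤ dist x z + dist z y := dist_triangle x z y
    _ ≤ dist x z + (f z + f y) := by linarith [hf.1 z y]
    _ = f z + dist x z + f y := by ring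

/-- tightness: for each `ε > 0` there is `y` with `f x + f y < d(x,y) + ε`. -/
lemma memT_exists_eps {f : X → ℝ} (hf : MetricMemT f) (x : X) {ε : ℝ} (hε : 0 < ε) :
    ∃ y, f x + f y < dist x y + ε := by
  by_contra hcon
  push_neg at hcon
  have hnn := mmp_nonneg hf.1
  have hle : f x ≤ max 0 (f x - ε) := by
    apply metric_update hf x _ (le_max_left _ _)
    intro y _
    have := hcon y
    have : dist x y ≤ (f x - ε) + f y := by linarith
    exact le_trans this (by gcongr; exact le_max_right _ _)
  rcases le_total (f x - ε) 0 with hm | hm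
  · rw [max_eq_left hm] at hle
    have hfx : f x = 0 := le_antisymm hle (hnn x)
    have := hcon x
    rw [dist_self, hfx] at this
    linarith
  · rw [max_eq_right hm] at hle
    linarith

lemma memP_Phi {f : X → ℝ} (hf : MetricMemP f) : MemP (diamDiv X) (Phi f) :=
  memP_of (Phi_empty f) (diam_le_Phi f) (fun A B _ => diam_union_le_Phi hf A B)

lemma memT_Phi {f : X → ℝ} (hf : MetricMemT f) : MemT (diamDiv X) (Phi f) := by
  refine ⟨memP_Phi hf.1, fun g hg hle => ?_⟩
  funext A
  refine le_antisymm (hle A) ?_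
  rcases Finset.eq_empty_or_nonempty A with rfl | hA
  · rw [Phi_empty, hg.1]
  unfold Phi
  rw [dif_pos hA]
  apply max_le (memP_diam_le hg A)
  apply Finset.sup'_le
  intro a ha
  apply metric_update hf a (g A) (memP_nonneg hg A)
  intro y _
  calc dist a y ≤ Metric.diam ((A ∪ {y} : Finset X) : Set X) :=
        Metric.dist_le_diam_of_mem (finset_bounded _) (by simp [ha]) (by simp)
    _ ≤ g A + g {y} := memP_pair hg A {y}
    _ ≤ g A + f y := by
        have hy := hle {y}
        rw [Phi_singleton (mmp_nonneg hf.1 y)] at hy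
        linarith

lemma memT_surj {h : Finset X → ℝ} (hh : MemT (diamDiv X) h) :
    MetricMemT (fun x => h {x}) ∧ Phi (fun x => h {x}) = h := by
  set f : X → ℝ := fun x => h {x} with hfdef
  have hfP : MetricMemP f := by
    intro x y
    by_cases hxy : x = y
    · rw [hxy, dist_self]
      have := memP_nonneg hh.1 {y}
      simp only [hfdef, hxy]
      linarith
    · calc dist x y ≤ Metric.diam ((({x} : Finset X) ∪ {y} : Finset X) : Set X) :=
            Metric.dist_le_diam_of_mem (finset_bounded _) (by simp) (by simp)
        _ ≤ h {x} + h {y} := memP_pair hh.1 _ _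
  have hfT : MetricMemT f := by
    refine ⟨hfP, fun g hg hle => ?_⟩
    funext x₀
    refine le_antisymm (hle x₀) ?_
    show h {x₀} ≤ g x₀
    apply div_update hh {x₀} (g x₀)
    · simpa using mmp_nonneg hg x₀
    · intro B _
      apply Metric.diam_le_of_forall_dist_le
        (add_nonneg (mmp_nonneg hg x₀) (memP_nonneg hh.1 B))
      intro u hu v hv
      simp only [Finset.coe_union, Set.mem_union, Finset.coe_singleton,
        Set.mem_singleton_iff, Finset.mem_coe] at hu hv
      rcases hu with hu | hu <;> rcases hv with hv | hv
      · rw [hu, hv, dist_self]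
        exact add_nonneg (mmp_nonneg hg x₀) (memP_nonneg hh.1 B)
      · rw [hu]
        calc dist x₀ v ≤ g x₀ + g v := hg x₀ v
          _ ≤ g x₀ + h {v} := by have := hle v; simp only [hfdef] at this; linarith
          _ ≤ g x₀ + h B := by linarith [memT_mono hh hv]
      · rw [hv, dist_comm]
        calc dist x₀ u ≤ g x₀ + g u := hg x₀ u
          _ ≤ g x₀ + h {u} := by have := hle u; simp only [hfdef] at this; linarith
          _ ≤ g x₀ + h B := by linarith [memT_mono hh hu]
      · calc dist u v ≤ Metric.diam (B : Set X) := dist_le_diam hu hv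
          _ ≤ h B := memP_diam_le hh.1 B
          _ ≤ g x₀ + h B := le_add_of_nonneg_left (mmp_nonneg hg x₀)
  refine ⟨hfT, ?_⟩
  apply hh.2 (Phi f) (memP_Phi hfP)
  intro A
  rcases Finset.eq_empty_or_nonempty A with rfl | hA
  · rw [Phi_empty, hh.1.1]
  unfold Phi
  rw [dif_pos hA]
  exact max_le (memP_diam_le hh.1 A) (Finset.sup'_le hA _ fun a ha => memT_mono hh ha)

def Sset (f g : X → ℝ) : Set ℝ :=
  {r | ∃ 𝓐 : Finset (Finset X),
    r = Metric.diam ((𝓐.sup id : Finset X) : Set X) - ∑ A ∈ 𝓐, min (Phi f A) (Phi g A)}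

lemma Sset_comm (f g : X → ℝ) : Sset f g = Sset g f := by
  have hmin : ∀ (u v : X → ℝ) (𝓐 : Finset (Finset X)),
      ∑ A ∈ 𝓐, min (Phi u A) (Phi v A) = ∑ A ∈ 𝓐, min (Phi v A) (Phi u A) :=
    fun u v 𝓐 => Finset.sum_congr rfl fun A _ => min_comm _ _
  ext r
  constructor <;> rintro ⟨𝓐, rfl⟩ <;> exact ⟨𝓐, by rw [hmin]⟩

lemma zero_mem_Sset (f g : X → ℝ) : (0 : ℝ) ∈ Sset f g :=
  ⟨∅, by simp⟩

lemma dT_nonneg (f g : X → ℝ) : 0 ≤ dT f g := by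
  unfold dT
  exact Real.sSup_nonneg (by rintro r ⟨x, rfl⟩; exact abs_nonneg _)

lemma bddAbove_absdiff {f g : X → ℝ} (hf : MetricMemT f) (hg : MetricMemT g) :
    BddAbove (Set.range fun x : X => |f x - g x|) := by
  rcases isEmpty_or_nonempty X with hX | ⟨⟨z⟩⟩
  · rw [Set.range_eq_empty]
    exact bddAbove_empty
  · refine ⟨f z + g z, ?_⟩
    rintro r ⟨x, rfl⟩
    rw [abs_sub_le_iff]
    constructor
    · have h1 := memT_lip hf x z
      have h2 := hg.1 x z
      linarith
    · have h1 := memT_lip hg x z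
      have h2 := hf.1 x z
      linarith

lemma abs_sub_le_dT {f g : X → ℝ} (hf : MetricMemT f) (hg : MetricMemT g) (x : X) :
    |f x - g x| ≤ dT f g :=
  le_csSup (bddAbove_absdiff hf hg) ⟨x, rfl⟩

lemma Sset_ub {f g : X → ℝ} (hf : MetricMemT f) (hg : MetricMemT g) :
    ∀ r ∈ Sset f g, r ≤ dT f g := by
  rintro r ⟨𝓐, rfl⟩
  have hm : ∀ A : Finset X, 0 ≤ min (Phi f A) (Phi g A) :=
    fun A => le_min (Phi_nonneg f A) (Phi_nonneg g A)
  have hsum : (0:ℝ) ≤ ∑ A ∈ 𝓐, min (Phi f A) (Phi g A) :=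
    Finset.sum_nonneg fun A _ => hm A
  have hD := dT_nonneg f g
  have key : Metric.diam ((𝓐.sup id : Finset X) : Set X)
      ≤ (∑ A ∈ 𝓐, min (Phi f A) (Phi g A)) + dT f g := by
    apply Metric.diam_le_of_forall_dist_le (by linarith)
    intro x hx y hy
    rw [Finset.mem_coe, Finset.mem_sup] at hx hy
    obtain ⟨A₀, hA₀, hxA⟩ := hx
    obtain ⟨B₀, hB₀, hyB⟩ := hy
    simp only [id] at hxA hyB
    by_cases hAB : A₀ = B₀
    · have hyA : y ∈ A₀ := by rw [hAB]; exact hyB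
      calc dist x y ≤ Metric.diam (A₀ : Set X) := dist_le_diam hxA hyA
        _ ≤ min (Phi f A₀) (Phi g A₀) := le_min (diam_le_Phi f A₀) (diam_le_Phi g A₀)
        _ ≤ ∑ A ∈ 𝓐, min (Phi f A) (Phi g A) := Finset.single_le_sum (fun A _ => hm A) hA₀
        _ ≤ _ := le_add_of_nonneg_right hD
    · have h2 : dist x y ≤ min (Phi f A₀) (Phi g A₀) + min (Phi f B₀) (Phi g B₀) + dT f g := by
        rcases le_total (Phi f A₀) (Phi g A₀) with h₁ | h₁ <;>
          rcases le_total (Phi f B₀) (Phi g B₀) with h₂ | h₂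
        · rw [min_eq_left h₁, min_eq_left h₂]
          have := diam_union_le_Phi hf.1 A₀ B₀
          have hd : dist x y ≤ Metric.diam ((A₀ ∪ B₀ : Finset X) : Set X) :=
            Metric.dist_le_diam_of_mem (finset_bounded _) (by simp [hxA]) (by simp [hyB])
          linarith
        · rw [min_eq_left h₁, min_eq_right h₂]
          have h3 : f y - g y ≤ dT f g := (abs_sub_le_iff.mp (abs_sub_le_dT hf hg y)).1
          have h4 : f x ≤ Phi f A₀ := le_Phi f hxA
          have h5 : g y ≤ Phi g B₀ := le_Phi g hyB
          have := hf.1 x y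
          linarith
        · rw [min_eq_right h₁, min_eq_left h₂]
          have h3 : f x - g x ≤ dT f g := (abs_sub_le_iff.mp (abs_sub_le_dT hf hg x)).1
          have h4 : g x ≤ Phi g A₀ := le_Phi g hxA
          have h5 : f y ≤ Phi f B₀ := le_Phi f hyB
          have := hf.1 x y
          linarith
        · rw [min_eq_right h₁, min_eq_right h₂]
          have := diam_union_le_Phi hg.1 A₀ B₀
          have hd : dist x y ≤ Metric.diam ((A₀ ∪ B₀ : Finset X) : Set X) :=
            Metric.dist_le_diam_of_mem (finset_bounded _) (by simp [hxA]) (by simp [hyB])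
          linarith
      have h6 : min (Phi f A₀) (Phi g A₀) + min (Phi f B₀) (Phi g B₀)
          ≤ ∑ A ∈ 𝓐, min (Phi f A) (Phi g A) := by
        have e : ∑ A ∈ ({A₀, B₀} : Finset (Finset X)), min (Phi f A) (Phi g A)
            = min (Phi f A₀) (Phi g A₀) + min (Phi f B₀) (Phi g B₀) :=
          Finset.sum_pair hAB
        rw [← e]
        apply Finset.sum_le_sum_of_subset_of_nonneg
        · intro A hA
          simp only [Finset.mem_insert, Finset.mem_singleton] at hA
          rcases hA with rfl | rfl <;> assumption
        · exact fun A _ _ => hm A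
      linarith
  linarith

lemma half_bound {f g : X → ℝ} (hf : MetricMemT f) (hg : MetricMemT g) (x : X) :
    f x - g x ≤ sSup (Sset f g) := by
  have hbddS : BddAbove (Sset f g) := ⟨dT f g, Sset_ub hf hg⟩
  have hS0 : (0:ℝ) ≤ sSup (Sset f g) := le_csSup hbddS (zero_mem_Sset f g)
  apply le_of_forall_pos_le_add
  intro ε hε
  obtain ⟨y, hy⟩ := memT_exists_eps hf x hε
  by_cases hxy : y = x
  · rw [hxy, dist_self] at hy
    have h0x := mmp_nonneg hf.1 x
    have h0g := mmp_nonneg hg.1 x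
    linarith
  · have hne : ({x} : Finset X) ≠ {y} := by
      simp only [ne_eq, Finset.singleton_inj]
      exact fun hh => hxy hh.symm
    have hmem : dist x y - (min (Phi f {x}) (Phi g {x}) + min (Phi f {y}) (Phi g {y}))
        ∈ Sset f g := by
      refine ⟨{{x}, {y}}, ?_⟩
      rw [Finset.sum_pair hne]
      have hsup : ({{x}, {y}} : Finset (Finset X)).sup id = ({x, y} : Finset X) := by
        rw [Finset.sup_insert, Finset.sup_singleton]
        rfl
      rw [hsup]
      congr 1
      rw [show ((({x, y} : Finset X)) : Set X) = ({x, y} : Set X) by simp]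
      rw [Metric.diam_pair]
    have hr := le_csSup hbddS hmem
    have h1 : min (Phi f {x}) (Phi g {x}) ≤ g x :=
      le_trans (min_le_right _ _) (le_of_eq (Phi_singleton (mmp_nonneg hg.1 x)))
    have h2 : min (Phi f {y}) (Phi g {y}) ≤ f y :=
      le_trans (min_le_left _ _) (le_of_eq (Phi_singleton (mmp_nonneg hf.1 y)))
    linarith

lemma deltaT_eq {f g : X → ℝ} (hf : MetricMemT f) (hg : MetricMemT g) :
    deltaT (diamDiv X) {Phi f, Phi g} = dT f g := by
  have hSub := Sset_ub hf hg
  have hbddS : BddAbove (Sset f g) := ⟨dT f g, hSub⟩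
  have hS0 : (0:ℝ) ≤ sSup (Sset f g) := le_csSup hbddS (zero_mem_Sset f g)
  have hset : deltaT (diamDiv X) {Phi f, Phi g} = sSup (Sset f g) := by
    unfold deltaT
    rw [if_neg (Finset.insert_ne_empty _ _)]
    congr 1
    have himg : ∀ A : Finset X,
        sInf ((fun u => u A) '' (({Phi f, Phi g} : Finset (Finset X → ℝ)) : Set (Finset X → ℝ)))
          = min (Phi f A) (Phi g A) := by
      intro A
      rw [Finset.coe_insert, Finset.coe_singleton, Set.image_pair, csInf_pair]
    ext r
    simp only [Sset, Set.mem_setOf_eq, himg, diamDiv]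
  rw [hset]
  apply le_antisymm
  · exact Real.sSup_le hSub (dT_nonneg f g)
  · apply Real.sSup_le _ hS0
    rintro r ⟨x, rfl⟩
    rw [abs_sub_le_iff]
    refine ⟨half_bound hf hg x, ?_⟩
    have := half_bound hg hf x
    rwa [Sset_comm g f] at this

end TSAux

/-- for a metric space `(X, d)` with diameter diversity `δ = diam_d`, the
induced metric of the diversity tight span `(T^δ_X, δ_T)` is isometric to the metric tight
span `(T^d_X, d_T)`: there is a bijection `Φ` from `T^d_X` onto `T^δ_X` with
`δ_T {Φ f, Φ g} = d_T(f, g)`. -/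
theorem metric_tightSpan_isometric_induced {X : Type*} [MetricSpace X] :
    ∃ Φ : (X → ℝ) → (Finset X → ℝ),
      (∀ f : X → ℝ, MetricMemT f → MemT (diamDiv X) (Φ f)) ∧
      (∀ f g : X → ℝ, MetricMemT f → MetricMemT g → Φ f = Φ g → f = g) ∧
      (∀ h : Finset X → ℝ, MemT (diamDiv X) h → ∃ f : X → ℝ, MetricMemT f ∧ Φ f = h) ∧
      (∀ f g : X → ℝ, MetricMemT f → MetricMemT g →
        deltaT (diamDiv X) {Φ f, Φ g} = dT f g) := by
  refine ⟨TSAux.Phi, fun f hf => TSAux.memT_Phi hf, ?_, ?_,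
    fun f g hf hg => TSAux.deltaT_eq hf hg⟩
  · intro f g hf hg hfg
    funext x
    have hx := congrFun hfg ({x} : Finset X)
    rwa [TSAux.Phi_singleton (TSAux.mmp_nonneg hf.1 x),
      TSAux.Phi_singleton (TSAux.mmp_nonneg hg.1 x)] at hx
  · intro h hh
    obtain ⟨hfT, hPhi⟩ := TSAux.memT_surj hh
    exact ⟨fun x => h {x}, hfT, hPhi⟩

end
end
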